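/- arXiv:1305.4071 — 7 statements merged into one kernel-verified Lean document; each statement's English description precedes it below -/
import Mathlib

section
/- Let (λ_{d,i})_{d≥1, i≥1} be a family of nonnegative reals such that for each d the sequence (λ_{d,i})_i is non-increasing in i, and define n(ε,d) = #{ i ≥ 1 : λ_{d,i} > ε² } ∈ ℕ ∪ {∞}. (a) If there exist constants C, p > 0 and q ≥ 0 such that n(ε,d) ≤ C·ε^{−p}·d^q for all d ≥ 1 and ε ∈ (0,1], then for every τ > p/2 one has sup_{d≥1} d^{−2q/p} ( Σ_{i = ⌈(1+C)d^q⌉}^{∞} λ_{d,i}^τ )^{1/τ} ≤ C^{2/p} · ζ(2τ/p)^{1/τ}, where ζ is the Riemann zeta function. (b) Conversely, suppose for some r ≥ 0, τ > 0 and constants C > 0, p, q ≥ 0, setting f(d) = ⌈ C·(min(√λ_{d,1}, 1))^{−p}·d^q ⌉, the quantity C_τ := sup_{d≥1} d^{−r} ( Σ_{i = f(d)}^{∞} λ_{d,i}^τ )^{1/τ} is finite. Then n(ε,d) ≤ (C + C_τ^τ)·ε^{−max(p,2τ)}·d^{max(q,rτ)} for every ε ∈ (0,1] and every d ≥ 1.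 -/
open scoped ENNReal

/-- `zeta' z = ∑_{n=1}^∞ n^{-z}`, the Riemann zeta function for real `z > 1`. -/
noncomputable def zeta' (z : ℝ) : ℝ := ∑' n : ℕ, ((n : ℝ) + 1) ^ (-z)

/-- **Paper Theorem 2.6** (characterization of (strong) polynomial tractability via the
absolute error criterion): `lam d i` are the non-increasingly ordered squared singular
values; the information complexity is `n(ε,d) = #{i ≥ 1 : lam d i > ε²}`.
(a) Polynomial tractability with constants `C, p, q` implies, for every `τ > p/2`,
`(∑_{i ≥ ⌈(1+C) d^q⌉} (lam d i)^τ)^{1/τ} ≤ C^{2/p} ζ(2τ/p)^{1/τ} · d^{2q/p}`.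
(b) Conversely, a bound `(∑_{i ≥ f(d)} (lam d i)^τ)^{1/τ} ≤ Cτ · d^r` with
`f(d) = ⌈C (min (√(lam d 1)) 1)^{-p} d^q⌉` yields
`n(ε,d) ≤ (C + Cτ^τ) ε^{-max(p,2τ)} d^{max(q,rτ)}`. -/
theorem stmt4 (lam : ℕ → ℕ → ℝ)
    (hnn : ∀ d i, 0 ≤ lam d i)
    (hmono : ∀ d, 1 ≤ d → ∀ i j : ℕ, 1 ≤ i → i ≤ j → lam d j ≤ lam d i) :
    (∀ C p q : ℝ, 0 < C → 0 < p → 0 ≤ q →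
      (∀ d : ℕ, 1 ≤ d → ∀ ε : ℝ, 0 < ε → ε ≤ 1 →
        ({i : ℕ | 1 ≤ i ∧ ε ^ 2 < lam d i}.encard : ℝ≥0∞) ≤
          ENNReal.ofReal (C * ε ^ (-p) * (d : ℝ) ^ q)) →
      ∀ τ : ℝ, p / 2 < τ → ∀ d : ℕ, 1 ≤ d →
        (∑' i : {i : ℕ // ⌈(1 + C) * (d : ℝ) ^ q⌉₊ ≤ i},
            ENNReal.ofReal (lam d i) ^ τ) ^ (1 / τ) ≤
          ENNReal.ofReal (C ^ (2 / p) * zeta' (2 * τ / p) ^ (1 / τ) * (d : ℝ) ^ (2 * q / p)))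
    ∧
    (∀ r τ C p q Cτ : ℝ, 0 ≤ r → 0 < τ → 0 < C → 0 ≤ p → 0 ≤ q → 0 ≤ Cτ →
      (∀ d : ℕ, 1 ≤ d →
        (∑' i : {i : ℕ //
            ⌈C * (min (Real.sqrt (lam d 1)) 1) ^ (-p) * (d : ℝ) ^ q⌉₊ ≤ i},
            ENNReal.ofReal (lam d i) ^ τ) ^ (1 / τ) ≤
          ENNReal.ofReal (Cτ * (d : ℝ) ^ r)) →
      ∀ d : ℕ, 1 ≤ d → ∀ ε : ℝ, 0 < ε → ε ≤ 1 →
        ({i : ℕ | 1 ≤ i ∧ ε ^ 2 < lam d i}.encard : ℝ≥0∞) ≤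
          ENNReal.ofReal ((C + Cτ ^ τ) * ε ^ (-max p (2 * τ)) * (d : ℝ) ^ max q (r * τ))) := by
  constructor
  · -- part (a)
    intro C p q hC hp hq hbd τ hτ d hd
    have hτ0 : 0 < τ := lt_of_le_of_lt (by positivity) hτ
    have hd1 : (1:ℝ) ≤ (d:ℝ) := by exact_mod_cast hd
    have hdq1 : (1:ℝ) ≤ (d:ℝ) ^ q := Real.one_le_rpow hd1 hq
    have hdq0 : (0:ℝ) < (d:ℝ) ^ q := by linarith
    set s : ℝ := 2 * τ / p with hs
    have hs1 : 1 < s := by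
      rw [hs, lt_div_iff₀ hp]; linarith
    set m : ℕ := ⌈(1 + C) * (d : ℝ) ^ q⌉₊ with hm
    have hm1 : 1 ≤ m := by
      have : (0:ℝ) < (1 + C) * (d : ℝ) ^ q := by positivity
      exact Nat.ceil_pos.mpr this
    -- key pointwise bound
    have key : ∀ i : ℕ, m ≤ i → lam d i ≤ (C * (d:ℝ)^q / i) ^ (2/p) := by
      intro i hi
      have hCi : C * (d:ℝ)^q + 1 ≤ (i:ℝ) := by
        have h1 : (1 + C) * (d : ℝ) ^ q ≤ (m : ℝ) := Nat.le_ceil _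
        have h2 : (m:ℝ) ≤ i := by exact_mod_cast hi
        nlinarith
      have hi0 : (0:ℝ) < i := by nlinarith [mul_pos hC hdq0]
      set x : ℝ := C * (d:ℝ)^q / i with hx
      have hx0 : 0 < x := by positivity
      have hx1 : x < 1 := by rw [hx, div_lt_one hi0]; nlinarith
      by_contra hcon
      push_neg at hcon
      set t : ℝ := x ^ (1/p) with ht
      have ht0 : 0 < t := Real.rpow_pos_of_pos hx0 _
      have ht1 : t < 1 := Real.rpow_lt_one hx0.le hx1 (by positivity)
      have ht2 : t ^ 2 = x ^ (2/p) := by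
        rw [ht, ← Real.rpow_natCast (x ^ (1/p)) 2, ← Real.rpow_mul hx0.le]
        congr 1
        push_cast
        ring
      have htl : t < Real.sqrt (lam d i) := by
        rw [Real.lt_sqrt ht0.le, ht2]; exact hcon
      set L := Real.sqrt (lam d i) with hLdef
      set ε : ℝ := min 1 ((t + L)/2) with hε
      have hεt : t < ε := lt_min ht1 (by linarith)
      have hε0 : 0 < ε := ht0.trans hεt
      have hε1 : ε ≤ 1 := min_le_left _ _
      have hεL : ε < L := lt_of_le_of_lt (min_le_right _ _) (by linarith)
      have hε2 : ε ^ 2 < lam d i := (Real.lt_sqrt hε0.le).mp hεL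
      have hsub : Set.Icc 1 i ⊆ {j : ℕ | 1 ≤ j ∧ ε ^ 2 < lam d j} := by
        intro j hj
        exact ⟨hj.1, lt_of_lt_of_le hε2 (hmono d hd j i hj.1 hj.2)⟩
      have hIcc : (Set.Icc (1:ℕ) i).encard = (i : ℕ∞) := by
        rw [← Finset.coe_Icc, Set.encard_coe_eq_coe_finsetCard, Nat.card_Icc]
        simp
      have hcard : ((i:ℕ) : ℝ≥0∞) ≤ ({j : ℕ | 1 ≤ j ∧ ε ^ 2 < lam d j}.encard : ℝ≥0∞) := by
        have h := Set.encard_mono hsub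
        rw [hIcc] at h
        exact_mod_cast ENat.toENNReal_le.mpr h
      have hB := (hcard.trans (hbd d hd ε hε0 hε1))
      have hiR : (i:ℝ) ≤ C * ε ^ (-p) * (d:ℝ)^q := by
        rw [← ENNReal.ofReal_natCast, ENNReal.ofReal_le_ofReal_iff (by positivity)] at hB
        exact hB
      have htp : t ^ (-p) = (i:ℝ) / (C * (d:ℝ)^q) := by
        rw [ht, ← Real.rpow_mul hx0.le]
        have hpp : 1/p * (-p) = -1 := by field_simp
        rw [hpp, Real.rpow_neg_one, hx, inv_div]
      have hlt : ε ^ (-p) < t ^ (-p) :=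
        Real.rpow_lt_rpow_of_neg ht0 hεt (neg_lt_zero.mpr hp)
      have heq : C * t^(-p) * (d:ℝ)^q = (i:ℝ) := by
        rw [htp]; field_simp
      have : C * ε^(-p) * (d:ℝ)^q < (i:ℝ) := by
        rw [← heq]
        have h1 : C * ε^(-p) < C * t^(-p) := by
          exact mul_lt_mul_of_pos_left hlt hC
        exact mul_lt_mul_of_pos_right h1 hdq0
      linarith
    -- zeta facts
    have hzs : 0 ≤ zeta' s :=
      tsum_nonneg (fun n => Real.rpow_nonneg (by positivity) _)
    have hsummable : Summable (fun n : ℕ => ((n:ℝ)+1) ^ (-s)) := by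
      have h := (Real.summable_nat_rpow_inv (p := s)).mpr hs1
      have h2 := (summable_nat_add_iff 1).mpr h
      refine h2.congr (fun n => ?_)
      rw [Real.rpow_neg (by positivity)]
      push_cast
      ring_nf
    have hzeta : ∑' n : ℕ, ENNReal.ofReal (((n:ℝ)+1) ^ (-s)) = ENNReal.ofReal (zeta' s) :=
      (ENNReal.ofReal_tsum_of_nonneg
        (fun n => Real.rpow_nonneg (by positivity) _) hsummable).symm
    -- termwise bound
    have hterm : ∀ i : {i : ℕ // m ≤ i},
        ENNReal.ofReal (lam d i) ^ τ ≤
          ENNReal.ofReal ((C * (d:ℝ)^q) ^ s) * ENNReal.ofReal (((i:ℕ):ℝ) ^ (-s)) := by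
      rintro ⟨i, hi⟩
      have hi1 : 1 ≤ i := le_trans hm1 hi
      have hi0 : (0:ℝ) < i := by exact_mod_cast hi1
      have h2 : ((C * (d:ℝ)^q / i) ^ (2/p)) ^ τ = (C*(d:ℝ)^q)^s * ((i:ℕ):ℝ)^(-s) := by
        rw [← Real.rpow_mul (by positivity)]
        have hst : 2/p*τ = s := by rw [hs]; ring
        rw [hst, Real.div_rpow (by positivity) hi0.le, Real.rpow_neg hi0.le, div_eq_mul_inv]
      show ENNReal.ofReal (lam d i) ^ τ ≤ _
      calc ENNReal.ofReal (lam d i) ^ τ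
          ≤ ENNReal.ofReal ((C * (d:ℝ)^q / i) ^ (2/p)) ^ τ :=
            ENNReal.rpow_le_rpow (ENNReal.ofReal_le_ofReal (key i hi)) hτ0.le
        _ = ENNReal.ofReal (((C * (d:ℝ)^q / i) ^ (2/p)) ^ τ) :=
            ENNReal.ofReal_rpow_of_nonneg (by positivity) hτ0.le
        _ = ENNReal.ofReal ((C*(d:ℝ)^q)^s * ((i:ℕ):ℝ)^(-s)) := by rw [h2]
        _ = ENNReal.ofReal ((C*(d:ℝ)^q)^s) * ENNReal.ofReal (((i:ℕ):ℝ)^(-s)) :=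
            ENNReal.ofReal_mul (by positivity)
    have hinj : Function.Injective (fun i : {i : ℕ // m ≤ i} => i.1 - 1) := by
      rintro ⟨a, ha⟩ ⟨b, hb⟩ h
      simp only [Subtype.mk.injEq] at h ⊢
      omega
    have htail : (∑' i : {i : ℕ // m ≤ i}, ENNReal.ofReal (((i:ℕ):ℝ) ^ (-s))) ≤
        ENNReal.ofReal (zeta' s) := by
      rw [← hzeta]
      have h := ENNReal.tsum_comp_le_tsum_of_injective hinj
        (fun n => ENNReal.ofReal (((n:ℝ)+1) ^ (-s)))
      refine le_trans (le_of_eq ?_) h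
      apply tsum_congr
      rintro ⟨i, hi⟩
      have hi1 : 1 ≤ i := le_trans hm1 hi
      have : ((i - 1 : ℕ) : ℝ) + 1 = (i:ℝ) := by
        have : i - 1 + 1 = i := by omega
        exact_mod_cast congrArg (Nat.cast : ℕ → ℝ) this
      simp only []
      rw [this]
    calc (∑' i : {i : ℕ // m ≤ i}, ENNReal.ofReal (lam d i) ^ τ) ^ (1/τ)
        ≤ (∑' i : {i : ℕ // m ≤ i},
            ENNReal.ofReal ((C*(d:ℝ)^q)^s) * ENNReal.ofReal (((i:ℕ):ℝ) ^ (-s))) ^ (1/τ) :=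
          ENNReal.rpow_le_rpow (ENNReal.tsum_le_tsum hterm) (by positivity)
      _ = (ENNReal.ofReal ((C*(d:ℝ)^q)^s) *
            ∑' i : {i : ℕ // m ≤ i}, ENNReal.ofReal (((i:ℕ):ℝ) ^ (-s))) ^ (1/τ) := by
          rw [ENNReal.tsum_mul_left]
      _ ≤ (ENNReal.ofReal ((C*(d:ℝ)^q)^s) * ENNReal.ofReal (zeta' s)) ^ (1/τ) :=
          ENNReal.rpow_le_rpow (mul_le_mul_right htail _) (by positivity)
      _ = ENNReal.ofReal (C ^ (2 / p) * zeta' s ^ (1 / τ) * (d : ℝ) ^ (2 * q / p)) := by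
          rw [← ENNReal.ofReal_mul (by positivity),
            ENNReal.ofReal_rpow_of_nonneg (by positivity) (by positivity)]
          congr 1
          rw [Real.mul_rpow (by positivity) hzs, ← Real.rpow_mul (by positivity)]
          have hst : s * (1/τ) = 2/p := by
            rw [hs]; field_simp
          rw [hst, Real.mul_rpow hC.le hdq0.le, ← Real.rpow_mul (by positivity)]
          have hq2 : q * (2/p) = 2*q/p := by ring
          rw [hq2]; ring
  · -- part (b)
    intro r τ C p q Cτ hr hτ hC hp hq hCτ hbd d hd ε hε0 hε1
    have hd1 : (1:ℝ) ≤ (d:ℝ) := by exact_mod_cast hd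
    by_cases hL : lam d 1 ≤ ε ^ 2
    · have hempty : {i : ℕ | 1 ≤ i ∧ ε ^ 2 < lam d i} = ∅ := by
        ext i
        simp only [Set.mem_setOf_eq, Set.mem_empty_iff_false, iff_false, not_and, not_lt]
        intro hi
        exact le_trans (hmono d hd 1 i le_rfl hi) hL
      rw [hempty]
      simp
    · push_neg at hL
      set m : ℝ := min (Real.sqrt (lam d 1)) 1 with hmdef
      have hεm : ε ≤ m := le_min (le_of_lt ((Real.lt_sqrt hε0.le).mpr hL)) hε1
      have hm0 : 0 < m := hε0.trans_le hεm
      set x : ℝ := C * m ^ (-p) * (d:ℝ)^q with hxdef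
      have hx0 : 0 < x := by positivity
      set F : ℕ := ⌈x⌉₊ with hFdef
      have hF1 : 1 ≤ F := Nat.ceil_pos.mpr hx0
      set T : Set ℕ := {i : ℕ | F ≤ i ∧ ε ^ 2 < lam d i} with hTdef
      set M : ℝ := max p (2*τ) with hMdef
      set Q : ℝ := max q (r*τ) with hQdef
      -- raise hypothesis to power τ
      have hsum : (∑' i : {i : ℕ // F ≤ i}, ENNReal.ofReal (lam d i) ^ τ) ≤
          ENNReal.ofReal (Cτ ^ τ * (d:ℝ)^(r*τ)) := by
        have h := ENNReal.rpow_le_rpow (hbd d hd) hτ.le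
        rw [← ENNReal.rpow_mul, one_div, inv_mul_cancel₀ hτ.ne', ENNReal.rpow_one] at h
        refine h.trans (le_of_eq ?_)
        rw [ENNReal.ofReal_rpow_of_nonneg (by positivity) hτ.le]
        congr 1
        rw [Real.mul_rpow hCτ (by positivity), ← Real.rpow_mul (by positivity)]
      have hTsum : (T.encard : ℝ≥0∞) * ENNReal.ofReal ((ε^2) ^ τ) ≤
          ENNReal.ofReal (Cτ ^ τ * (d:ℝ)^(r*τ)) := by
        calc (T.encard : ℝ≥0∞) * ENNReal.ofReal ((ε^2)^τ)
            = ∑' _ : T, ENNReal.ofReal ((ε^2)^τ) := (ENNReal.tsum_set_const (s := T) _).symm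
          _ ≤ ∑' i : T, ENNReal.ofReal (lam d i) ^ τ := by
              apply ENNReal.tsum_le_tsum
              rintro ⟨i, hi⟩
              rw [ENNReal.ofReal_rpow_of_nonneg (hnn d i) hτ.le]
              exact ENNReal.ofReal_le_ofReal
                (Real.rpow_le_rpow (sq_nonneg ε) hi.2.le hτ.le)
          _ ≤ ∑' i : {i : ℕ // F ≤ i}, ENNReal.ofReal (lam d i) ^ τ :=
              ENNReal.tsum_mono_subtype (fun i => ENNReal.ofReal (lam d i) ^ τ)
                (s := T) (t := {i : ℕ | F ≤ i}) (fun i hi => hi.1)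
          _ ≤ _ := hsum
      have hT2 : (T.encard : ℝ≥0∞) ≤
          ENNReal.ofReal (Cτ^τ * (d:ℝ)^(r*τ) / (ε^2)^τ) := by
        rw [ENNReal.ofReal_div_of_pos (by positivity),
          ENNReal.le_div_iff_mul_le
            (Or.inl (by simp only [ne_eq, ENNReal.ofReal_eq_zero, not_le]; positivity))
            (Or.inl ENNReal.ofReal_ne_top)]
        exact hTsum
      have hsub : {i : ℕ | 1 ≤ i ∧ ε ^ 2 < lam d i} ⊆ ↑(Finset.Icc 1 (F-1)) ∪ T := by
        intro i hi
        rcases le_or_gt F i with h | h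
        · exact Or.inr ⟨h, hi.2⟩
        · left
          simp only [Finset.coe_Icc, Set.mem_Icc]
          exact ⟨hi.1, by omega⟩
      -- real-number final inequality
      have hF_le : ((F-1:ℕ):ℝ) ≤ C * ε^(-p) * (d:ℝ)^q := by
        have h1 : (F:ℝ) < x + 1 := Nat.ceil_lt_add_one hx0.le
        have h2 : ((F-1:ℕ):ℝ) = (F:ℝ) - 1 := by
          rw [Nat.cast_sub hF1]; norm_num
        have h3 : m^(-p) ≤ ε^(-p) :=
          Real.rpow_le_rpow_of_nonpos hε0 hεm (neg_nonpos.mpr hp)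
        have h4 : x ≤ C * ε^(-p) * (d:ℝ)^q := by
          rw [hxdef]
          have := mul_le_mul_of_nonneg_left h3 hC.le
          exact mul_le_mul_of_nonneg_right this (by positivity)
        linarith
      have hεM1 : ε^(-p) ≤ ε^(-M) :=
        Real.rpow_le_rpow_of_exponent_ge hε0 hε1 (neg_le_neg (le_max_left p (2*τ)))
      have hεM2 : ε^(-(2*τ)) ≤ ε^(-M) :=
        Real.rpow_le_rpow_of_exponent_ge hε0 hε1 (neg_le_neg (le_max_right p (2*τ)))
      have hdQ1 : (d:ℝ)^q ≤ (d:ℝ)^Q :=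
        Real.rpow_le_rpow_of_exponent_le hd1 (le_max_left q (r*τ))
      have hdQ2 : (d:ℝ)^(r*τ) ≤ (d:ℝ)^Q :=
        Real.rpow_le_rpow_of_exponent_le hd1 (le_max_right q (r*τ))
      have hεpos : (0:ℝ) < ε^(-p) := Real.rpow_pos_of_pos hε0 _
      have hεMpos : (0:ℝ) < ε^(-M) := Real.rpow_pos_of_pos hε0 _
      have hreal : ((F-1:ℕ):ℝ) + Cτ^τ * (d:ℝ)^(r*τ)/(ε^2)^τ ≤
          (C + Cτ^τ) * ε ^ (-M) * (d:ℝ) ^ Q := by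
        have hinv : ((ε^2)^τ)⁻¹ = ε^(-(2*τ)) := by
          rw [← Real.rpow_two, ← Real.rpow_mul hε0.le, ← Real.rpow_neg hε0.le]
        have h5 : Cτ^τ * (d:ℝ)^(r*τ)/(ε^2)^τ ≤ Cτ^τ * ε^(-M) * (d:ℝ)^Q := by
          rw [div_eq_mul_inv, hinv]
          have hCτnn : (0:ℝ) ≤ Cτ^τ := Real.rpow_nonneg hCτ _
          calc Cτ^τ * (d:ℝ)^(r*τ) * ε^(-(2*τ))
              ≤ Cτ^τ * (d:ℝ)^Q * ε^(-M) := by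
                apply mul_le_mul
                · exact mul_le_mul_of_nonneg_left hdQ2 hCτnn
                · exact hεM2
                · positivity
                · positivity
            _ = Cτ^τ * ε^(-M) * (d:ℝ)^Q := by ring
        have h6 : ((F-1:ℕ):ℝ) ≤ C * ε^(-M) * (d:ℝ)^Q := by
          refine hF_le.trans ?_
          calc C * ε^(-p) * (d:ℝ)^q ≤ C * ε^(-M) * (d:ℝ)^q := by
                exact mul_le_mul_of_nonneg_right
                  (mul_le_mul_of_nonneg_left hεM1 hC.le) (by positivity)
            _ ≤ C * ε^(-M) * (d:ℝ)^Q := by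
                exact mul_le_mul_of_nonneg_left hdQ1 (by positivity)
        nlinarith [h5, h6]
      calc ({i : ℕ | 1 ≤ i ∧ ε ^ 2 < lam d i}.encard : ℝ≥0∞)
          ≤ (((↑(Finset.Icc 1 (F-1)) ∪ T : Set ℕ)).encard : ℝ≥0∞) :=
            ENat.toENNReal_le.mpr (Set.encard_mono hsub)
        _ ≤ ((F-1 : ℕ) : ℝ≥0∞) + (T.encard : ℝ≥0∞) := by
            have h := Set.encard_union_le (↑(Finset.Icc 1 (F-1)) : Set ℕ) T
            have hc : ((Finset.Icc 1 (F-1) : Finset ℕ) : Set ℕ).encard = ((F-1 : ℕ) : ℕ∞) := by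
              rw [Set.encard_coe_eq_coe_finsetCard, Nat.card_Icc]
              simp
            calc (((↑(Finset.Icc 1 (F-1)) ∪ T : Set ℕ)).encard : ℝ≥0∞)
                ≤ (((↑(Finset.Icc 1 (F-1)) : Set ℕ).encard + T.encard : ℕ∞) : ℝ≥0∞) :=
                  ENat.toENNReal_le.mpr h
              _ = ((F-1 : ℕ) : ℝ≥0∞) + (T.encard : ℝ≥0∞) := by
                  rw [ENat.toENNReal_add, hc]
                  norm_cast
        _ ≤ ENNReal.ofReal ((F-1:ℕ):ℝ) +
              ENNReal.ofReal (Cτ^τ * (d:ℝ)^(r*τ)/(ε^2)^τ) := by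
            exact add_le_add (le_of_eq (ENNReal.ofReal_natCast _).symm) hT2
        _ = ENNReal.ofReal (((F-1:ℕ):ℝ) + Cτ^τ * (d:ℝ)^(r*τ)/(ε^2)^τ) :=
            (ENNReal.ofReal_add (by positivity) (by positivity)).symm
        _ ≤ ENNReal.ofReal ((C + Cτ ^ τ) * ε ^ (-M) * (d : ℝ) ^ Q) :=
            ENNReal.ofReal_le_ofReal hreal
end

section
/- Let (λ_{d,i})_{d≥1, i≥1} be a family of nonnegative reals, non-increasing in i for each d, with λ_{d,1} > 0, and define n_norm(ε,d) = #{ i ≥ 1 : λ_{d,i}/λ_{d,1} > ε² } ∈ ℕ ∪ {∞}. (a) If there exist constants C, p > 0 and q ≥ 0 such that n_norm(ε,d) ≤ C·ε^{−p}·d^q for all d ≥ 1 and ε ∈ (0,1], then for every τ > p/2 one has sup_{d≥1} d^{−2q/p} ( Σ_{i=1}^{∞} (λ_{d,i}/λ_{d,1})^τ )^{1/τ} ≤ 2^{1/τ}·(1+C)^{2/p}·ζ(2τ/p)^{1/τ}. (b) Conversely, suppose for some r ≥ 0, τ > 0 and constants C > 0, q ≥ 0, setting f(d) = ⌈C·d^q⌉,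 the quantity C_τ := sup_{d≥1} d^{−r} ( Σ_{i = f(d)}^{∞} (λ_{d,i}/λ_{d,1})^τ )^{1/τ} is finite. Then n_norm(ε,d) ≤ (C + C_τ^τ)·ε^{−2τ}·d^{max(q,rτ)} for every ε ∈ (0,1] and d ≥ 1. -/
open scoped ENNReal

def eNat : ℕ ≃ {i : ℕ // 1 ≤ i} where
  toFun n := ⟨n + 1, Nat.succ_le_succ (Nat.zero_le n)⟩
  invFun i := i.1 - 1
  left_inv n := by simp
  right_inv i := by cases' i with i hi; simp; omega

lemma zeta'_nonneg (z : ℝ) : 0 ≤ zeta' z :=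
  tsum_nonneg fun n => Real.rpow_nonneg (by positivity) _

lemma sum_rpow_le (N s : ℝ) (hN : 0 < N) (hs : 1 < s) :
    (∑' i : {i : ℕ // 1 ≤ i}, ENNReal.ofReal (N ^ s * (i : ℝ) ^ (-s))) =
      ENNReal.ofReal (N ^ s * zeta' s) := by
  have hsm : Summable (fun n : ℕ => ((n : ℝ) + 1) ^ (-s)) := by
    have h0 : Summable (fun n : ℕ => (n : ℝ) ^ (-s)) :=
      Real.summable_nat_rpow.2 (by linarith)
    have := (summable_nat_add_iff 1).2 h0
    convert this using 2 with n
    all_goals push_cast; rfl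
  rw [← Equiv.tsum_eq eNat]
  have : ∀ n : ℕ, ENNReal.ofReal (N ^ s * ((eNat n : ℕ) : ℝ) ^ (-s)) =
      ENNReal.ofReal (N ^ s) * ENNReal.ofReal (((n : ℝ) + 1) ^ (-s)) := by
    intro n
    rw [show ((eNat n : ℕ) : ℝ) = (n : ℝ) + 1 by simp [eNat],
      ENNReal.ofReal_mul (by positivity)]
  simp only [this]
  rw [ENNReal.tsum_mul_left, ← ENNReal.ofReal_tsum_of_nonneg
    (fun n => Real.rpow_nonneg (by positivity) _) hsm,
    ← ENNReal.ofReal_mul (by positivity)]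
  rfl


lemma keyA (lam : ℕ → ℕ → ℝ)
    (hnn : ∀ d i, 0 ≤ lam d i)
    (hmono : ∀ d, 1 ≤ d → ∀ i j : ℕ, 1 ≤ i → i ≤ j → lam d j ≤ lam d i)
    (htop : ∀ d : ℕ, 1 ≤ d → 0 < lam d 1)
    (C p q : ℝ) (hC : 0 < C) (hp : 0 < p) (hq : 0 ≤ q)
    (hyp : ∀ d : ℕ, 1 ≤ d → ∀ ε : ℝ, 0 < ε → ε ≤ 1 →
        ({i : ℕ | 1 ≤ i ∧ ε ^ 2 < lam d i / lam d 1}.encard : ℝ≥0∞) ≤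
          ENNReal.ofReal (C * ε ^ (-p) * (d : ℝ) ^ q))
    (d : ℕ) (hd : 1 ≤ d) (i : ℕ) (hi : 1 ≤ i) :
    lam d i / lam d 1 ≤ ((1 + C) * (d : ℝ) ^ q / i) ^ (2 / p) := by
  have hd1 : (1:ℝ) ≤ d := by exact_mod_cast hd
  have hd0 : (0:ℝ) < d := lt_of_lt_of_le one_pos hd1
  have hi0 : (0:ℝ) < i := by exact_mod_cast hi
  set N : ℝ := (1 + C) * (d:ℝ) ^ q with hN
  have hN0 : 0 < N := by positivity
  have hfrac0 : 0 < N / i := div_pos hN0 hi0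
  have hle1 : lam d i / lam d 1 ≤ 1 :=
    div_le_one_of_le₀ (hmono d hd 1 i le_rfl hi) (le_of_lt (htop d hd))
  rcases le_or_gt 1 (N / i) with h1 | h1
  · exact hle1.trans (Real.one_le_rpow h1 (by positivity))
  · set ε : ℝ := (N / i) ^ (1 / p) with hε
    have hε0 : 0 < ε := Real.rpow_pos_of_pos hfrac0 _
    have hε1 : ε ≤ 1 := Real.rpow_le_one hfrac0.le h1.le (by positivity)
    have hε2 : ε ^ 2 = (N / i) ^ (2 / p) := by
      rw [hε, ← Real.rpow_natCast ((N/i) ^ (1/p)) 2, ← Real.rpow_mul hfrac0.le]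
      norm_num
      congr 1; ring
    by_contra hcon
    push_neg at hcon
    have hsub : (↑(Finset.Icc 1 i) : Set ℕ) ⊆
        {j : ℕ | 1 ≤ j ∧ ε ^ 2 < lam d j / lam d 1} := by
      intro j hj
      simp only [Finset.coe_Icc, Set.mem_Icc] at hj
      refine ⟨hj.1, lt_of_lt_of_le (hε2 ▸ hcon) ?_⟩
      exact div_le_div_of_nonneg_right (hmono d hd j i hj.1 hj.2) (htop d hd).le
    have hcard : (i : ℝ≥0∞) ≤ ({j : ℕ | 1 ≤ j ∧ ε ^ 2 < lam d j / lam d 1}.encard : ℝ≥0∞) := by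
      have h1 := Set.encard_mono hsub
      rw [Set.encard_coe_eq_coe_finsetCard, Nat.card_Icc] at h1
      simp only [Nat.add_sub_cancel] at h1
      simpa using ENat.toENNReal_le.2 h1
    have hub := hyp d hd ε hε0 hε1
    have hεp : ε ^ (-p) = (i : ℝ) / N := by
      rw [hε, ← Real.rpow_mul hfrac0.le]
      rw [show 1 / p * (-p) = -1 by field_simp]
      rw [Real.rpow_neg_one, inv_div]
    have hval : C * ε ^ (-p) * (d:ℝ) ^ q = (C / (1 + C)) * i := by
      rw [hεp, hN]; field_simp
    have hlt : C * ε ^ (-p) * (d:ℝ) ^ q < i := by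
      rw [hval]
      have : C / (1 + C) < 1 := by
        rw [div_lt_one (by linarith)]; linarith
      nlinarith
    have : (i : ℝ≥0∞) < (i : ℝ≥0∞) := by
      calc (i : ℝ≥0∞) ≤ _ := hcard
        _ ≤ ENNReal.ofReal (C * ε ^ (-p) * (d:ℝ) ^ q) := hub
        _ < ENNReal.ofReal i := (ENNReal.ofReal_lt_ofReal_iff hi0).2 hlt
        _ = (i : ℝ≥0∞) := ENNReal.ofReal_natCast i
    exact absurd this (lt_irrefl _)


/-- **Paper Theorem 2.7** (characterization of (strong) polynomial tractability via the
normalized error criterion): `lam d i` are the non-increasingly ordered squared singular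
values with `lam d 1 > 0`; the information complexity is
`n_norm(ε,d) = #{i ≥ 1 : lam d i / lam d 1 > ε²}`.
(a) Polynomial tractability with constants `C, p, q` implies, for every `τ > p/2`,
`(∑_{i ≥ 1} (lam d i / lam d 1)^τ)^{1/τ} ≤ 2^{1/τ} (1+C)^{2/p} ζ(2τ/p)^{1/τ} d^{2q/p}`.
(b) Conversely, a bound `(∑_{i ≥ ⌈C d^q⌉} (lam d i / lam d 1)^τ)^{1/τ} ≤ Cτ d^r` yields
`n_norm(ε,d) ≤ (C + Cτ^τ) ε^{-2τ} d^{max(q,rτ)}`. -/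
theorem stmt5 (lam : ℕ → ℕ → ℝ)
    (hnn : ∀ d i, 0 ≤ lam d i)
    (hmono : ∀ d, 1 ≤ d → ∀ i j : ℕ, 1 ≤ i → i ≤ j → lam d j ≤ lam d i)
    (htop : ∀ d : ℕ, 1 ≤ d → 0 < lam d 1) :
    (∀ C p q : ℝ, 0 < C → 0 < p → 0 ≤ q →
      (∀ d : ℕ, 1 ≤ d → ∀ ε : ℝ, 0 < ε → ε ≤ 1 →
        ({i : ℕ | 1 ≤ i ∧ ε ^ 2 < lam d i / lam d 1}.encard : ℝ≥0∞) ≤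
          ENNReal.ofReal (C * ε ^ (-p) * (d : ℝ) ^ q)) →
      ∀ τ : ℝ, p / 2 < τ → ∀ d : ℕ, 1 ≤ d →
        (∑' i : {i : ℕ // 1 ≤ i},
            ENNReal.ofReal (lam d i / lam d 1) ^ τ) ^ (1 / τ) ≤
          ENNReal.ofReal ((2 : ℝ) ^ (1 / τ) * (1 + C) ^ (2 / p) *
            zeta' (2 * τ / p) ^ (1 / τ) * (d : ℝ) ^ (2 * q / p)))
    ∧
    (∀ r τ C q Cτ : ℝ, 0 ≤ r → 0 < τ → 0 < C → 0 ≤ q → 0 ≤ Cτ →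
      (∀ d : ℕ, 1 ≤ d →
        (∑' i : {i : ℕ // ⌈C * (d : ℝ) ^ q⌉₊ ≤ i},
            ENNReal.ofReal (lam d i / lam d 1) ^ τ) ^ (1 / τ) ≤
          ENNReal.ofReal (Cτ * (d : ℝ) ^ r)) →
      ∀ d : ℕ, 1 ≤ d → ∀ ε : ℝ, 0 < ε → ε ≤ 1 →
        ({i : ℕ | 1 ≤ i ∧ ε ^ 2 < lam d i / lam d 1}.encard : ℝ≥0∞) ≤
          ENNReal.ofReal ((C + Cτ ^ τ) * ε ^ (-(2 * τ)) * (d : ℝ) ^ max q (r * τ))) := by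
  constructor
  · intro C p q hC hp hq hyp τ hτ d hd
    have hd1 : (1:ℝ) ≤ d := by exact_mod_cast hd
    have hd0 : (0:ℝ) < d := lt_of_lt_of_le one_pos hd1
    have hτ0 : 0 < τ := lt_of_le_of_lt (by positivity) hτ
    set s : ℝ := 2 * τ / p with hsdef
    have hs : 1 < s := by
      rw [hsdef, lt_div_iff₀ hp]; linarith
    set N : ℝ := (1 + C) * (d:ℝ) ^ q with hNdef
    have hN0 : 0 < N := by positivity
    have hterm : ∀ i : {i : ℕ // 1 ≤ i},
        ENNReal.ofReal (lam d i / lam d 1) ^ τ ≤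
          ENNReal.ofReal (N ^ s * ((i : ℕ) : ℝ) ^ (-s)) := by
      rintro ⟨i, hi⟩
      have hi0 : (0:ℝ) < i := by exact_mod_cast hi
      have hk := keyA lam hnn hmono htop C p q hC hp hq hyp d hd i hi
      calc ENNReal.ofReal (lam d i / lam d 1) ^ τ
          ≤ ENNReal.ofReal ((N / i) ^ (2 / p)) ^ τ :=
            ENNReal.rpow_le_rpow (ENNReal.ofReal_le_ofReal hk) hτ0.le
        _ = ENNReal.ofReal (((N / i) ^ (2 / p)) ^ τ) :=
            ENNReal.ofReal_rpow_of_nonneg (Real.rpow_nonneg (by positivity) _) hτ0.le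
        _ = ENNReal.ofReal (N ^ s * ((i:ℕ) : ℝ) ^ (-s)) := by
            congr 1
            rw [← Real.rpow_mul (by positivity), show 2 / p * τ = s by rw [hsdef]; ring,
              Real.div_rpow hN0.le hi0.le, Real.rpow_neg hi0.le, div_eq_mul_inv]
    have hsum : (∑' i : {i : ℕ // 1 ≤ i}, ENNReal.ofReal (lam d i / lam d 1) ^ τ) ≤
        ENNReal.ofReal (N ^ s * zeta' s) := by
      rw [← sum_rpow_le N s hN0 hs]
      exact ENNReal.tsum_le_tsum hterm
    calc (∑' i : {i : ℕ // 1 ≤ i}, ENNReal.ofReal (lam d i / lam d 1) ^ τ) ^ (1 / τ)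
        ≤ ENNReal.ofReal (N ^ s * zeta' s) ^ (1 / τ) :=
          ENNReal.rpow_le_rpow hsum (by positivity)
      _ = ENNReal.ofReal ((N ^ s * zeta' s) ^ (1 / τ)) :=
          ENNReal.ofReal_rpow_of_nonneg (mul_nonneg (Real.rpow_nonneg hN0.le _) (zeta'_nonneg s)) (by positivity)
      _ ≤ _ := by
          apply ENNReal.ofReal_le_ofReal
          have hz := zeta'_nonneg s
          rw [Real.mul_rpow (by positivity) hz,
            ← Real.rpow_mul hN0.le, show s * (1 / τ) = 2 / p by rw [hsdef]; field_simp,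
            hNdef, Real.mul_rpow (by linarith) (by positivity),
            ← Real.rpow_mul hd0.le, show q * (2 / p) = 2 * q / p by ring]
          have h2 : (1:ℝ) ≤ (2:ℝ) ^ (1 / τ) := Real.one_le_rpow (by norm_num) (by positivity)
          have hrest : (0:ℝ) ≤ (1 + C) ^ (2 / p) * (d:ℝ) ^ (2 * q / p) * zeta' s ^ (1 / τ) := by
            positivity
          nlinarith [hrest, h2]
  · intro r τ C q Cτ hr hτ hC hq hCτ hyp d hd ε hε0 hε1
    have hd1 : (1:ℝ) ≤ d := by exact_mod_cast hd
    have hd0 : (0:ℝ) < d := lt_of_lt_of_le one_pos hd1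
    set m : ℕ := ⌈C * (d:ℝ) ^ q⌉₊ with hm
    have hεn : (1:ℝ) ≤ ε ^ (-(2 * τ)) :=
      Real.one_le_rpow_of_pos_of_le_one_of_nonpos hε0 hε1 (by nlinarith)
    set S2 : Set ℕ := {i : ℕ | m ≤ i ∧ ε ^ 2 < lam d i / lam d 1} with hS2def
    have hsub : {i : ℕ | 1 ≤ i ∧ ε ^ 2 < lam d i / lam d 1} ⊆
        (↑(Finset.Ico 1 m) ∪ S2) := by
      rintro i ⟨hi1, hi2⟩
      rcases lt_or_ge i m with h | h
      · left; simp only [Finset.coe_Ico, Set.mem_Ico]; exact ⟨hi1, h⟩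
      · right; exact ⟨h, hi2⟩
    have hA : (((↑(Finset.Ico 1 m) : Set ℕ).encard : ℕ∞) : ℝ≥0∞) ≤
        ENNReal.ofReal (C * (d:ℝ) ^ q) := by
      rw [Set.encard_coe_eq_coe_finsetCard, Nat.card_Ico]
      have h1 : ((m - 1 : ℕ) : ℝ) ≤ C * (d:ℝ) ^ q := by
        have h2 : m - 1 < m := by
          have : 1 ≤ m := Nat.ceil_pos.2 (by positivity)
          omega
        exact (Nat.lt_ceil.1 (by omega)).le
      calc (((m - 1 : ℕ) : ℕ∞) : ℝ≥0∞) = ENNReal.ofReal ((m - 1 : ℕ) : ℝ) := by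
            simp [ENNReal.ofReal_natCast]
        _ ≤ _ := ENNReal.ofReal_le_ofReal h1
    -- bound on the tail sum
    have hT : (∑' i : {i : ℕ // m ≤ i}, ENNReal.ofReal (lam d i / lam d 1) ^ τ) ≤
        ENNReal.ofReal ((Cτ * (d:ℝ) ^ r) ^ τ) := by
      have h := ENNReal.rpow_le_rpow (hyp d hd) hτ.le
      rwa [← ENNReal.rpow_mul, one_div, inv_mul_cancel₀ hτ.ne', ENNReal.rpow_one,
        ENNReal.ofReal_rpow_of_nonneg (by positivity) hτ.le] at h
    have hc0 : ENNReal.ofReal (ε ^ (2 * τ)) ≠ 0 := by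
      simp only [ne_eq, ENNReal.ofReal_eq_zero, not_le]
      positivity
    have hctop : ENNReal.ofReal (ε ^ (2 * τ)) ≠ ⊤ := ENNReal.ofReal_ne_top
    have hlow : (S2.encard : ℝ≥0∞) * ENNReal.ofReal (ε ^ (2 * τ)) ≤
        ∑' i : {i : ℕ // m ≤ i}, ENNReal.ofReal (lam d i / lam d 1) ^ τ := by
      rw [← ENNReal.tsum_set_const]
      have hinj : Function.Injective (fun x : S2 => (⟨x.1, x.2.1⟩ : {i : ℕ // m ≤ i})) := by
        intro a b hab
        ext
        simpa [Subtype.ext_iff] using hab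
      calc ∑' (_ : S2), ENNReal.ofReal (ε ^ (2 * τ))
          ≤ ∑' (x : S2), ENNReal.ofReal (lam d x / lam d 1) ^ τ := by
            apply ENNReal.tsum_le_tsum
            rintro ⟨x, hxm, hxε⟩
            have he : ε ^ (2 * τ) = (ε ^ 2) ^ τ := by
              rw [← Real.rpow_natCast ε 2, ← Real.rpow_mul hε0.le]
              norm_num
            rw [he, ← ENNReal.ofReal_rpow_of_nonneg (by positivity) hτ.le]
            exact ENNReal.rpow_le_rpow (ENNReal.ofReal_le_ofReal hxε.le) hτ.le
        _ ≤ _ := ENNReal.tsum_comp_le_tsum_of_injective hinj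
              (fun i : {i : ℕ // m ≤ i} => ENNReal.ofReal (lam d i / lam d 1) ^ τ)
    have hS2 : (S2.encard : ℝ≥0∞) ≤
        ENNReal.ofReal (Cτ ^ τ * (d:ℝ) ^ (r * τ) * ε ^ (-(2 * τ))) := by
      have h1 : (S2.encard : ℝ≥0∞) ≤ ENNReal.ofReal ((Cτ * (d:ℝ) ^ r) ^ τ) /
          ENNReal.ofReal (ε ^ (2 * τ)) :=
        (ENNReal.le_div_iff_mul_le (Or.inl hc0) (Or.inl hctop)).2 (hlow.trans hT)
      rw [← ENNReal.ofReal_div_of_pos (by positivity)] at h1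
      refine h1.trans (ENNReal.ofReal_le_ofReal (le_of_eq ?_))
      rw [Real.mul_rpow hCτ (Real.rpow_nonneg hd0.le _), ← Real.rpow_mul hd0.le,
        div_eq_mul_inv, ← Real.rpow_neg hε0.le]
    calc ({i : ℕ | 1 ≤ i ∧ ε ^ 2 < lam d i / lam d 1}.encard : ℝ≥0∞)
        ≤ (((↑(Finset.Ico 1 m) : Set ℕ) ∪ S2).encard : ℝ≥0∞) := by
          exact_mod_cast ENat.toENNReal_le.2 (Set.encard_mono hsub)
      _ ≤ ((↑(Finset.Ico 1 m) : Set ℕ).encard : ℝ≥0∞) + (S2.encard : ℝ≥0∞) := by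
          rw [← ENat.toENNReal_add]
          exact ENat.toENNReal_le.2 (Set.encard_union_le _ _)
      _ ≤ ENNReal.ofReal (C * (d:ℝ) ^ q) +
          ENNReal.ofReal (Cτ ^ τ * (d:ℝ) ^ (r * τ) * ε ^ (-(2 * τ))) := add_le_add hA hS2
      _ = ENNReal.ofReal (C * (d:ℝ) ^ q + Cτ ^ τ * (d:ℝ) ^ (r * τ) * ε ^ (-(2 * τ))) :=
          (ENNReal.ofReal_add (by positivity) (by positivity)).symm
      _ ≤ _ := by
          apply ENNReal.ofReal_le_ofReal
          have hdq : (d:ℝ) ^ q ≤ (d:ℝ) ^ max q (r * τ) :=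
            Real.rpow_le_rpow_of_exponent_le hd1 (le_max_left _ _)
          have hdr : (d:ℝ) ^ (r * τ) ≤ (d:ℝ) ^ max q (r * τ) :=
            Real.rpow_le_rpow_of_exponent_le hd1 (le_max_right _ _)
          have hCτ' : (0:ℝ) ≤ Cτ ^ τ := Real.rpow_nonneg hCτ _
          have hdm : (0:ℝ) < (d:ℝ) ^ max q (r * τ) := Real.rpow_pos_of_pos hd0 _
          have hdq0 : (0:ℝ) < (d:ℝ) ^ q := Real.rpow_pos_of_pos hd0 _
          have hdr0 : (0:ℝ) < (d:ℝ) ^ (r * τ) := Real.rpow_pos_of_pos hd0 _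
          nlinarith [mul_le_mul_of_nonneg_left hdq hC.le,
            mul_le_mul_of_nonneg_left hdr hCτ',
            mul_le_mul_of_nonneg_right hεn (mul_nonneg hC.le hdm.le)]
end

section
/- Let λ = (λ_m)_{m≥1} be a non-increasing sequence of nonnegative reals with λ₂ > 0 and let s = (s_d)_{d≥1} be a sequence of positive reals. Then the following four assertions are equivalent: (I) the scaled tensor product problem is strongly polynomially tractable, i.e. there exist C, p > 0 such that n(ε,d) ≤ C·ε^{−p} for all d ≥ 1 and ε ∈ (0,1]; (II) it is polynomially tractable, i.e. there exist C, p > 0, q ≥ 0 such that n(ε,d) ≤ C·ε^{−p}·d^q for all d ≥ 1 and ε ∈ (0,1]; (III) there exists τ ∈ (0,∞) with Σ_{m=1}^∞ λ_m^τ < ∞ and sup_{d≥1} s_d·(Σ_{m=1}^∞ λ_m^τ)^{d/τ} < ∞; (IV) there exists ρ ∈ (0,∞) with Σ_{m=1}^∞ λ_m^ρ < ∞ and limsup_{d→∞} s_d^{1/d} < 1/λ₁. Moreover, if these hold then the exponent of strong polynomial tractability p* := inf{ p > 0 : ∃ C > 0 ∀ d ≥ 1 ∀ ε ∈ (0,1],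 n(ε,d) ≤ C·ε^{−p} } equals inf{ 2τ : τ satisfies the condition in (III) }. -/
open scoped ENNReal
open Filter

/-- Worst case information complexity (absolute error criterion) of the scaled tensor
product problem with univariate squared singular values `lam` and scaling factors `s`:
`n(ε,d) = #{ j ∈ (ℕ_{≥1})^d : s_d · lam j₁ ⋯ lam j_d > ε² }`. -/
noncomputable def nScaled (lam : ℕ → ℝ) (s : ℕ → ℝ) (ε : ℝ) (d : ℕ) : ℕ∞ :=
  ({j : Fin d → ℕ | (∀ k, 1 ≤ j k) ∧ ε ^ 2 < s d * ∏ k, lam (j k)}).encard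

/-- Strong polynomial tractability of the scaled problem. -/
def SPTScaled (lam : ℕ → ℝ) (s : ℕ → ℝ) : Prop :=
  ∃ C > (0 : ℝ), ∃ p > (0 : ℝ), ∀ d : ℕ, 1 ≤ d → ∀ ε : ℝ, 0 < ε → ε ≤ 1 →
    (nScaled lam s ε d : ℝ≥0∞) ≤ ENNReal.ofReal (C * ε ^ (-p))

/-- Polynomial tractability of the scaled problem. -/
def PTScaled (lam : ℕ → ℝ) (s : ℕ → ℝ) : Prop :=
  ∃ C > (0 : ℝ), ∃ p > (0 : ℝ), ∃ q : ℝ, 0 ≤ q ∧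
    ∀ d : ℕ, 1 ≤ d → ∀ ε : ℝ, 0 < ε → ε ≤ 1 →
      (nScaled lam s ε d : ℝ≥0∞) ≤ ENNReal.ofReal (C * ε ^ (-p) * (d : ℝ) ^ q)

/-- Condition (III): `λ ∈ ℓ_τ` and `sup_d s_d ‖λ | ℓ_τ‖^d < ∞`
(note `‖λ|ℓ_τ‖^d = (∑_m λ_m^τ)^{d/τ}`). -/
def CondIII (lam : ℕ → ℝ) (s : ℕ → ℝ) (τ : ℝ) : Prop :=
  0 < τ ∧ Summable (fun m : ℕ => lam (m + 1) ^ τ) ∧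
    ∃ B : ℝ, ∀ d : ℕ, 1 ≤ d → s d * (∑' m : ℕ, lam (m + 1) ^ τ) ^ ((d : ℝ) / τ) ≤ B



private lemma bdd_of_eventually {f : ℕ → ℝ} {c : ℝ} (N : ℕ) (h : ∀ d, N ≤ d → f d ≤ c) :
    ∃ B : ℝ, ∀ d, f d ≤ B := by
  refine ⟨max c (∑ i ∈ Finset.range N, |f i|), fun d => ?_⟩
  rcases le_or_gt N d with hd | hd
  · exact le_max_of_le_left (h d hd)
  · refine le_max_of_le_right ?_
    calc f d ≤ |f d| := le_abs_self _
      _ ≤ ∑ i ∈ Finset.range N, |f i| :=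
        Finset.single_le_sum (f := fun i => |f i|) (fun i _ => abs_nonneg _)
          (Finset.mem_range.mpr hd)

private lemma card_le_of_encard_le {α : Type*} {S : Set α} {y : ℝ} (hy : 0 ≤ y)
    (h : (S.encard : ℝ≥0∞) ≤ ENNReal.ofReal y) (F : Finset α) (hF : ↑F ⊆ S) :
    (F.card : ℝ) ≤ y := by
  rcases Nat.eq_zero_or_pos F.card with h0 | h0
  · rw [h0]; exact_mod_cast hy
  · have h1 : ((F.card : ℕ∞) : ℝ≥0∞) ≤ (S.encard : ℝ≥0∞) := by
      have := Set.encard_mono hF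
      rw [Set.encard_coe_eq_coe_finsetCard] at this
      exact_mod_cast this
    have h2 : ((F.card : ℕ) : ℝ≥0∞) ≤ ENNReal.ofReal y := by
      refine le_trans ?_ (le_trans h1 h)
      norm_cast
    exact (ENNReal.natCast_le_ofReal (Nat.pos_iff_ne_zero.mp h0)).mp h2

private lemma encard_le_of_card_le {α : Type*} {S : Set α} {y : ℝ} (hy : 0 ≤ y)
    (h : ∀ F : Finset α, ↑F ⊆ S → (F.card : ℝ) ≤ y) :
    (S.encard : ℝ≥0∞) ≤ ENNReal.ofReal y := by
  by_cases hfin : S.Finite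
  · have hc := h hfin.toFinset (by simp)
    have hE : S.encard = (hfin.toFinset.card : ℕ∞) := by
      rw [← Set.encard_coe_eq_coe_finsetCard, hfin.coe_toFinset]
    rw [hE]
    rcases Nat.eq_zero_or_pos hfin.toFinset.card with h0 | h0
    · rw [h0]; simp
    · have : ((hfin.toFinset.card : ℕ) : ℝ≥0∞) ≤ ENNReal.ofReal y :=
        (ENNReal.natCast_le_ofReal (Nat.pos_iff_ne_zero.mp h0)).mpr hc
      exact_mod_cast this
  · exfalso
    obtain ⟨F, hFS, hcard⟩ := Set.Infinite.exists_subset_card_eq hfin (⌈y⌉₊ + 1)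
    have := h F hFS
    rw [hcard] at this
    have hy2 : y ≤ (⌈y⌉₊ : ℝ) := Nat.le_ceil y
    push_cast at this
    linarith

private lemma zsum_summable {α : ℝ} (hα : 1 < α) :
    Summable (fun k : ℕ => ((k : ℝ) + 1) ^ (-α)) := by
  have h1 : Summable (fun n : ℕ => (n : ℝ) ^ (-α)) := Real.summable_nat_rpow.2 (by linarith)
  have h2 := (summable_nat_add_iff 1).2 h1
  refine h2.congr fun k => ?_
  push_cast
  ring_nf

private lemma pow_rpow_comm {x : ℝ} (hx : 0 ≤ x) (d : ℕ) (τ : ℝ) :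
    (x ^ d) ^ τ = (x ^ τ) ^ d := by
  rw [← Real.rpow_natCast x d, ← Real.rpow_mul hx, mul_comm, Real.rpow_mul hx, Real.rpow_natCast]


private lemma core_small {ι : Type*} [DecidableEq ι] {a : ι → ℝ} {C' p τ : ℝ} {F : Finset ι}
    (hC' : 0 < C') (hp : 0 < p) (hτ : p < 2 * τ)
    (hcount : ∀ x : ℝ, 0 < x → x ≤ 1 → ∀ F' : Finset ι, F' ⊆ F →
      (∀ j ∈ F', x < a j) → (F'.card : ℝ) ≤ C' * x ^ (-(p / 2))) :
    ∀ n : ℕ, ∀ F' : Finset ι, F' ⊆ F → F'.card = n →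
      (∀ j ∈ F', 0 ≤ a j) → (∀ j ∈ F', a j ≤ 1) →
      ∑ j ∈ F', a j ^ τ ≤
        C' ^ (2 * τ / p) * ∑ k ∈ Finset.range n, ((k : ℝ) + 1) ^ (-(2 * τ / p)) := by
  have hτ0 : 0 < τ := by linarith
  have hα : 0 < 2 * τ / p := by positivity
  intro n
  induction n with
  | zero =>
    intro F' _ hcard _ _
    rw [Finset.card_eq_zero.mp hcard]
    simp
  | succ n ih =>
    intro F' hsub hcard h0 h1
    have hne : F'.Nonempty := Finset.card_pos.mp (by omega)
    obtain ⟨j₀, hj₀, hmin⟩ := F'.exists_min_image a hne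
    have hstep : a j₀ ^ τ ≤ C' ^ (2 * τ / p) * ((n : ℝ) + 1) ^ (-(2 * τ / p)) := by
      rcases eq_or_lt_of_le (h0 j₀ hj₀) with hz | hz
      · rw [← hz, Real.zero_rpow (ne_of_gt hτ0)]
        positivity
      · have key : ((n : ℝ) + 1) ≤ C' * (a j₀) ^ (-(p / 2)) := by
          have hcont : ContinuousAt (fun x : ℝ => C' * x ^ (-(p / 2))) (a j₀) :=
            continuousAt_const.mul (Real.continuousAt_rpow_const _ _ (Or.inl (ne_of_gt hz)))
          have ht : Filter.Tendsto (fun x : ℝ => C' * x ^ (-(p / 2)))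
              (nhdsWithin (a j₀) (Set.Iio (a j₀))) (nhds (C' * (a j₀) ^ (-(p / 2)))) :=
            hcont.continuousWithinAt.tendsto
          refine ge_of_tendsto ht ?_
          have hmem : Set.Ioo 0 (a j₀) ∈ nhdsWithin (a j₀) (Set.Iio (a j₀)) :=
            Ioo_mem_nhdsLT_of_mem ⟨hz, le_refl _⟩
          filter_upwards [hmem] with x hx
          have hxlt : ∀ j ∈ F', x < a j := fun j hj => lt_of_lt_of_le hx.2 (hmin j hj)
          have := hcount x hx.1 (le_of_lt (lt_of_lt_of_le hx.2 (h1 j₀ hj₀))) F' hsub hxlt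
          rw [hcard] at this
          push_cast at this
          linarith
        have hu : 0 < a j₀ ^ (p / 2) := Real.rpow_pos_of_pos hz _
        have key2 : a j₀ ^ (p / 2) ≤ C' / ((n : ℝ) + 1) := by
          rw [Real.rpow_neg (le_of_lt hz)] at key
          have hn1 : (0 : ℝ) < (n : ℝ) + 1 := by positivity
          rw [le_div_iff₀ hn1]
          calc a j₀ ^ (p / 2) * ((n : ℝ) + 1)
              ≤ a j₀ ^ (p / 2) * (C' * (a j₀ ^ (p / 2))⁻¹) :=
                mul_le_mul_of_nonneg_left key (le_of_lt hu)
            _ = C' := by field_simp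
        have hp0 : p ≠ 0 := ne_of_gt hp
        have hexp : p / 2 * (2 * τ / p) = τ := by
          calc p / 2 * (2 * τ / p) = τ * (p / p) := by ring
            _ = τ := by rw [div_self hp0, mul_one]
        have heq : a j₀ ^ τ = (a j₀ ^ (p / 2)) ^ (2 * τ / p) := by
          rw [← Real.rpow_mul (le_of_lt hz), hexp]
        rw [heq]
        calc (a j₀ ^ (p / 2)) ^ (2 * τ / p) ≤ (C' / ((n : ℝ) + 1)) ^ (2 * τ / p) :=
              Real.rpow_le_rpow (le_of_lt hu) key2 (le_of_lt hα)
          _ = C' ^ (2 * τ / p) * ((n : ℝ) + 1) ^ (-(2 * τ / p)) := by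
              rw [Real.div_rpow (le_of_lt hC') (by positivity),
                Real.rpow_neg (by positivity), div_eq_mul_inv]
    have hsum : ∑ j ∈ F', a j ^ τ = a j₀ ^ τ + ∑ j ∈ F'.erase j₀, a j ^ τ :=
      (Finset.add_sum_erase _ _ hj₀).symm
    have hrec := ih (F'.erase j₀) ((F'.erase_subset j₀).trans hsub)
      (by rw [Finset.card_erase_of_mem hj₀, hcard]; omega)
      (fun j hj => h0 j (Finset.mem_of_mem_erase hj))
      (fun j hj => h1 j (Finset.mem_of_mem_erase hj))
    rw [hsum, Finset.sum_range_succ, mul_add]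
    push_cast
    push_cast at hrec hstep
    linarith

private lemma core_sum {ι : Type*} [DecidableEq ι] {a : ι → ℝ} {C' p τ A : ℝ} {F : Finset ι}
    (hC' : 0 < C') (hp : 0 < p) (hτ : p < 2 * τ)
    (hcount : ∀ x : ℝ, 0 < x → x ≤ 1 → ∀ F' : Finset ι, F' ⊆ F →
      (∀ j ∈ F', x < a j) → (F'.card : ℝ) ≤ C' * x ^ (-(p / 2)))
    (h0 : ∀ j ∈ F, 0 ≤ a j) (hA : ∀ j ∈ F, a j ≤ A) :
    ∑ j ∈ F, a j ^ τ ≤ C' * (max A 1) ^ τ +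
      C' ^ (2 * τ / p) * ∑' k : ℕ, ((k : ℝ) + 1) ^ (-(2 * τ / p)) := by
  have hτ0 : 0 < τ := by linarith
  have hα : 1 < 2 * τ / p := by rw [lt_div_iff₀ hp]; linarith
  classical
  rw [← Finset.sum_filter_add_sum_filter_not F (fun j => a j ≤ 1) (fun j => a j ^ τ)]
  have hbig : ∑ j ∈ F.filter (fun j => ¬ a j ≤ 1), a j ^ τ ≤ C' * (max A 1) ^ τ := by
    have hcard : ((F.filter (fun j => ¬ a j ≤ 1)).card : ℝ) ≤ C' := by
      have := hcount 1 one_pos (le_refl 1) (F.filter (fun j => ¬ a j ≤ 1))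
        (Finset.filter_subset _ _)
        (fun j hj => lt_of_not_ge (Finset.mem_filter.mp hj).2)
      simpa using this
    have hterm : ∀ j ∈ F.filter (fun j => ¬ a j ≤ 1), a j ^ τ ≤ (max A 1) ^ τ := by
      intro j hj
      have hjF := (Finset.mem_filter.mp hj).1
      exact Real.rpow_le_rpow (h0 j hjF) (le_trans (hA j hjF) (le_max_left _ _)) (le_of_lt hτ0)
    calc ∑ j ∈ F.filter (fun j => ¬ a j ≤ 1), a j ^ τ
        ≤ (F.filter (fun j => ¬ a j ≤ 1)).card • (max A 1) ^ τ :=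
          Finset.sum_le_card_nsmul _ _ _ hterm
      _ = ((F.filter (fun j => ¬ a j ≤ 1)).card : ℝ) * (max A 1) ^ τ := by
          rw [nsmul_eq_mul]
      _ ≤ C' * (max A 1) ^ τ := by
          have : (0:ℝ) ≤ (max A 1) ^ τ := Real.rpow_nonneg (le_trans zero_le_one (le_max_right _ _)) _
          exact mul_le_mul_of_nonneg_right hcard this
  have hsmall : ∑ j ∈ F.filter (fun j => a j ≤ 1), a j ^ τ ≤
      C' ^ (2 * τ / p) * ∑' k : ℕ, ((k : ℝ) + 1) ^ (-(2 * τ / p)) := by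
    have h1 := core_small hC' hp hτ hcount (F.filter (fun j => a j ≤ 1)).card
      (F.filter (fun j => a j ≤ 1)) (Finset.filter_subset _ _) rfl
      (fun j hj => h0 j (Finset.mem_filter.mp hj).1)
      (fun j hj => (Finset.mem_filter.mp hj).2)
    refine le_trans h1 ?_
    have hsummable := zsum_summable hα
    refine mul_le_mul_of_nonneg_left ?_ (Real.rpow_nonneg (le_of_lt hC') _)
    exact Summable.sum_le_tsum _ (fun i _ => Real.rpow_nonneg (by positivity) _) hsummable
  linarith

private lemma master (lam : ℕ → ℝ) (s : ℕ → ℝ) (hnn : ∀ m, 0 ≤ lam m)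
    (hord : ∀ m m' : ℕ, 1 ≤ m → m ≤ m' → lam m' ≤ lam m) (hs : ∀ d, 0 < s d)
    {C p G τ : ℝ} (hC : 0 < C) (hp : 0 < p) (hG : 0 < G) (hτ : p < 2 * τ) (d : ℕ)
    (hB : ∀ ε : ℝ, 0 < ε → ε ≤ 1 →
      (nScaled lam s ε d : ℝ≥0∞) ≤ ENNReal.ofReal (C * ε ^ (-p) * G)) (M : ℕ) :
    s d ^ τ * (∑ m ∈ Finset.range M, lam (m + 1) ^ τ) ^ d ≤
      C * G * (max (s d * lam 1 ^ d) 1) ^ τ +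
        (C * G) ^ (2 * τ / p) * ∑' k : ℕ, ((k : ℝ) + 1) ^ (-(2 * τ / p)) := by
  classical
  have hτ0 : 0 < τ := by linarith
  set a : (Fin d → ℕ) → ℝ := fun j => s d * ∏ k, lam (j k) with ha
  set F : Finset (Fin d → ℕ) :=
    (Fintype.piFinset fun _ : Fin d => Finset.range M).image (fun g k => g k + 1) with hF
  have hinj : ∀ g ∈ Fintype.piFinset fun _ : Fin d => Finset.range M,
      ∀ g' ∈ Fintype.piFinset fun _ : Fin d => Finset.range M,
      (fun k => g k + 1) = (fun k => g' k + 1) → g = g' := by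
    intro g _ g' _ h
    funext k
    have h2 : g k + 1 = g' k + 1 := congrFun h k
    omega
  have hmemF : ∀ j ∈ F, ∀ k, 1 ≤ j k := by
    intro j hj k
    obtain ⟨g, _, rfl⟩ := Finset.mem_image.mp hj
    show 1 ≤ g k + 1
    omega
  have h0 : ∀ j ∈ F, 0 ≤ a j := by
    intro j _
    exact mul_nonneg (le_of_lt (hs d)) (Finset.prod_nonneg fun k _ => hnn _)
  have hA : ∀ j ∈ F, a j ≤ s d * lam 1 ^ d := by
    intro j hj
    refine mul_le_mul_of_nonneg_left ?_ (le_of_lt (hs d))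
    calc ∏ k, lam (j k) ≤ ∏ _k : Fin d, lam 1 :=
          Finset.prod_le_prod (fun k _ => hnn _)
            (fun k _ => hord 1 (j k) (le_refl 1) (hmemF j hj k))
      _ = lam 1 ^ d := by rw [Finset.prod_const, Finset.card_univ, Fintype.card_fin]
  have hcount : ∀ x : ℝ, 0 < x → x ≤ 1 → ∀ F' : Finset (Fin d → ℕ), F' ⊆ F →
      (∀ j ∈ F', x < a j) → (F'.card : ℝ) ≤ (C * G) * x ^ (-(p / 2)) := by
    intro x hx0 hx1 F' hsub hgt
    have hε0 : 0 < Real.sqrt x := Real.sqrt_pos.mpr hx0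
    have hε1 : Real.sqrt x ≤ 1 := by
      rw [show (1:ℝ) = Real.sqrt 1 by rw [Real.sqrt_one]]
      exact Real.sqrt_le_sqrt hx1
    have hsq : Real.sqrt x ^ 2 = x := Real.sq_sqrt (le_of_lt hx0)
    have hBx := hB _ hε0 hε1
    rw [nScaled] at hBx
    have hsubS : ↑F' ⊆ {j : Fin d → ℕ | (∀ k, 1 ≤ j k) ∧
        Real.sqrt x ^ 2 < s d * ∏ k, lam (j k)} := by
      intro j hj
      have hj' : j ∈ F' := Finset.mem_coe.mp hj
      exact ⟨hmemF j (hsub hj'), by rw [hsq]; exact hgt j hj'⟩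
    have hy : (0:ℝ) ≤ C * Real.sqrt x ^ (-p) * G := by positivity
    have hcard := card_le_of_encard_le hy hBx F' hsubS
    calc (F'.card : ℝ) ≤ C * Real.sqrt x ^ (-p) * G := hcard
      _ = (C * G) * x ^ (-(p / 2)) := by
          rw [Real.sqrt_eq_rpow, ← Real.rpow_mul (le_of_lt hx0),
            show (1/2 : ℝ) * (-p) = -(p/2) by ring]
          ring
  have hident : ∑ j ∈ F, a j ^ τ =
      s d ^ τ * (∑ m ∈ Finset.range M, lam (m + 1) ^ τ) ^ d := by
    rw [hF, Finset.sum_image hinj]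
    have hterm : ∀ g : Fin d → ℕ,
        (a fun k => g k + 1) ^ τ = s d ^ τ * ∏ k : Fin d, lam (g k + 1) ^ τ := by
      intro g
      rw [ha]
      dsimp only
      rw [Real.mul_rpow (le_of_lt (hs d)) (Finset.prod_nonneg fun k _ => hnn _),
        ← Real.finset_prod_rpow _ _ (fun k _ => hnn _)]
    calc ∑ g ∈ Fintype.piFinset (fun _ : Fin d => Finset.range M), (a fun k => g k + 1) ^ τ
        = ∑ g ∈ Fintype.piFinset (fun _ : Fin d => Finset.range M),
            s d ^ τ * ∏ k : Fin d, lam (g k + 1) ^ τ :=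
          Finset.sum_congr rfl fun g _ => hterm g
      _ = s d ^ τ * ∑ g ∈ Fintype.piFinset (fun _ : Fin d => Finset.range M),
            ∏ k : Fin d, lam (g k + 1) ^ τ := by rw [Finset.mul_sum]
      _ = s d ^ τ * ∏ _k : Fin d, ∑ m ∈ Finset.range M, lam (m + 1) ^ τ := by
          rw [Finset.prod_univ_sum]
      _ = s d ^ τ * (∑ m ∈ Finset.range M, lam (m + 1) ^ τ) ^ d := by
          rw [Finset.prod_const, Finset.card_univ, Fintype.card_fin]
  rw [← hident]
  exact core_sum (by positivity) hp hτ hcount h0 hA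

private lemma master_tsum (lam : ℕ → ℝ) (s : ℕ → ℝ) (hnn : ∀ m, 0 ≤ lam m)
    (hord : ∀ m m' : ℕ, 1 ≤ m → m ≤ m' → lam m' ≤ lam m) (hs : ∀ d, 0 < s d)
    {C p G τ : ℝ} (hC : 0 < C) (hp : 0 < p) (hG : 0 < G) (hτ : p < 2 * τ) (d : ℕ)
    (hB : ∀ ε : ℝ, 0 < ε → ε ≤ 1 →
      (nScaled lam s ε d : ℝ≥0∞) ≤ ENNReal.ofReal (C * ε ^ (-p) * G))
    (hsum : Summable fun m : ℕ => lam (m + 1) ^ τ) :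
    s d ^ τ * (∑' m : ℕ, lam (m + 1) ^ τ) ^ d ≤
      C * G * (max (s d * lam 1 ^ d) 1) ^ τ +
        (C * G) ^ (2 * τ / p) * ∑' k : ℕ, ((k : ℝ) + 1) ^ (-(2 * τ / p)) := by
  have htend : Filter.Tendsto
      (fun M => s d ^ τ * (∑ m ∈ Finset.range M, lam (m + 1) ^ τ) ^ d) Filter.atTop
      (nhds (s d ^ τ * (∑' m : ℕ, lam (m + 1) ^ τ) ^ d)) :=
    (hsum.hasSum.tendsto_sum_nat.pow d).const_mul _
  exact le_of_tendsto htend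
    (Filter.Eventually.of_forall (master lam s hnn hord hs hC hp hG hτ d hB))

private lemma summable_of_d1 (lam : ℕ → ℝ) (s : ℕ → ℝ) (hnn : ∀ m, 0 ≤ lam m)
    (hord : ∀ m m' : ℕ, 1 ≤ m → m ≤ m' → lam m' ≤ lam m) (hs : ∀ d, 0 < s d)
    {C p τ : ℝ} (hC : 0 < C) (hp : 0 < p) (hτ : p < 2 * τ)
    (hB : ∀ ε : ℝ, 0 < ε → ε ≤ 1 →
      (nScaled lam s ε 1 : ℝ≥0∞) ≤ ENNReal.ofReal (C * ε ^ (-p))) :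
    Summable fun m : ℕ => lam (m + 1) ^ τ := by
  have hB' : ∀ ε : ℝ, 0 < ε → ε ≤ 1 →
      (nScaled lam s ε 1 : ℝ≥0∞) ≤ ENNReal.ofReal (C * ε ^ (-p) * 1) := by
    intro ε h1 h2; rw [mul_one]; exact hB ε h1 h2
  have hspos : 0 < s 1 ^ τ := Real.rpow_pos_of_pos (hs 1) _
  refine summable_of_sum_range_le
    (c := (C * 1 * (max (s 1 * lam 1 ^ 1) 1) ^ τ +
      (C * 1) ^ (2 * τ / p) * ∑' k : ℕ, ((k : ℝ) + 1) ^ (-(2 * τ / p))) / s 1 ^ τ)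
    (fun n => Real.rpow_nonneg (hnn _) _) (fun M => ?_)
  have hM := master lam s hnn hord hs hC hp one_pos hτ 1 hB' M
  rw [pow_one] at hM
  calc ∑ m ∈ Finset.range M, lam (m + 1) ^ τ
      = (s 1 ^ τ * ∑ m ∈ Finset.range M, lam (m + 1) ^ τ) / s 1 ^ τ := by
        field_simp
    _ ≤ (C * 1 * (max (s 1 * lam 1 ^ 1) 1) ^ τ +
          (C * 1) ^ (2 * τ / p) * ∑' k : ℕ, ((k : ℝ) + 1) ^ (-(2 * τ / p))) / s 1 ^ τ :=
        (div_le_div_iff_of_pos_right hspos).mpr hM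

private lemma spt_to_condIII (lam : ℕ → ℝ) (s : ℕ → ℝ) (hnn : ∀ m, 0 ≤ lam m)
    (hord : ∀ m m' : ℕ, 1 ≤ m → m ≤ m' → lam m' ≤ lam m)
    (hlam2 : 0 < lam 2) (hs : ∀ d, 0 < s d) {C p τ : ℝ} (hC : 0 < C) (hp : 0 < p)
    (hτ : p < 2 * τ)
    (hB : ∀ d : ℕ, 1 ≤ d → ∀ ε : ℝ, 0 < ε → ε ≤ 1 →
      (nScaled lam s ε d : ℝ≥0∞) ≤ ENNReal.ofReal (C * ε ^ (-p))) :
    CondIII lam s τ := by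
  have hτ0 : 0 < τ := by linarith
  have hl1 : 0 < lam 1 := by
    have h21 : lam 2 ≤ lam 1 := hord 1 2 (by norm_num) (by norm_num)
    linarith
  have hB' : ∀ d : ℕ, 1 ≤ d → ∀ ε : ℝ, 0 < ε → ε ≤ 1 →
      (nScaled lam s ε d : ℝ≥0∞) ≤ ENNReal.ofReal (C * ε ^ (-p) * 1) := by
    intro d hd ε h1 h2; rw [mul_one]; exact hB d hd ε h1 h2
  have hsummable := summable_of_d1 lam s hnn hord hs hC hp hτ (hB 1 le_rfl)
  refine ⟨hτ0, hsummable, ?_⟩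
  set S := ∑' m : ℕ, lam (m + 1) ^ τ with hSdef
  set Z := ∑' k : ℕ, ((k : ℝ) + 1) ^ (-(2 * τ / p)) with hZdef
  have hS0 : 0 ≤ S := tsum_nonneg fun m => Real.rpow_nonneg (hnn _) _
  have hZ0 : 0 ≤ Z := tsum_nonneg fun k => Real.rpow_nonneg (by positivity) _
  have hKdef : ∀ d : ℕ, 1 ≤ d →
      s d ^ τ * S ^ d ≤ C * (max (s d * lam 1 ^ d) 1) ^ τ + C ^ (2 * τ / p) * Z := by
    intro d hd
    have := master_tsum lam s hnn hord hs hC hp one_pos hτ d (hB' d hd) hsummable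
    rw [mul_one] at this
    exact this
  have hle2 : lam 1 ^ τ + lam 2 ^ τ ≤ S := by
    have := Summable.sum_le_tsum (Finset.range 2) (fun i _ => Real.rpow_nonneg (hnn _) _) hsummable
    simpa [Finset.sum_range_succ] using this
  set r : ℝ := (lam 2 / lam 1) ^ τ with hrdef
  have hr0 : 0 < r := Real.rpow_pos_of_pos (div_pos hlam2 hl1) _
  have hρ : (1:ℝ) < 1 + r := by linarith
  have hl1t : (0:ℝ) < lam 1 ^ τ := Real.rpow_pos_of_pos hl1 _
  have hfact : lam 1 ^ τ + lam 2 ^ τ = lam 1 ^ τ * (1 + r) := by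
    rw [hrdef, Real.div_rpow (hnn 2) (le_of_lt hl1), mul_add, mul_one,
      mul_div_cancel₀ _ (ne_of_gt hl1t)]
  have hlow : ∀ d : ℕ, (s d * lam 1 ^ d) ^ τ * (1 + r) ^ d ≤ s d ^ τ * S ^ d := by
    intro d
    have h1 : (s d * lam 1 ^ d) ^ τ = s d ^ τ * (lam 1 ^ τ) ^ d := by
      rw [Real.mul_rpow (le_of_lt (hs d)) (by positivity), pow_rpow_comm (le_of_lt hl1) d τ]
    rw [h1]
    calc s d ^ τ * (lam 1 ^ τ) ^ d * (1 + r) ^ d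
        = s d ^ τ * (lam 1 ^ τ * (1 + r)) ^ d := by rw [mul_pow]; ring
      _ = s d ^ τ * (lam 1 ^ τ + lam 2 ^ τ) ^ d := by rw [← hfact]
      _ ≤ s d ^ τ * S ^ d :=
          mul_le_mul_of_nonneg_left (pow_le_pow_left₀ (by positivity) hle2 d)
            (Real.rpow_nonneg (le_of_lt (hs d)) _)
  obtain ⟨D, hD⟩ := pow_unbounded_of_one_lt (2 * C + 1) hρ
  have hev : ∀ d, max D 1 ≤ d →
      s d ^ τ * S ^ d ≤ C * max (C ^ (2 * τ / p) * Z) 1 + C ^ (2 * τ / p) * Z := by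
    intro d hd
    have hd1 : 1 ≤ d := le_trans (le_max_right D 1) hd
    have hDd : (2 * C + 1 : ℝ) < (1 + r) ^ d :=
      lt_of_lt_of_le hD (pow_le_pow_right₀ (le_of_lt hρ) (le_trans (le_max_left D 1) hd))
    have hup := hKdef d hd1
    have hA0 : 0 < s d * lam 1 ^ d := mul_pos (hs d) (pow_pos hl1 d)
    rcases le_total (s d * lam 1 ^ d) 1 with hA1 | hA1
    · rw [max_eq_right hA1, Real.one_rpow] at hup
      have hmx : C * 1 ≤ C * max (C ^ (2 * τ / p) * Z) 1 :=
        mul_le_mul_of_nonneg_left (le_max_right _ _) (le_of_lt hC)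
      linarith
    · rw [max_eq_left hA1] at hup
      have hlb := hlow d
      have hAτ1 : 1 ≤ (s d * lam 1 ^ d) ^ τ := by
        have := Real.rpow_le_rpow zero_le_one hA1 (le_of_lt hτ0)
        rwa [Real.one_rpow] at this
      have h2 : (s d * lam 1 ^ d) ^ τ * ((1 + r) ^ d - C) ≤ C ^ (2 * τ / p) * Z := by
        nlinarith [hlb, hup]
      have h3 : (s d * lam 1 ^ d) ^ τ ≤ C ^ (2 * τ / p) * Z := by
        nlinarith [h2, hAτ1, hDd, hC]
      have h4 : (s d * lam 1 ^ d) ^ τ ≤ max (C ^ (2 * τ / p) * Z) 1 :=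
        le_trans h3 (le_max_left _ _)
      nlinarith [hup, h4, hC]
  obtain ⟨B₀, hB₀⟩ := bdd_of_eventually (max D 1) hev
  refine ⟨(max B₀ 0) ^ τ⁻¹, fun d hd => ?_⟩
  have hfd0 : 0 ≤ s d ^ τ * S ^ d :=
    mul_nonneg (Real.rpow_nonneg (le_of_lt (hs d)) _) (pow_nonneg hS0 d)
  have heq : (s d ^ τ * S ^ d) ^ τ⁻¹ = s d * S ^ ((d : ℝ) / τ) := by
    rw [Real.mul_rpow (Real.rpow_nonneg (le_of_lt (hs d)) _) (pow_nonneg hS0 d),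
      ← Real.rpow_natCast S d, ← Real.rpow_mul (le_of_lt (hs d)), ← Real.rpow_mul hS0,
      mul_inv_cancel₀ (ne_of_gt hτ0), Real.rpow_one, div_eq_mul_inv]
  calc s d * S ^ ((d : ℝ) / τ) = (s d ^ τ * S ^ d) ^ τ⁻¹ := heq.symm
    _ ≤ (max B₀ 0) ^ τ⁻¹ :=
        Real.rpow_le_rpow hfd0 (le_trans (hB₀ d) (le_max_left _ _)) (by positivity)

private lemma poly_le_exp {c β γ : ℝ} (hγ : 1 < γ) :
    ∀ᶠ d : ℕ in atTop, c * (d : ℝ) ^ β ≤ γ ^ d := by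
  have hb : 0 < Real.log γ := Real.log_pos hγ
  have hlo := isLittleO_rpow_exp_pos_mul_atTop β hb
  have hbound := hlo.def (c := (max c 1)⁻¹) (by positivity)
  have hcomp := tendsto_natCast_atTop_atTop.eventually hbound
  filter_upwards [hcomp] with d hd
  have hd0 : (0:ℝ) ≤ (d:ℝ) := Nat.cast_nonneg d
  rw [Real.norm_eq_abs, Real.norm_eq_abs, abs_of_nonneg (Real.rpow_nonneg hd0 β),
    abs_of_nonneg (le_of_lt (Real.exp_pos _))] at hd
  have hexp : Real.exp (Real.log γ * (d:ℝ)) = γ ^ d := by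
    rw [mul_comm, Real.exp_nat_mul, Real.exp_log (lt_trans one_pos hγ)]
  have hmc : 0 < max c 1 := lt_of_lt_of_le one_pos (le_max_right _ _)
  calc c * (d:ℝ) ^ β ≤ (max c 1) * (d:ℝ) ^ β :=
        mul_le_mul_of_nonneg_right (le_max_left _ _) (Real.rpow_nonneg hd0 β)
    _ ≤ (max c 1) * ((max c 1)⁻¹ * Real.exp (Real.log γ * (d:ℝ))) :=
        mul_le_mul_of_nonneg_left hd (le_of_lt hmc)
    _ = Real.exp (Real.log γ * (d:ℝ)) := by field_simp
    _ = γ ^ d := hexp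

set_option maxHeartbeats 1000000 in
private lemma pt_to_IV (lam : ℕ → ℝ) (s : ℕ → ℝ) (hnn : ∀ m, 0 ≤ lam m)
    (hord : ∀ m m' : ℕ, 1 ≤ m → m ≤ m' → lam m' ≤ lam m)
    (hlam2 : 0 < lam 2) (hs : ∀ d, 0 < s d) (hPT : PTScaled lam s) :
    ∃ ρ : ℝ, 0 < ρ ∧ Summable (fun m : ℕ => lam (m + 1) ^ ρ) ∧
      ∃ t : ℝ, t < 1 / lam 1 ∧ ∀ᶠ d : ℕ in atTop, s d ^ ((d : ℝ))⁻¹ ≤ t := by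
  obtain ⟨C, hC, p, hp, q, hq, hbound⟩ := hPT
  have hl1 : 0 < lam 1 := by
    have h21 : lam 2 ≤ lam 1 := hord 1 2 (by norm_num) (by norm_num)
    linarith
  have hττ : p < 2 * p := by linarith
  have hτ0 : 0 < p := hp
  have hB1 : ∀ ε : ℝ, 0 < ε → ε ≤ 1 →
      (nScaled lam s ε 1 : ℝ≥0∞) ≤ ENNReal.ofReal (C * ε ^ (-p)) := by
    intro ε h1 h2
    have := hbound 1 le_rfl ε h1 h2
    simpa [Real.one_rpow] using this
  have hsummable := summable_of_d1 lam s hnn hord hs hC hp hττ hB1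
  refine ⟨p, hp, hsummable, ?_⟩
  set r : ℝ := (lam 2 / lam 1) ^ p with hrdef
  have hr0 : 0 < r := Real.rpow_pos_of_pos (div_pos hlam2 hl1) _
  have hρ1 : (1:ℝ) < 1 + r := by linarith
  set γ := Real.sqrt (1 + r) with hγdef
  have hγ1 : 1 < γ := by
    have h := Real.sqrt_lt_sqrt (by norm_num) hρ1
    rwa [Real.sqrt_one] at h
  have hγ0 : 0 < γ := lt_trans one_pos hγ1
  have hγsq : γ ^ 2 = 1 + r := Real.sq_sqrt (by linarith)
  set Z := ∑' k : ℕ, ((k : ℝ) + 1) ^ (-(2 * p / p)) with hZdef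
  have hZ0 : 0 ≤ Z := tsum_nonneg fun k => Real.rpow_nonneg (by positivity) _
  have hl1t : (0:ℝ) < lam 1 ^ p := Real.rpow_pos_of_pos hl1 _
  have hfact : lam 1 ^ p + lam 2 ^ p = lam 1 ^ p * (1 + r) := by
    rw [hrdef, Real.div_rpow (hnn 2) (le_of_lt hl1), mul_add, mul_one,
      mul_div_cancel₀ _ (ne_of_gt hl1t)]
  have hE1 := poly_le_exp (c := 4 * C) (β := q) hγ1
  have hE2 := poly_le_exp (c := 4 * (Z + 1) * C ^ (2 * p / p)) (β := q * (2 * p / p)) hγ1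
  refine ⟨γ ^ (-p⁻¹) / lam 1, ?_, ?_⟩
  · have h1 : γ ^ (-p⁻¹) < 1 := Real.rpow_lt_one_of_one_lt_of_neg hγ1 (neg_lt_zero.mpr (by positivity))
    exact (div_lt_div_iff_of_pos_right hl1).mpr h1
  · filter_upwards [hE1, hE2, Filter.eventually_ge_atTop 1] with d hd1 hd2 hdge
    have hdR : (0:ℝ) < (d:ℝ) := by exact_mod_cast hdge
    have hd0 : ((d:ℝ)) ≠ 0 := ne_of_gt hdR
    have hGd : (0:ℝ) < (d:ℝ) ^ q := Real.rpow_pos_of_pos hdR _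
    set g := γ ^ d with hgdef
    have hgpos : 0 < g := pow_pos hγ0 d
    have hg1 : (1:ℝ) ≤ g := by
      calc (1:ℝ) = 1 ^ d := (one_pow d).symm
        _ ≤ γ ^ d := pow_le_pow_left₀ zero_le_one (le_of_lt hγ1) d
    set A := s d * lam 1 ^ d with hAdef
    have hA0 : 0 < A := mul_pos (hs d) (pow_pos hl1 d)
    have hAτ0 : (0:ℝ) ≤ A ^ p := Real.rpow_nonneg (le_of_lt hA0) _
    -- master with M = 2, G = d^q
    have hmaster := master lam s hnn hord hs hC hp hGd hττ d
      (fun ε h1 h2 => hbound d hdge ε h1 h2) 2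
    have hsum2 : ∑ m ∈ Finset.range 2, lam (m + 1) ^ p = lam 1 ^ p + lam 2 ^ p := by
      norm_num [Finset.sum_range_succ]
    rw [hsum2] at hmaster
    -- lower bound
    have hlow : A ^ p * g ^ 2 ≤ s d ^ p * (lam 1 ^ p + lam 2 ^ p) ^ d := by
      have h1 : A ^ p = s d ^ p * (lam 1 ^ p) ^ d := by
        rw [hAdef, Real.mul_rpow (le_of_lt (hs d)) (by positivity), pow_rpow_comm (le_of_lt hl1) d p]
      have h2 : g ^ 2 = (1 + r) ^ d := by
        rw [hgdef, ← pow_mul, mul_comm d 2, pow_mul, hγsq]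
      rw [h1, h2, hfact]
      calc s d ^ p * (lam 1 ^ p) ^ d * (1 + r) ^ d
          = s d ^ p * (lam 1 ^ p * (1 + r)) ^ d := by rw [mul_pow]; ring
        _ ≤ s d ^ p * (lam 1 ^ p * (1 + r)) ^ d := le_refl _
    -- upper pieces
    have hmax : (max A 1) ^ p ≤ A ^ p + 1 := by
      rcases le_total A 1 with h | h
      · rw [max_eq_right h, Real.one_rpow]; linarith
      · rw [max_eq_left h]; linarith
    have hCG : (C * (d:ℝ) ^ q) ^ (2 * p / p) = C ^ (2 * p / p) * (d:ℝ) ^ (q * (2 * p / p)) := by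
      rw [Real.mul_rpow (le_of_lt hC) (le_of_lt hGd), ← Real.rpow_mul (le_of_lt hdR)]
    have hCGd : C * (d:ℝ) ^ q ≤ g / 4 := by linarith
    have hat0 : (0:ℝ) ≤ C ^ (2 * p / p) * (d:ℝ) ^ (q * (2 * p / p)) := by positivity
    have hK2d : C ^ (2 * p / p) * (d:ℝ) ^ (q * (2 * p / p)) * Z ≤ g / 4 := by nlinarith [hat0, hd2]
    have hup : A ^ p * g ^ 2 ≤ C * (d:ℝ) ^ q * (A ^ p + 1) + g / 4 := by
      have h3 : C * (d:ℝ) ^ q * (max A 1) ^ p ≤ C * (d:ℝ) ^ q * (A ^ p + 1) :=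
        mul_le_mul_of_nonneg_left hmax (by positivity)
      have h4 := le_trans hlow hmaster
      rw [hCG] at h4
      linarith
    have j1 : A ^ p * g ^ 2 ≤ g / 4 * (A ^ p + 1) + g / 4 := by
      have h5 : C * (d:ℝ) ^ q * (A ^ p + 1) ≤ g / 4 * (A ^ p + 1) :=
        mul_le_mul_of_nonneg_right hCGd (by linarith)
      linarith
    have hgg : g ≤ g ^ 2 := by
      calc g = g * 1 := (mul_one g).symm
        _ ≤ g * g := mul_le_mul_of_nonneg_left hg1 (le_of_lt hgpos)
        _ = g ^ 2 := (pow_two g).symm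
    have i1 : g / 4 * A ^ p ≤ g ^ 2 / 4 * A ^ p := by
      have w : 0 ≤ (g ^ 2 - g) / 4 * A ^ p := mul_nonneg (by linarith) hAτ0
      linarith
    have j3 : (3/4) * (A ^ p * g ^ 2) ≤ g / 2 := by linarith
    have j4 : A ^ p * g * g ≤ (2/3) * g := by nlinarith [j3]
    have j5 : A ^ p * g ≤ 2/3 := le_of_mul_le_mul_right (by linarith [j4]) hgpos
    have hAτinv : A ^ p ≤ g⁻¹ := by
      have h6 : A ^ p ≤ 1 / g := (le_div_iff₀ hgpos).mpr (by linarith)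
      rwa [one_div] at h6
    -- convert to s d ^ (1/d) bound
    have hA1d : A ^ ((d:ℝ)⁻¹) ≤ γ ^ (-p⁻¹) := by
      have e1 : A ^ ((d:ℝ)⁻¹) = (A ^ p) ^ (p⁻¹ * (d:ℝ)⁻¹) := by
        rw [← Real.rpow_mul (le_of_lt hA0),
          show p * (p⁻¹ * (d:ℝ)⁻¹) = (p * p⁻¹) * (d:ℝ)⁻¹ by ring,
          mul_inv_cancel₀ (ne_of_gt hp), one_mul]
      have e2 : (g⁻¹) ^ (p⁻¹ * (d:ℝ)⁻¹) = γ ^ (-p⁻¹) := by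
        rw [hgdef, ← Real.rpow_natCast γ d, ← Real.rpow_neg (le_of_lt hγ0),
          ← Real.rpow_mul (le_of_lt hγ0),
          show -(d:ℝ) * (p⁻¹ * (d:ℝ)⁻¹) = ((d:ℝ) * (d:ℝ)⁻¹) * -p⁻¹ by ring,
          mul_inv_cancel₀ hd0, one_mul]
      rw [e1, ← e2]
      exact Real.rpow_le_rpow hAτ0 hAτinv (by positivity)
    have hsd : s d ^ ((d:ℝ)⁻¹) = A ^ ((d:ℝ)⁻¹) / lam 1 := by
      have e3 : s d = A / lam 1 ^ d := by
        rw [hAdef, mul_div_cancel_right₀ _ (ne_of_gt (pow_pos hl1 d))]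
      rw [e3, Real.div_rpow (le_of_lt hA0) (by positivity)]
      congr 1
      rw [← Real.rpow_natCast (lam 1) d, ← Real.rpow_mul (le_of_lt hl1),
        mul_inv_cancel₀ hd0, Real.rpow_one]
    rw [hsd]
    exact (div_le_div_iff_of_pos_right hl1).mpr hA1d

set_option maxHeartbeats 1000000 in
private lemma IV_to_III (lam : ℕ → ℝ) (s : ℕ → ℝ) (hnn : ∀ m, 0 ≤ lam m)
    (hord : ∀ m m' : ℕ, 1 ≤ m → m ≤ m' → lam m' ≤ lam m)
    (hlam2 : 0 < lam 2) (hs : ∀ d, 0 < s d)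
    {ρ : ℝ} (hρ : 0 < ρ) (hsum : Summable fun m : ℕ => lam (m + 1) ^ ρ)
    {t : ℝ} (ht : t < 1 / lam 1) (hev : ∀ᶠ d : ℕ in atTop, s d ^ ((d : ℝ))⁻¹ ≤ t) :
    ∃ τ : ℝ, CondIII lam s τ := by
  have hl1 : 0 < lam 1 := by
    have h21 : lam 2 ≤ lam 1 := hord 1 2 (by norm_num) (by norm_num)
    linarith
  obtain ⟨N, hN⟩ := Filter.eventually_atTop.mp hev
  have ht0 : 0 < t :=
    lt_of_lt_of_le (Real.rpow_pos_of_pos (hs (max N 1)) _) (hN _ (le_max_left _ _))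
  have hc1 : t * lam 1 < 1 := by
    rw [lt_div_iff₀ hl1] at ht
    exact ht
  have hc0 : 0 < t * lam 1 := mul_pos ht0 hl1
  have hSρ0 : 0 < ∑' m : ℕ, lam (m + 1) ^ ρ := by
    have h0S : lam 1 ^ ρ ≤ ∑' m : ℕ, lam (m + 1) ^ ρ := by
      simpa using Summable.le_tsum hsum 0 (fun j _ => Real.rpow_nonneg (hnn _) _)
    have := Real.rpow_pos_of_pos hl1 ρ
    linarith
  obtain ⟨n, hn⟩ := exists_pow_lt_of_lt_one
    (div_pos (Real.rpow_pos_of_pos hl1 ρ) hSρ0) hc1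
  set τ := ρ + (n : ℝ) with hτdef
  have hτ0 : 0 < τ := by positivity
  have hkey : ∀ m : ℕ, lam (m + 1) ^ τ ≤ lam 1 ^ n * lam (m + 1) ^ ρ := by
    intro m
    rcases eq_or_lt_of_le (hnn (m + 1)) with hz | hz
    · rw [← hz, Real.zero_rpow (ne_of_gt hτ0)]
      positivity
    · rw [hτdef, Real.rpow_add hz, mul_comm]
      refine mul_le_mul_of_nonneg_right ?_ (Real.rpow_nonneg (le_of_lt hz) _)
      rw [Real.rpow_natCast]
      exact pow_le_pow_left₀ (le_of_lt hz) (hord 1 (m + 1) le_rfl (by omega)) n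
  have hsumτ : Summable fun m : ℕ => lam (m + 1) ^ τ :=
    Summable.of_nonneg_of_le (fun m => Real.rpow_nonneg (hnn _) _) hkey (hsum.mul_left _)
  set S := ∑' m : ℕ, lam (m + 1) ^ τ with hSdef
  have hS0 : 0 < S := by
    have h0S : lam 1 ^ τ ≤ S := by
      simpa [hSdef] using Summable.le_tsum hsumτ 0 (fun j _ => Real.rpow_nonneg (hnn _) _)
    have := Real.rpow_pos_of_pos hl1 τ
    linarith
  have hSτ : S ≤ lam 1 ^ n * ∑' m : ℕ, lam (m + 1) ^ ρ := by
    calc S ≤ ∑' m : ℕ, lam 1 ^ n * lam (m + 1) ^ ρ :=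
          Summable.tsum_le_tsum hkey hsumτ (hsum.mul_left _)
      _ = lam 1 ^ n * ∑' m : ℕ, lam (m + 1) ^ ρ := tsum_mul_left
  have hts : t ^ τ * S < 1 := by
    have htρ0 : 0 < t ^ ρ := Real.rpow_pos_of_pos ht0 _
    have h1 : t ^ τ * S ≤ t ^ τ * (lam 1 ^ n * ∑' m : ℕ, lam (m + 1) ^ ρ) :=
      mul_le_mul_of_nonneg_left hSτ (Real.rpow_nonneg (le_of_lt ht0) _)
    have h2 : t ^ τ = t ^ ρ * t ^ n := by
      rw [hτdef, Real.rpow_add ht0, Real.rpow_natCast]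
    have h4 : t ^ ρ * ((t * lam 1) ^ n * ∑' m : ℕ, lam (m + 1) ^ ρ) <
        t ^ ρ * ((lam 1 ^ ρ / ∑' m : ℕ, lam (m + 1) ^ ρ) * ∑' m : ℕ, lam (m + 1) ^ ρ) := by
      refine mul_lt_mul_of_pos_left ?_ htρ0
      exact mul_lt_mul_of_pos_right hn hSρ0
    have h5 : t ^ ρ * ((lam 1 ^ ρ / ∑' m : ℕ, lam (m + 1) ^ ρ) * ∑' m : ℕ, lam (m + 1) ^ ρ) =
        (t * lam 1) ^ ρ := by
      rw [div_mul_cancel₀ _ (ne_of_gt hSρ0), ← Real.mul_rpow (le_of_lt ht0) (le_of_lt hl1)]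
    have h6 : (t * lam 1) ^ ρ ≤ 1 := Real.rpow_le_one (le_of_lt hc0) (le_of_lt hc1) (le_of_lt hρ)
    have h7 : t ^ τ * (lam 1 ^ n * ∑' m : ℕ, lam (m + 1) ^ ρ) =
        t ^ ρ * ((t * lam 1) ^ n * ∑' m : ℕ, lam (m + 1) ^ ρ) := by
      rw [h2, mul_pow]
      ring
    calc t ^ τ * S ≤ t ^ τ * (lam 1 ^ n * ∑' m : ℕ, lam (m + 1) ^ ρ) := h1
      _ = t ^ ρ * ((t * lam 1) ^ n * ∑' m : ℕ, lam (m + 1) ^ ρ) := h7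
      _ < t ^ ρ * ((lam 1 ^ ρ / ∑' m : ℕ, lam (m + 1) ^ ρ) * ∑' m : ℕ, lam (m + 1) ^ ρ) := h4
      _ = (t * lam 1) ^ ρ := h5
      _ ≤ 1 := h6
  set κ := t * S ^ τ⁻¹ with hκdef
  have hκ0 : 0 < κ := mul_pos ht0 (Real.rpow_pos_of_pos hS0 _)
  have hκτ : κ ^ τ = t ^ τ * S := by
    rw [hκdef, Real.mul_rpow (le_of_lt ht0) (Real.rpow_nonneg (le_of_lt hS0) _),
      ← Real.rpow_mul (le_of_lt hS0), inv_mul_cancel₀ (ne_of_gt hτ0), Real.rpow_one]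
  have hκ1 : κ ≤ 1 := by
    by_contra h
    push_neg at h
    have h1 : 1 < κ ^ τ := (Real.one_lt_rpow_iff_of_pos hκ0).mpr (Or.inl ⟨h, hτ0⟩)
    rw [hκτ] at h1
    linarith
  have hbd : ∀ d : ℕ, max N 1 ≤ d → s d * S ^ ((d : ℝ) / τ) ≤ 1 := by
    intro d hd
    have hd1 : 1 ≤ d := le_trans (le_max_right N 1) hd
    have hdN : N ≤ d := le_trans (le_max_left N 1) hd
    have hd0 : ((d : ℝ)) ≠ 0 := Nat.cast_ne_zero.mpr (by omega)
    have hsdt : s d ≤ t ^ d := by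
      have e : (s d ^ ((d:ℝ)⁻¹)) ^ ((d:ℝ)) = s d := by
        rw [← Real.rpow_mul (le_of_lt (hs d)), inv_mul_cancel₀ hd0, Real.rpow_one]
      have h1 : (s d ^ ((d:ℝ)⁻¹)) ^ ((d:ℝ)) ≤ t ^ ((d:ℝ)) :=
        Real.rpow_le_rpow (Real.rpow_nonneg (le_of_lt (hs d)) _) (hN d hdN) (Nat.cast_nonneg d)
      rw [e, Real.rpow_natCast] at h1
      exact h1
    have hSd : S ^ ((d : ℝ) / τ) = (S ^ τ⁻¹) ^ d := by
      rw [div_eq_mul_inv, mul_comm, Real.rpow_mul (le_of_lt hS0), Real.rpow_natCast]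
    rw [hSd]
    calc s d * (S ^ τ⁻¹) ^ d ≤ t ^ d * (S ^ τ⁻¹) ^ d := by
          refine mul_le_mul_of_nonneg_right hsdt ?_
          positivity
      _ = κ ^ d := by rw [hκdef, mul_pow]
      _ ≤ 1 := pow_le_one₀ (le_of_lt hκ0) hκ1
  obtain ⟨B, hB⟩ := bdd_of_eventually (max N 1) hbd
  exact ⟨τ, hτ0, hsumτ, B, fun d _ => hB d⟩

set_option maxHeartbeats 1000000 in
private lemma condIII_to_bound (lam : ℕ → ℝ) (s : ℕ → ℝ) (hnn : ∀ m, 0 ≤ lam m)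
    (hord : ∀ m m' : ℕ, 1 ≤ m → m ≤ m' → lam m' ≤ lam m)
    (hlam2 : 0 < lam 2) (hs : ∀ d, 0 < s d) {τ : ℝ} (h : CondIII lam s τ) :
    ∃ C : ℝ, 0 < C ∧ ∀ d : ℕ, 1 ≤ d → ∀ ε : ℝ, 0 < ε → ε ≤ 1 →
      (nScaled lam s ε d : ℝ≥0∞) ≤ ENNReal.ofReal (C * ε ^ (-(2 * τ))) := by
  classical
  obtain ⟨hτ0, hsum, B, hB⟩ := h
  have hl1 : 0 < lam 1 := by
    have h21 : lam 2 ≤ lam 1 := hord 1 2 (by norm_num) (by norm_num)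
    linarith
  set S := ∑' m : ℕ, lam (m + 1) ^ τ with hSdef
  have hS0 : 0 < S := by
    have h0S : lam 1 ^ τ ≤ S := by
      simpa [hSdef] using Summable.le_tsum hsum 0 (fun j _ => Real.rpow_nonneg (hnn _) _)
    have := Real.rpow_pos_of_pos hl1 τ
    linarith
  have hBpos : 0 < B := by
    refine lt_of_lt_of_le ?_ (hB 1 le_rfl)
    have := Real.rpow_pos_of_pos hS0 (((1:ℕ):ℝ) / τ)
    exact mul_pos (hs 1) this
  refine ⟨B ^ τ, Real.rpow_pos_of_pos hBpos _, fun d hd ε hε0 hε1 => ?_⟩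
  have hcards : ∀ F : Finset (Fin d → ℕ),
      ↑F ⊆ {j : Fin d → ℕ | (∀ k, 1 ≤ j k) ∧ ε ^ 2 < s d * ∏ k, lam (j k)} →
      (F.card : ℝ) ≤ B ^ τ * ε ^ (-(2 * τ)) := by
    intro F hF
    set M := F.sup (fun j => Finset.univ.sup j) with hM
    have hsub : F ⊆ (Fintype.piFinset fun _ : Fin d => Finset.range M).image
        (fun g k => g k + 1) := by
      intro j hj
      refine Finset.mem_image.mpr ⟨fun k => j k - 1, ?_, ?_⟩
      · refine Fintype.mem_piFinset.mpr fun k => Finset.mem_range.mpr ?_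
        have h1 : 1 ≤ j k := (hF hj).1 k
        have h2 : j k ≤ M :=
          le_trans (Finset.le_sup (Finset.mem_univ k))
            (Finset.le_sup (f := fun j => Finset.univ.sup j) hj)
        show j k - 1 < M
        omega
      · funext k
        have h1 : 1 ≤ j k := (hF hj).1 k
        show j k - 1 + 1 = j k
        omega
    have hinj : ∀ g ∈ Fintype.piFinset fun _ : Fin d => Finset.range M,
        ∀ g' ∈ Fintype.piFinset fun _ : Fin d => Finset.range M,
        (fun k => g k + 1) = (fun k => g' k + 1) → g = g' := by
      intro g _ g' _ hgg
      funext k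
      have h2 : g k + 1 = g' k + 1 := congrFun hgg k
      omega
    have hident : ∑ j ∈ (Fintype.piFinset fun _ : Fin d => Finset.range M).image
        (fun g k => g k + 1), (s d * ∏ k, lam (j k)) ^ τ =
        s d ^ τ * (∑ m ∈ Finset.range M, lam (m + 1) ^ τ) ^ d := by
      rw [Finset.sum_image hinj]
      have hterm : ∀ g : Fin d → ℕ,
          (s d * ∏ k : Fin d, lam (g k + 1)) ^ τ = s d ^ τ * ∏ k : Fin d, lam (g k + 1) ^ τ := by
        intro g
        rw [Real.mul_rpow (le_of_lt (hs d)) (Finset.prod_nonneg fun k _ => hnn _),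
          ← Real.finset_prod_rpow _ _ (fun k _ => hnn _)]
      calc ∑ g ∈ Fintype.piFinset (fun _ : Fin d => Finset.range M),
            (s d * ∏ k : Fin d, lam (g k + 1)) ^ τ
          = ∑ g ∈ Fintype.piFinset (fun _ : Fin d => Finset.range M),
              s d ^ τ * ∏ k : Fin d, lam (g k + 1) ^ τ :=
            Finset.sum_congr rfl fun g _ => hterm g
        _ = s d ^ τ * ∑ g ∈ Fintype.piFinset (fun _ : Fin d => Finset.range M),
              ∏ k : Fin d, lam (g k + 1) ^ τ := by rw [Finset.mul_sum]
        _ = s d ^ τ * ∏ _k : Fin d, ∑ m ∈ Finset.range M, lam (m + 1) ^ τ := by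
            rw [Finset.prod_univ_sum]
        _ = s d ^ τ * (∑ m ∈ Finset.range M, lam (m + 1) ^ τ) ^ d := by
            rw [Finset.prod_const, Finset.card_univ, Fintype.card_fin]
    have hstep1 : (F.card : ℝ) * (ε ^ 2) ^ τ ≤ ∑ j ∈ F, (s d * ∏ k, lam (j k)) ^ τ := by
      have h1 := Finset.card_nsmul_le_sum F (fun j => (s d * ∏ k, lam (j k)) ^ τ)
        ((ε ^ 2) ^ τ)
        (fun j hj => Real.rpow_le_rpow (by positivity) (le_of_lt (hF hj).2) (le_of_lt hτ0))
      rw [nsmul_eq_mul] at h1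
      exact h1
    have hstep2 : ∑ j ∈ F, (s d * ∏ k, lam (j k)) ^ τ ≤
        s d ^ τ * (∑ m ∈ Finset.range M, lam (m + 1) ^ τ) ^ d := by
      rw [← hident]
      exact Finset.sum_le_sum_of_subset_of_nonneg hsub (fun j _ _ =>
        Real.rpow_nonneg (mul_nonneg (le_of_lt (hs d))
          (Finset.prod_nonneg fun k _ => hnn _)) _)
    have hstep3 : (∑ m ∈ Finset.range M, lam (m + 1) ^ τ) ^ d ≤ S ^ d :=
      pow_le_pow_left₀ (Finset.sum_nonneg fun m _ => Real.rpow_nonneg (hnn _) _)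
        (Summable.sum_le_tsum _ (fun i _ => Real.rpow_nonneg (hnn _) _) hsum) d
    have hstep4 : s d ^ τ * S ^ d ≤ B ^ τ := by
      have h1 : s d * S ^ ((d : ℝ) / τ) ≤ B := hB d hd
      have h2 : (s d * S ^ ((d : ℝ) / τ)) ^ τ = s d ^ τ * S ^ d := by
        rw [Real.mul_rpow (le_of_lt (hs d)) (Real.rpow_nonneg (le_of_lt hS0) _),
          ← Real.rpow_mul (le_of_lt hS0), div_mul_cancel₀ _ (ne_of_gt hτ0),
          Real.rpow_natCast]
      rw [← h2]
      exact Real.rpow_le_rpow (mul_nonneg (le_of_lt (hs d))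
        (Real.rpow_nonneg (le_of_lt hS0) _)) h1 (le_of_lt hτ0)
    have hεp : 0 < (ε ^ 2) ^ τ := Real.rpow_pos_of_pos (by positivity) _
    have hsmul : 0 ≤ s d ^ τ := Real.rpow_nonneg (le_of_lt (hs d)) _
    have hfin : (F.card : ℝ) * (ε ^ 2) ^ τ ≤ B ^ τ := by
      have h3 := mul_le_mul_of_nonneg_left hstep3 hsmul
      linarith
    have hεeq : ((ε ^ 2) ^ τ)⁻¹ = ε ^ (-(2 * τ)) := by
      rw [← Real.rpow_natCast ε 2, ← Real.rpow_mul (le_of_lt hε0),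
        ← Real.rpow_neg (le_of_lt hε0)]
      norm_num
    have h4 : (F.card : ℝ) ≤ B ^ τ / (ε ^ 2) ^ τ := (le_div_iff₀ hεp).mpr hfin
    rw [div_eq_mul_inv, hεeq] at h4
    exact h4
  exact encard_le_of_card_le (by positivity) hcards

/-- **Paper Theorem 3.1** (polynomial tractability of scaled tensor product problems,
absolute error criterion): for a non-increasing sequence `lam` of nonnegative reals with
`lam 2 > 0` and positive scalings `s`, the assertions (I) strong polynomial tractability,
(II) polynomial tractability, (III) `∃ τ`, `λ ∈ ℓ_τ` and `sup_d s_d ‖λ‖_τ^d < ∞`, and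
(IV) `∃ ρ`, `λ ∈ ℓ_ρ` and `limsup_d s_d^{1/d} < 1/λ₁` are all equivalent, and then the
exponent of strong polynomial tractability is `inf { 2τ : τ satisfies (III) }`. -/
theorem stmt6 (lam : ℕ → ℝ) (s : ℕ → ℝ)
    (hnn : ∀ m, 0 ≤ lam m)
    (hord : ∀ m m' : ℕ, 1 ≤ m → m ≤ m' → lam m' ≤ lam m)
    (hlam2 : 0 < lam 2) (hs : ∀ d, 0 < s d) :
    (SPTScaled lam s ↔ PTScaled lam s) ∧
    (PTScaled lam s ↔ ∃ τ : ℝ, CondIII lam s τ) ∧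
    ((∃ τ : ℝ, CondIII lam s τ) ↔
      ∃ ρ : ℝ, 0 < ρ ∧ Summable (fun m : ℕ => lam (m + 1) ^ ρ) ∧
        ∃ t : ℝ, t < 1 / lam 1 ∧ ∀ᶠ d : ℕ in atTop, s d ^ ((d : ℝ))⁻¹ ≤ t) ∧
    (SPTScaled lam s →
      sInf {p : ℝ | 0 < p ∧ ∃ C : ℝ, 0 < C ∧ ∀ d : ℕ, 1 ≤ d → ∀ ε : ℝ, 0 < ε → ε ≤ 1 →
          (nScaled lam s ε d : ℝ≥0∞) ≤ ENNReal.ofReal (C * ε ^ (-p))} =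
        sInf {x : ℝ | ∃ τ : ℝ, CondIII lam s τ ∧ x = 2 * τ}) := by

  have hSPT_PT : SPTScaled lam s → PTScaled lam s := by
    rintro ⟨C, hC, p, hp, h⟩
    refine ⟨C, hC, p, hp, 0, le_refl 0, fun d hd ε hε0 hε1 => ?_⟩
    have h1 := h d hd ε hε0 hε1
    simpa [Real.rpow_zero] using h1
  have hPT_IV := pt_to_IV lam s hnn hord hlam2 hs
  have hIV_III : (∃ ρ : ℝ, 0 < ρ ∧ Summable (fun m : ℕ => lam (m + 1) ^ ρ) ∧
      ∃ t : ℝ, t < 1 / lam 1 ∧ ∀ᶠ d : ℕ in atTop, s d ^ ((d : ℝ))⁻¹ ≤ t) →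
      ∃ τ : ℝ, CondIII lam s τ := by
    rintro ⟨ρ, hρ, hsum, t, ht, hev⟩
    exact IV_to_III lam s hnn hord hlam2 hs hρ hsum ht hev
  have hIII_SPT : (∃ τ : ℝ, CondIII lam s τ) → SPTScaled lam s := by
    rintro ⟨τ, hτ⟩
    obtain ⟨C, hC, hbd⟩ := condIII_to_bound lam s hnn hord hlam2 hs hτ
    exact ⟨C, hC, 2 * τ, by linarith [hτ.1], hbd⟩
  refine ⟨⟨hSPT_PT, fun h => hIII_SPT (hIV_III (hPT_IV h))⟩,
    ⟨fun h => hIV_III (hPT_IV h), fun h => hSPT_PT (hIII_SPT h)⟩,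
    ⟨fun h => hPT_IV (hSPT_PT (hIII_SPT h)), hIV_III⟩, ?_⟩
  intro hSPT
  obtain ⟨C₀, hC₀, p₀, hp₀, hb₀⟩ := hSPT
  have hkey : ∀ p : ℝ, (0 < p ∧ ∃ C : ℝ, 0 < C ∧ ∀ d : ℕ, 1 ≤ d → ∀ ε : ℝ, 0 < ε → ε ≤ 1 →
      (nScaled lam s ε d : ℝ≥0∞) ≤ ENNReal.ofReal (C * ε ^ (-p))) →
      ∀ τ : ℝ, p < 2 * τ → CondIII lam s τ := by
    rintro p ⟨hp, C, hC, hbd⟩ τ hτ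
    exact spt_to_condIII lam s hnn hord hlam2 hs hC hp hτ hbd
  have hLne : {p : ℝ | 0 < p ∧ ∃ C : ℝ, 0 < C ∧ ∀ d : ℕ, 1 ≤ d → ∀ ε : ℝ, 0 < ε → ε ≤ 1 →
      (nScaled lam s ε d : ℝ≥0∞) ≤ ENNReal.ofReal (C * ε ^ (-p))}.Nonempty :=
    ⟨p₀, hp₀, C₀, hC₀, hb₀⟩
  have hRne : {x : ℝ | ∃ τ : ℝ, CondIII lam s τ ∧ x = 2 * τ}.Nonempty :=
    ⟨2 * p₀, p₀, hkey p₀ ⟨hp₀, C₀, hC₀, hb₀⟩ p₀ (by linarith), rfl⟩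
  have hLbdd : BddBelow {p : ℝ | 0 < p ∧ ∃ C : ℝ, 0 < C ∧ ∀ d : ℕ, 1 ≤ d → ∀ ε : ℝ, 0 < ε → ε ≤ 1 →
      (nScaled lam s ε d : ℝ≥0∞) ≤ ENNReal.ofReal (C * ε ^ (-p))} :=
    ⟨0, fun x hx => le_of_lt hx.1⟩
  have hRbdd : BddBelow {x : ℝ | ∃ τ : ℝ, CondIII lam s τ ∧ x = 2 * τ} := by
    refine ⟨0, ?_⟩
    rintro x ⟨τ, hτ, rfl⟩
    linarith [hτ.1]
  have hsub : {x : ℝ | ∃ τ : ℝ, CondIII lam s τ ∧ x = 2 * τ} ⊆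
      {p : ℝ | 0 < p ∧ ∃ C : ℝ, 0 < C ∧ ∀ d : ℕ, 1 ≤ d → ∀ ε : ℝ, 0 < ε → ε ≤ 1 →
        (nScaled lam s ε d : ℝ≥0∞) ≤ ENNReal.ofReal (C * ε ^ (-p))} := by
    rintro x ⟨τ, hτ, rfl⟩
    obtain ⟨C, hC, hbd⟩ := condIII_to_bound lam s hnn hord hlam2 hs hτ
    exact ⟨by linarith [hτ.1], C, hC, hbd⟩
  refine le_antisymm (csInf_le_csInf hLbdd hRne hsub) (le_csInf hLne ?_)
  rintro p ⟨hp, C, hC, hbd⟩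
  refine le_of_forall_pos_le_add fun δ hδ => ?_
  have hmem : (p + δ) ∈ {x : ℝ | ∃ τ : ℝ, CondIII lam s τ ∧ x = 2 * τ} :=
    ⟨(p + δ) / 2, hkey p ⟨hp, C, hC, hbd⟩ _ (by linarith), by ring⟩
  exact csInf_le hRbdd hmem
end

section
/- Let λ = (λ_m)_{m≥1} be a non-increasing sequence of nonnegative reals with λ₂ > 0, let s₁ > 0, and define the univariate information complexity n(ε,1) = #{ m ≥ 1 : s₁·λ_m > ε² }. Then for every β ≥ 1 the following are equivalent: (i) λ_n·(ln n)^{2β} → 0 as n → ∞; (ii) t · ln( max( n(t^β, 1), 1) ) → 0 as t → 0⁺. -/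
open Filter

lemma aux_card_ge (lam : ℕ → ℝ) (s₁ c : ℝ) (hs : 0 ≤ s₁)
    (hord : ∀ m m' : ℕ, 1 ≤ m → m ≤ m' → lam m' ≤ lam m)
    (hfin : {m : ℕ | 1 ≤ m ∧ c < s₁ * lam m}.Finite)
    (m : ℕ) (hm : m ∈ {m : ℕ | 1 ≤ m ∧ c < s₁ * lam m}) :
    m ≤ {m : ℕ | 1 ≤ m ∧ c < s₁ * lam m}.ncard := by
  have hsub : Set.Icc 1 m ⊆ {m : ℕ | 1 ≤ m ∧ c < s₁ * lam m} := by
    intro x hx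
    exact ⟨hx.1, lt_of_lt_of_le hm.2 (mul_le_mul_of_nonneg_left (hord x m hx.1 hx.2) hs)⟩
  calc m = (Set.Icc 1 m).ncard := by
        rw [← Finset.coe_Icc, Set.ncard_coe_finset, Nat.card_Icc]; omega
    _ ≤ _ := Set.ncard_le_ncard hsub hfin

lemma aux_top_mem (S : Set ℕ) (hfin : S.Finite) (hne : S.Nonempty)
    (h1 : ∀ x ∈ S, 1 ≤ x)
    (hdc : ∀ x ∈ S, ∀ y, 1 ≤ y → y ≤ x → y ∈ S) :
    S.ncard ∈ S := by
  have hne' : hfin.toFinset.Nonempty := by simpa using hne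
  set K := hfin.toFinset.max' hne' with hKdef
  have hK : K ∈ S := by
    have := hfin.toFinset.max'_mem hne'
    simpa using this
  have hSeq : S = Set.Icc 1 K := by
    ext x
    constructor
    · intro hx
      exact ⟨h1 x hx, Finset.le_max' _ x (hfin.mem_toFinset.mpr hx)⟩
    · intro hx
      exact hdc K hK x hx.1 hx.2
  have : S.ncard = K := by
    rw [hSeq, ← Finset.coe_Icc, Set.ncard_coe_finset, Nat.card_Icc]
    have := h1 K hK; omega
  rw [this]; exact hK

lemma aux_sq_rpow (t β : ℝ) (ht : 0 < t) : (t ^ β) ^ 2 = t ^ (2 * β) := by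
  rw [sq, ← Real.rpow_add ht]; ring_nf

lemma aux_rpow_lt (a b e : ℝ) (hb : 0 ≤ b) (he : 0 < e)
    (h : a ^ e < b ^ e) : a < b := by
  by_contra hc
  push_neg at hc
  exact absurd (Real.rpow_le_rpow hb hc he.le) (not_le.mpr h)

lemma aux_rpow_inv (x b : ℝ) (hx : 0 ≤ x) (hb : b ≠ 0) : (x ^ (1 / b)) ^ b = x := by
  rw [← Real.rpow_mul hx, one_div_mul_cancel hb, Real.rpow_one]

/-- **Paper Lemma 3.4**: for the univariate scaled problem with information complexity
`n(ε,1) = #{ m ≥ 1 : s₁ λ_m > ε² }` and any `β ≥ 1`, one has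
`λ_n ∈ o(ln^{-2β} n)` as `n → ∞` if and only if `ln n(t^β, 1) ∈ o(1/t)` as `t → 0⁺`
(the complexity being finite for every `t > 0`). -/
theorem stmt8 (lam : ℕ → ℝ) (s₁ : ℝ)
    (hnn : ∀ m, 0 ≤ lam m)
    (hord : ∀ m m' : ℕ, 1 ≤ m → m ≤ m' → lam m' ≤ lam m)
    (hlam2 : 0 < lam 2) (hs : 0 < s₁) (β : ℝ) (hβ : 1 ≤ β) :
    Tendsto (fun m : ℕ => lam m * Real.log m ^ (2 * β)) atTop (nhds 0) ↔
      ((∀ t : ℝ, 0 < t → {m : ℕ | 1 ≤ m ∧ (t ^ β) ^ 2 < s₁ * lam m}.Finite) ∧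
        Tendsto (fun t : ℝ =>
            t * Real.log (max (({m : ℕ | 1 ≤ m ∧ (t ^ β) ^ 2 < s₁ * lam m}.ncard : ℝ)) 1))
          (nhdsWithin 0 (Set.Ioi 0)) (nhds 0)) := by
  have h2β : (0:ℝ) < 2 * β := by linarith
  have h2βne : (2:ℝ) * β ≠ 0 := ne_of_gt h2β
  constructor
  · intro hi
    -- λ_m → 0
    have hlam0 : Tendsto lam atTop (nhds 0) := by
      have hle : ∀ᶠ m : ℕ in atTop, lam m ≤ lam m * Real.log m ^ (2 * β) := by
        filter_upwards [eventually_ge_atTop 3] with m hm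
        have hlog1 : (1:ℝ) ≤ Real.log m := by
          have h3 : (3:ℝ) ≤ (m:ℝ) := by exact_mod_cast hm
          have : Real.exp 1 ≤ (m:ℝ) := by
            have := Real.exp_one_lt_d9
            linarith
          calc (1:ℝ) = Real.log (Real.exp 1) := (Real.log_exp 1).symm
            _ ≤ Real.log m := Real.log_le_log (Real.exp_pos 1) this
        have : (1:ℝ) ≤ Real.log m ^ (2 * β) :=
          Real.one_le_rpow hlog1 h2β.le
        nlinarith [hnn m]
      have hge : ∀ᶠ m : ℕ in atTop, 0 ≤ lam m := Eventually.of_forall hnn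
      exact tendsto_of_tendsto_of_tendsto_of_le_of_le' tendsto_const_nhds hi hge hle
    have hfin : ∀ t : ℝ, 0 < t → {m : ℕ | 1 ≤ m ∧ (t ^ β) ^ 2 < s₁ * lam m}.Finite := by
      intro t ht
      have htp : (0:ℝ) < (t ^ β) ^ 2 := pow_pos (Real.rpow_pos_of_pos ht β) 2
      have : ∀ᶠ m : ℕ in atTop, s₁ * lam m < (t ^ β) ^ 2 := by
        have := (hlam0.const_mul s₁)
        simp only [mul_zero] at this
        exact this.eventually (eventually_lt_nhds htp)
      obtain ⟨M, hM⟩ := this.exists_forall_of_atTop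
      apply Set.Finite.subset (Set.finite_Iio M)
      intro m hm
      by_contra hmem
      simp only [Set.mem_Iio, not_lt] at hmem
      exact absurd (hM m hmem) (not_lt.mpr hm.2.le)
    refine ⟨hfin, ?_⟩
    rw [Metric.tendsto_nhdsWithin_nhds]
    intro ε hε
    -- constant c
    set c := ε ^ (2 * β) / (2 * s₁) with hc
    have hcpos : 0 < c := div_pos (Real.rpow_pos_of_pos hε _) (by linarith)
    obtain ⟨N₀, hN₀⟩ := (Metric.tendsto_atTop.mp hi) c hcpos
    set N := max N₀ 1 with hN
    have hN1 : 1 ≤ N := le_max_right _ _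
    have hlogN : 0 ≤ Real.log N := Real.log_nonneg (by exact_mod_cast hN1)
    refine ⟨min (ε / (Real.log N + 1)) 1, lt_min (div_pos hε (by linarith)) one_pos, ?_⟩
    intro t htmem htd
    have ht : 0 < t := htmem
    rw [Real.dist_eq, sub_zero] at htd ⊢
    have htabs : |t| = t := abs_of_pos ht
    rw [htabs] at htd
    set S := {m : ℕ | 1 ≤ m ∧ (t ^ β) ^ 2 < s₁ * lam m} with hS
    have hSfin := hfin t ht
    rcases Set.eq_empty_or_nonempty S with hSe | hSne
    · rw [hSe]
      simp [hε]
    · set n := S.ncard with hn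
      have hnmem : n ∈ S := by
        refine aux_top_mem S hSfin hSne (fun x hx => hx.1) ?_
        intro x hx y hy1 hyx
        exact ⟨hy1, lt_of_lt_of_le hx.2 (mul_le_mul_of_nonneg_left (hord y x hy1 hyx) hs.le)⟩
      have hn1 : 1 ≤ n := hnmem.1
      have hmax : max ((n:ℝ)) 1 = (n:ℝ) := max_eq_left (by exact_mod_cast hn1)
      rw [hmax]
      have hlognn : 0 ≤ Real.log n := Real.log_nonneg (by exact_mod_cast hn1)
      have habs : |t * Real.log n| = t * Real.log n := abs_of_nonneg (by positivity)
      rw [habs]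
      by_cases hncase : n < N
      · have hlogle : Real.log n ≤ Real.log N :=
          Real.log_le_log (by exact_mod_cast hn1) (by exact_mod_cast hncase.le)
        have htδ : t < ε / (Real.log N + 1) := lt_of_lt_of_le htd (min_le_left _ _)
        calc t * Real.log n ≤ t * (Real.log N + 1) := by nlinarith
          _ < (ε / (Real.log N + 1)) * (Real.log N + 1) := by
              apply mul_lt_mul_of_pos_right htδ; linarith
          _ = ε := by field_simp
      · push_neg at hncase
        have hnN₀ : N₀ ≤ n := le_trans (le_max_left _ _) hncase
        have hlamb : lam n * Real.log n ^ (2 * β) < c := by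
          have := hN₀ n hnN₀
          rw [Real.dist_eq, sub_zero] at this
          calc lam n * Real.log n ^ (2 * β) ≤ |lam n * Real.log n ^ (2 * β)| := le_abs_self _
            _ < c := this
        -- (t log n)^(2β) < ε^(2β)
        have hkey : (t * Real.log n) ^ (2 * β) < ε ^ (2 * β) := by
          rw [Real.mul_rpow ht.le hlognn]
          have h1 : t ^ (2 * β) < s₁ * lam n := by
            rw [← aux_sq_rpow t β ht]; exact hnmem.2
          have h2 : t ^ (2 * β) * Real.log n ^ (2 * β) ≤
              s₁ * lam n * Real.log n ^ (2 * β) := by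
            apply mul_le_mul_of_nonneg_right h1.le (Real.rpow_nonneg hlognn _)
          have h3 : s₁ * lam n * Real.log n ^ (2 * β) < s₁ * c := by
            have := mul_lt_mul_of_pos_left hlamb hs
            nlinarith
          have h4 : s₁ * c < ε ^ (2 * β) := by
            have hεp : 0 < ε ^ (2 * β) := Real.rpow_pos_of_pos hε _
            have hceq : s₁ * c = ε ^ (2 * β) / 2 := by
              rw [hc]; field_simp
            rw [hceq]; linarith
          linarith
        exact aux_rpow_lt _ _ _ hε.le h2β hkey
  · rintro ⟨hfin, hii⟩
    -- λ_m → 0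
    have hlim : ∀ c : ℝ, 0 < c → ∃ M : ℕ, ∀ m ≥ M, lam m ≤ c := by
      intro c hcpos
      set t := (s₁ * c) ^ (1 / (2 * β)) with htdef
      have hsc : 0 < s₁ * c := mul_pos hs hcpos
      have ht : 0 < t := Real.rpow_pos_of_pos hsc _
      have htpow : (t ^ β) ^ 2 = s₁ * c := by
        rw [aux_sq_rpow t β ht, htdef, aux_rpow_inv _ _ hsc.le h2βne]
      have hSfin := hfin t ht
      by_contra hcon
      push_neg at hcon
      -- then for every M there is m ≥ M with lam m > c; by monotonicity all m ≥ 1 have lam m > c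
      have hall : ∀ m : ℕ, 1 ≤ m → c < lam m := by
        intro m hm
        obtain ⟨m', hm', hlt⟩ := hcon m
        exact lt_of_lt_of_le hlt (hord m m' hm hm')
      have hsub : Set.Ici 1 ⊆ {m : ℕ | 1 ≤ m ∧ (t ^ β) ^ 2 < s₁ * lam m} := by
        intro m hm
        refine ⟨hm, ?_⟩
        rw [htpow]
        exact mul_lt_mul_of_pos_left (hall m hm) hs
      exact (Set.Ici_infinite 1) (hSfin.subset hsub)
    rw [Metric.tendsto_atTop]
    intro ε hε
    set δ := (ε * s₁ / 2) ^ (1 / (2 * β)) with hδdef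
    have hεs : 0 < ε * s₁ / 2 := by positivity
    have hδ : 0 < δ := Real.rpow_pos_of_pos hεs _
    obtain ⟨t₀, ht₀, hball⟩ := (Metric.tendsto_nhdsWithin_nhds.mp hii) δ hδ
    -- choose c so that t_m < t₀
    have ht₀pow : 0 < t₀ ^ (2 * β) := Real.rpow_pos_of_pos ht₀ _
    obtain ⟨M, hM⟩ := hlim (t₀ ^ (2 * β) / s₁) (by positivity)
    refine ⟨max M 1, ?_⟩
    intro m hm
    have hm1 : 1 ≤ m := le_trans (le_max_right _ _) hm
    have hmM : M ≤ m := le_trans (le_max_left _ _) hm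
    rw [Real.dist_eq, sub_zero]
    have hlogm : 0 ≤ Real.log m := Real.log_nonneg (by exact_mod_cast hm1)
    have habs : |lam m * Real.log m ^ (2 * β)| = lam m * Real.log m ^ (2 * β) :=
      abs_of_nonneg (mul_nonneg (hnn m) (Real.rpow_nonneg hlogm _))
    rw [habs]
    rcases eq_or_lt_of_le (hnn m) with hlz | hlp
    · rw [← hlz, zero_mul]; exact hε
    · -- t_m
      set t := (s₁ * lam m / 2) ^ (1 / (2 * β)) with htdef
      have hsl : 0 < s₁ * lam m / 2 := by positivity
      have ht : 0 < t := Real.rpow_pos_of_pos hsl _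
      have htpow : t ^ (2 * β) = s₁ * lam m / 2 := aux_rpow_inv _ _ hsl.le h2βne
      have htsq : (t ^ β) ^ 2 = s₁ * lam m / 2 := by
        rw [aux_sq_rpow t β ht]; exact htpow
      have htlt : t < t₀ := by
        apply aux_rpow_lt _ _ _ ht₀.le h2β
        rw [htpow]
        have : lam m ≤ t₀ ^ (2 * β) / s₁ := hM m hmM
        calc s₁ * lam m / 2 ≤ s₁ * (t₀ ^ (2 * β) / s₁) / 2 := by
              apply div_le_div_of_nonneg_right ?_ ?_ <;> first
                | exact mul_le_mul_of_nonneg_left this hs.le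
                | norm_num
          _ = t₀ ^ (2 * β) / 2 := by field_simp
          _ < t₀ ^ (2 * β) := by linarith
      have hmmem : m ∈ {m : ℕ | 1 ≤ m ∧ (t ^ β) ^ 2 < s₁ * lam m} := by
        refine ⟨hm1, ?_⟩
        rw [htsq]
        nlinarith
      have hSfin := hfin t ht
      have hcard := aux_card_ge lam s₁ ((t ^ β) ^ 2) hs.le hord hSfin m hmmem
      set n := {m : ℕ | 1 ≤ m ∧ (t ^ β) ^ 2 < s₁ * lam m}.ncard with hn
      have hn1 : 1 ≤ n := le_trans hm1 hcard
      have hmax : max ((n:ℝ)) 1 = (n:ℝ) := max_eq_left (by exact_mod_cast hn1)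
      have hbound := hball (Set.mem_Ioi.mpr ht) (by rw [Real.dist_eq, sub_zero, abs_of_pos ht]; exact htlt)
      rw [Real.dist_eq, sub_zero, hmax] at hbound
      have hlogn : Real.log m ≤ Real.log n :=
        Real.log_le_log (by exact_mod_cast hm1) (by exact_mod_cast hcard)
      have htlogm : t * Real.log m < δ := by
        calc t * Real.log m ≤ t * Real.log n :=
              mul_le_mul_of_nonneg_left hlogn ht.le
          _ ≤ |t * Real.log n| := le_abs_self _
          _ < δ := hbound
      have hkey : (t * Real.log m) ^ (2 * β) < δ ^ (2 * β) :=
        Real.rpow_lt_rpow (by positivity) htlogm h2β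
      rw [Real.mul_rpow ht.le hlogm, htpow, hδdef, aux_rpow_inv _ _ hεs.le h2βne] at hkey
      -- (s₁ lam m / 2) * (log m)^(2β) < ε s₁ / 2
      have h2s : (0:ℝ) < 2 / s₁ := by positivity
      calc lam m * Real.log m ^ (2 * β)
          = (2 / s₁) * (s₁ * lam m / 2 * Real.log m ^ (2 * β)) := by
            field_simp
        _ < (2 / s₁) * (ε * s₁ / 2) := mul_lt_mul_of_pos_left hkey h2s
        _ = ε := by field_simp
end

section
/- Let s ∈ ℕ, let c : {0,1}^s → ℝ, and let ρ₁, …, ρ_s be reals with ρ_k ≥ 2 for every k. Define h : ℝ^s → ℝ by h(z) = Σ_{i∈{0,1}^s} c_i · Π_{k=1}^s z_k^{i_k}, and let Z = Π_{k=1}^s [0, ρ_k]. Then for every σ ∈ {0,1}^s, sup_{z∈Z} |(D^σ h)(z)| ≤ sup_{z∈Z} |h(z)|, where D^σ denotes the partial derivative ∂^{|σ|}/(∂z₁^{σ₁}⋯∂z_s^{σ_s}). -/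
/-- An `s`-variate polynomial of degree at most one in each variable, given by its
coefficients `c : {0,1}^s → ℝ`: `h(z) = ∑_i c_i z^i`. -/
noncomputable def polyEval {s : ℕ} (c : (Fin s → Bool) → ℝ) (z : Fin s → ℝ) : ℝ :=
  ∑ i : Fin s → Bool, c i * ∏ k : Fin s, if i k then z k else 1

/-- Coefficients of the partial derivative `D^σ h` of the multilinear polynomial with
coefficients `c`: `D^σ (∑ c_i z^i) = ∑_{m : m ∧ σ = 0} c_{m ∨ σ} z^m`. -/
def derivCoef {s : ℕ} (c : (Fin s → Bool) → ℝ) (σ : Fin s → Bool) :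
    (Fin s → Bool) → ℝ :=
  fun m => if ∀ k, σ k = true → m k = false then c (fun k => m k || σ k) else 0

namespace Stmt12Aux

variable {s : ℕ}

/-- indicator of `k` as a Boolean vector -/
def ek (k : Fin s) : Fin s → Bool := fun j => decide (j = k)

lemma continuous_polyEval (c : (Fin s → Bool) → ℝ) : Continuous (polyEval c) := by
  unfold polyEval
  apply continuous_finset_sum
  intro i _
  apply Continuous.mul continuous_const
  apply continuous_finset_prod
  intro k _
  cases h : i k
  · simpa using continuous_const
  · simpa using continuous_apply k

lemma isCompact_Z (ρ : Fin s → ℝ) :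
    IsCompact {z : Fin s → ℝ | ∀ k, z k ∈ Set.Icc 0 (ρ k)} := by
  have : {z : Fin s → ℝ | ∀ k, z k ∈ Set.Icc 0 (ρ k)}
      = Set.pi Set.univ (fun k => Set.Icc 0 (ρ k)) := by
    ext z
    exact ⟨fun h k _ => h k, fun h k => h k (Set.mem_univ k)⟩
  rw [this]
  exact isCompact_univ_pi fun k => isCompact_Icc

lemma bdd (ρ : Fin s → ℝ) (c : (Fin s → Bool) → ℝ) :
    BddAbove ((fun z => |polyEval c z|) '' {z : Fin s → ℝ | ∀ k, z k ∈ Set.Icc 0 (ρ k)}) :=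
  ((isCompact_Z ρ).image ((continuous_polyEval c).abs)).bddAbove

lemma zero_mem (ρ : Fin s → ℝ) (hρ : ∀ k, 2 ≤ ρ k) :
    (0 : Fin s → ℝ) ∈ {z : Fin s → ℝ | ∀ k, z k ∈ Set.Icc 0 (ρ k)} := by
  intro k
  simp only [Pi.zero_apply]
  exact ⟨le_refl 0, by linarith [hρ k]⟩

lemma M_nonneg (ρ : Fin s → ℝ) (hρ : ∀ k, 2 ≤ ρ k) (c : (Fin s → Bool) → ℝ) :
    0 ≤ sSup ((fun z => |polyEval c z|) '' {z : Fin s → ℝ | ∀ k, z k ∈ Set.Icc 0 (ρ k)}) := by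
  have := le_csSup (bdd ρ c) ⟨0, zero_mem ρ hρ, rfl⟩
  exact le_trans (abs_nonneg _) this

lemma update_mem (ρ : Fin s → ℝ) {z : Fin s → ℝ}
    (hz : z ∈ {z : Fin s → ℝ | ∀ k, z k ∈ Set.Icc 0 (ρ k)}) (k : Fin s) {t : ℝ}
    (ht : t ∈ Set.Icc 0 (ρ k)) :
    Function.update z k t ∈ {z : Fin s → ℝ | ∀ k, z k ∈ Set.Icc 0 (ρ k)} := by
  intro j
  by_cases hjk : j = k
  · subst hjk; simpa using ht
  · simpa [Function.update_of_ne hjk] using hz j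

/-- The affine expansion in the `k`-th variable. -/
lemma polyEval_update (c : (Fin s → Bool) → ℝ) (k : Fin s) (w : Fin s → ℝ) (t : ℝ) :
    polyEval c (Function.update w k t)
      = polyEval c (Function.update w k 0) + t * polyEval (derivCoef c (ek k)) w := by
  classical
  unfold polyEval
  rw [Finset.mul_sum]
  have invol : Function.Involutive (fun m : Fin s → Bool => Function.update m k (! m k)) := by
    intro m
    funext j
    by_cases hjk : j = k
    · subst hjk; simp
    · simp [Function.update_of_ne hjk]
  set e : Equiv.Perm (Fin s → Bool) := invol.toPerm _ with he
  rw [← Equiv.sum_comp e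
      (fun m => t * (derivCoef c (ek k) m * ∏ j, (if m j = true then w j else 1))),
    ← Finset.sum_add_distrib]
  apply Finset.sum_congr rfl
  intro i _
  have heval : e i = Function.update i k (! i k) := rfl
  by_cases hik : i k = true
  · -- slope term
    have hkey : ∀ u : ℝ, (∏ j, (if i j = true then Function.update w k u j else 1))
        = u * ∏ j, (if i j = true ∧ j ≠ k then w j else 1) := by
      intro u
      rw [← Finset.mul_prod_erase Finset.univ _ (Finset.mem_univ k),
          ← Finset.mul_prod_erase Finset.univ
            (fun j => if i j = true ∧ j ≠ k then w j else 1) (Finset.mem_univ k)]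
      simp only [hik, if_pos, Function.update_self]
      rw [if_neg (by simp)]
      rw [one_mul]
      congr 1
      apply Finset.prod_congr rfl
      intro j hj
      have hjk : j ≠ k := Finset.ne_of_mem_erase hj
      simp [Function.update_of_ne hjk, hjk]
    have hB : (∏ j, (if i j = true then Function.update w k 0 j else 1)) = 0 := by
      rw [hkey 0, zero_mul]
    have heik : (e i) k = false := by rw [heval]; simp [hik]
    have hco : derivCoef c (ek k) (e i) = c i := by
      unfold derivCoef
      rw [if_pos]
      · congr 1
        funext j
        by_cases hjk : j = k
        · subst hjk; simp [ek, heik, hik]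
        · rw [heval]; simp [ek, hjk, Function.update_of_ne hjk]
      · intro j hj
        have : j = k := by simpa [ek] using hj
        subst this; exact heik
    have hprod : (∏ j, (if (e i) j = true then w j else 1))
        = ∏ j, (if i j = true ∧ j ≠ k then w j else 1) := by
      apply Finset.prod_congr rfl
      intro j _
      by_cases hjk : j = k
      · subst hjk; simp [heik]
      · rw [heval]; simp [Function.update_of_ne hjk, hjk]
    rw [hkey t, hB, hco, hprod]
    ring
  · -- no slope
    have hik' : i k = false := by simpa using hik
    have hA : (∏ j, (if i j = true then Function.update w k t j else 1))
        = ∏ j, (if i j = true then Function.update w k 0 j else 1) := by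
      apply Finset.prod_congr rfl
      intro j _
      by_cases hjk : j = k
      · subst hjk; simp [hik']
      · simp [Function.update_of_ne hjk]
    have heik : (e i) k = true := by rw [heval]; simp [hik']
    have hco : derivCoef c (ek k) (e i) = 0 := by
      unfold derivCoef
      rw [if_neg]
      intro h
      have := h k (by simp [ek])
      rw [heik] at this
      simp at this
    rw [hA, hco]
    ring

/-- Composition: differentiating once more. -/
lemma derivCoef_update (c : (Fin s → Bool) → ℝ) (σ : Fin s → Bool) (k : Fin s)
    (hk : σ k = true) :
    derivCoef (derivCoef c (Function.update σ k false)) (ek k) = derivCoef c σ := by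
  classical
  funext m
  simp only [derivCoef]
  by_cases h1 : ∀ j, σ j = true → m j = false
  · have hmk : m k = false := h1 k hk
    have hd : ∀ j, ek k j = true → m j = false := by
      intro j hj
      have : j = k := by simpa [ek] using hj
      subst this; exact hmk
    rw [if_pos hd, if_pos h1]
    have h2 : ∀ j, Function.update σ k false j = true → (m j || ek k j) = false := by
      intro j hj
      by_cases hjk : j = k
      · subst hjk; simp at hj
      · rw [Function.update_of_ne hjk] at hj
        simp [ek, hjk, h1 j hj]
    rw [if_pos h2]
    congr 1
    funext j
    by_cases hjk : j = k
    · subst hjk; simp [ek, hk]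
    · simp [ek, hjk, Function.update_of_ne hjk]
  · rw [if_neg h1]
    by_cases hd : ∀ j, ek k j = true → m j = false
    · rw [if_pos hd]
      have hmk : m k = false := hd k (by simp [ek])
      rw [if_neg]
      intro h2
      apply h1
      intro j hj
      by_cases hjk : j = k
      · subst hjk; exact hmk
      · have := h2 j (by rw [Function.update_of_ne hjk]; exact hj)
        simpa [ek, hjk] using this
    · rw [if_neg hd]

/-- base case: `derivCoef c ⊥ = c` -/
lemma derivCoef_bot (c : (Fin s → Bool) → ℝ) (σ : Fin s → Bool) (h : ∀ k, σ k = false) :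
    derivCoef c σ = c := by
  funext m
  unfold derivCoef
  rw [if_pos]
  · congr 1; funext j; simp [h j]
  · intro j hj; rw [h j] at hj; simp at hj

/-- One-step estimate. -/
lemma key (ρ : Fin s → ℝ) (hρ : ∀ k, 2 ≤ ρ k) (c' : (Fin s → Bool) → ℝ) (k : Fin s)
    {z : Fin s → ℝ} (hz : z ∈ {z : Fin s → ℝ | ∀ k, z k ∈ Set.Icc 0 (ρ k)}) :
    |polyEval (derivCoef c' (ek k)) z|
      ≤ sSup ((fun z => |polyEval c' z|) '' {z : Fin s → ℝ | ∀ k, z k ∈ Set.Icc 0 (ρ k)}) := by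
  set M := sSup ((fun z => |polyEval c' z|) '' {z : Fin s → ℝ | ∀ k, z k ∈ Set.Icc 0 (ρ k)})
    with hM
  have hM0 : 0 ≤ M := M_nonneg ρ hρ c'
  have hρk : (2 : ℝ) ≤ ρ k := hρ k
  have h1 : Function.update z k (ρ k) ∈ {z : Fin s → ℝ | ∀ k, z k ∈ Set.Icc 0 (ρ k)} :=
    update_mem ρ hz k ⟨by linarith, le_refl _⟩
  have h0 : Function.update z k 0 ∈ {z : Fin s → ℝ | ∀ k, z k ∈ Set.Icc 0 (ρ k)} :=
    update_mem ρ hz k ⟨le_refl _, by linarith⟩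
  have b1 : |polyEval c' (Function.update z k (ρ k))| ≤ M := le_csSup (bdd ρ c') ⟨_, h1, rfl⟩
  have b0 : |polyEval c' (Function.update z k 0)| ≤ M := le_csSup (bdd ρ c') ⟨_, h0, rfl⟩
  have e1 := polyEval_update c' k z (ρ k)
  set D := polyEval (derivCoef c' (ek k)) z with hD
  have habs : ρ k * |D| ≤ 2 * M := by
    have : ρ k * D = polyEval c' (Function.update z k (ρ k))
        - polyEval c' (Function.update z k 0) := by linarith [e1]
    have h2 : |ρ k * D| ≤ 2 * M := by
      rw [this]
      calc |polyEval c' (Function.update z k (ρ k)) - polyEval c' (Function.update z k 0)|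
          ≤ |polyEval c' (Function.update z k (ρ k))| + |polyEval c' (Function.update z k 0)| :=
            abs_sub _ _
        _ ≤ 2 * M := by linarith
    rwa [abs_mul, abs_of_nonneg (by linarith : (0:ℝ) ≤ ρ k)] at h2
  nlinarith [abs_nonneg D]

end Stmt12Aux

open Stmt12Aux

/-- **Paper, Step 3 in the proof of Theorem 4.1** (estimate `(4.8)`): if `h` is a real
polynomial of degree at most one in each of `s` variables and
`Z = ∏_k [0, ρ_k]` is a box with all side lengths `ρ_k ≥ 2`, then
`‖D^σ h‖_{L_∞(Z)} ≤ ‖h‖_{L_∞(Z)}` for every `σ ∈ {0,1}^s`. -/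
theorem stmt12 (s : ℕ) (c : (Fin s → Bool) → ℝ) (ρ : Fin s → ℝ)
    (hρ : ∀ k, 2 ≤ ρ k) (σ : Fin s → Bool) :
    sSup ((fun z => |polyEval (derivCoef c σ) z|) ''
        {z : Fin s → ℝ | ∀ k, z k ∈ Set.Icc 0 (ρ k)}) ≤
      sSup ((fun z => |polyEval c z|) '' {z : Fin s → ℝ | ∀ k, z k ∈ Set.Icc 0 (ρ k)}) := by
  classical
  set Z := {z : Fin s → ℝ | ∀ k, z k ∈ Set.Icc 0 (ρ k)} with hZ
  set M := sSup ((fun z => |polyEval c z|) '' Z) with hM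
  have main : ∀ n (σ : Fin s → Bool),
      (Finset.univ.filter (fun k => σ k = true)).card = n →
      ∀ z ∈ Z, |polyEval (derivCoef c σ) z| ≤ M := by
    intro n
    induction n with
    | zero =>
      intro σ hcard z hz
      have hσ : ∀ k, σ k = false := by
        intro k
        by_contra h
        have hk : σ k = true := by simpa using h
        have : k ∈ Finset.univ.filter (fun k => σ k = true) := by simp [hk]
        rw [Finset.card_eq_zero] at hcard
        simp [hcard] at this
      rw [derivCoef_bot c σ hσ]
      exact le_csSup (bdd ρ c) ⟨z, hz, rfl⟩
    | succ n ih =>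
      intro σ hcard z hz
      have hne : (Finset.univ.filter (fun k => σ k = true)).Nonempty := by
        rw [← Finset.card_pos, hcard]; omega
      obtain ⟨k, hkmem⟩ := hne
      have hk : σ k = true := by simpa using hkmem
      set σ' := Function.update σ k false with hσ'
      have hcard' : (Finset.univ.filter (fun k => σ' k = true)).card = n := by
        have hfe : Finset.univ.filter (fun j => σ' j = true)
            = (Finset.univ.filter (fun j => σ j = true)).erase k := by
          ext j
          by_cases hjk : j = k
          · subst hjk; simp [hσ']
          · simp [hσ', Function.update_of_ne hjk, hjk]
        rw [hfe, Finset.card_erase_of_mem hkmem, hcard]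
        omega
      rw [← derivCoef_update c σ k hk]
      calc |polyEval (derivCoef (derivCoef c σ') (ek k)) z|
          ≤ sSup ((fun z => |polyEval (derivCoef c σ') z|) '' Z) := key ρ hρ _ k hz
        _ ≤ M := by
            apply csSup_le
            · exact ⟨_, ⟨z, hz, rfl⟩⟩
            · rintro y ⟨w, hw, rfl⟩
              exact ih σ' hcard' w hw
  apply csSup_le
  · exact ⟨_, ⟨0, zero_mem ρ hρ, rfl⟩⟩
  · rintro y ⟨w, hw, rfl⟩
    exact main _ σ rfl w hw
end

section
/- Let (μ_m)_{m≥1} be a non-increasing sequence of nonnegative reals with μ₁ > 0, and for s ≥ 1 and k ∈ (ℕ_{≥1})^s set μ_{s,k} = Π_{l=1}^s μ_{k_l}. Then for every V ∈ ℕ₀ and every d ≥ 1, with all sums understood as (possibly infinite) sums of nonnegative terms, Σ_{k∈(ℕ_{≥1})^d, 1 ≤ k₁ ≤ k₂ ≤ … ≤ k_d} μ_{d,k} ≤ μ₁^d · d^V · ( 1 + V + Σ_{L=1}^d μ₁^{−L} · Σ_{j∈(ℕ_{≥1})^L, V+2 ≤ j₁ ≤ j₂ ≤ … ≤ j_L}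 μ_{L,j} ). -/
open scoped ENNReal

namespace Stmt16Aux

abbrev Big (V L : ℕ) := {j : Fin L → ℕ // (∀ i, V + 2 ≤ j i) ∧ Monotone j}
abbrev Dom (d : ℕ) := {k : Fin d → ℕ // (∀ l, 1 ≤ k l) ∧ Monotone k}
abbrev Tgt (V d : ℕ) :=
  ((Fin V → Fin d) × Fin (V + 1)) ⊕ (Σ L : Fin d, (Fin V → Fin d) × Big V (L.1 + 1))

def cnt (d : ℕ) (k : Fin d → ℕ) (v : ℕ) : ℕ :=
  (Finset.univ.filter fun l => k l ≤ v).card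

lemma cnt_le (d : ℕ) (k : Fin d → ℕ) (v : ℕ) : cnt d k v ≤ d := by
  classical
  simpa [cnt] using Finset.card_filter_le (Finset.univ : Finset (Fin d)) _

lemma cnt_mono (d : ℕ) (k : Fin d → ℕ) {v w : ℕ} (h : v ≤ w) : cnt d k v ≤ cnt d k w := by
  classical
  exact Finset.card_le_card (Finset.monotone_filter_right _ fun l _ hl => hl.trans h)

lemma cnt_iff {d : ℕ} {k : Fin d → ℕ} (hk : Monotone k) (v : ℕ) (l : Fin d) :
    k l ≤ v ↔ (l : ℕ) < cnt d k v := by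
  classical
  constructor
  · intro h
    have hsub : Finset.Iic l ⊆ Finset.univ.filter fun l' => k l' ≤ v := fun l' hl' => by
      simp only [Finset.mem_filter, Finset.mem_univ, true_and]
      exact (hk (Finset.mem_Iic.mp hl')).trans h
    have h2 := Finset.card_le_card hsub
    rw [Fin.card_Iic] at h2
    simp only [cnt]
    omega
  · intro h
    by_contra hc
    push_neg at hc
    have hsub : (Finset.univ.filter fun l' => k l' ≤ v) ⊆ Finset.Iio l := fun l' hl' => by
      simp only [Finset.mem_filter, Finset.mem_univ, true_and] at hl'
      simp only [Finset.mem_Iio]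
      by_contra h2
      push_neg at h2
      exact absurd ((hk h2).trans hl') (not_le.mpr hc)
    have h2 := Finset.card_le_card hsub
    rw [Fin.card_Iio] at h2
    simp only [cnt] at h
    omega


def phi (V d : ℕ) (hd : 0 < d) (x : Dom d) : Tgt V d :=
  if h : cnt d x.1 (V + 1) = d then
    Sum.inl
      (fun i => ⟨min (cnt d x.1 (i.1 + 1)) (d - 1), by omega⟩,
       ⟨x.1 ⟨d - 1, by omega⟩ - 1, by
          have h1 := (cnt_iff x.2.2 (V + 1) ⟨d - 1, by omega⟩).mpr (by simp; omega)
          omega⟩)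
  else
    Sum.inr
      ⟨⟨d - cnt d x.1 (V + 1) - 1, by have := cnt_le d x.1 (V + 1); omega⟩,
       fun i => ⟨cnt d x.1 (i.1 + 1), by
          have h1 := cnt_mono d x.1 (show i.1 + 1 ≤ V + 1 by omega)
          have h2 := cnt_le d x.1 (V + 1)
          omega⟩,
       ⟨fun i => x.1 ⟨cnt d x.1 (V + 1) + i.1, by
            have h1 : i.1 < d - cnt d x.1 (V + 1) - 1 + 1 := i.2
            have h2 := cnt_le d x.1 (V + 1)
            omega⟩,
        by
          constructor
          · intro i
            by_contra hcon
            push_neg at hcon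
            have h2 := (cnt_iff x.2.2 (V + 1)
              ⟨cnt d x.1 (V + 1) + i.1, by
                have h1 : i.1 < d - cnt d x.1 (V + 1) - 1 + 1 := i.2
                have := cnt_le d x.1 (V + 1); omega⟩).mp
              (by omega)
            simp at h2
          · intro a b hab
            exact x.2.2 (Fin.mk_le_mk.mpr (Nat.add_le_add_left (Fin.le_def.mp hab) _))⟩⟩

noncomputable def g (μ : ℕ → ℝ) (V d : ℕ) : Tgt V d → ℝ≥0∞
  | Sum.inl _ => ENNReal.ofReal (μ 1) ^ d
  | Sum.inr s => ENNReal.ofReal (μ 1) ^ (d - (s.1.1 + 1)) * ∏ i, ENNReal.ofReal (μ (s.2.2.1 i))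

lemma weight_le (μ : ℕ → ℝ) (hord : ∀ m m' : ℕ, 1 ≤ m → m ≤ m' → μ m' ≤ μ m)
    (V d : ℕ) (hd : 0 < d) (x : Dom d) :
    (∏ l, ENNReal.ofReal (μ (x.1 l))) ≤ g μ V d (phi V d hd x) := by
  classical
  unfold phi
  split_ifs with h
  · show _ ≤ ENNReal.ofReal (μ 1) ^ d
    calc (∏ l, ENNReal.ofReal (μ (x.1 l)))
        ≤ ∏ _l : Fin d, ENNReal.ofReal (μ 1) :=
          Finset.prod_le_prod' fun l _ =>
            ENNReal.ofReal_le_ofReal (hord 1 _ le_rfl (x.2.1 l))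
      _ = ENNReal.ofReal (μ 1) ^ d := by simp
  · set m := cnt d x.1 (V + 1) with hm
    have hmd : m < d := lt_of_le_of_ne (cnt_le d x.1 (V + 1)) h
    show _ ≤ ENNReal.ofReal (μ 1) ^ (d - (d - m - 1 + 1)) *
        ∏ i : Fin (d - m - 1 + 1), ENNReal.ofReal (μ (x.1 ⟨m + i.1, _⟩))
    have he : d - (d - m - 1 + 1) = m := by omega
    rw [he]
    rw [← Finset.prod_filter_mul_prod_filter_not Finset.univ (fun l => x.1 l ≤ V + 1)]
    have h1 : (∏ l ∈ Finset.univ.filter (fun l => x.1 l ≤ V + 1),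
        ENNReal.ofReal (μ (x.1 l))) ≤ ENNReal.ofReal (μ 1) ^ m := by
      calc (∏ l ∈ Finset.univ.filter (fun l => x.1 l ≤ V + 1), ENNReal.ofReal (μ (x.1 l)))
          ≤ ∏ _l ∈ Finset.univ.filter (fun l => x.1 l ≤ V + 1), ENNReal.ofReal (μ 1) :=
            Finset.prod_le_prod' fun l _ =>
              ENNReal.ofReal_le_ofReal (hord 1 _ le_rfl (x.2.1 l))
        _ = ENNReal.ofReal (μ 1) ^ m := by rw [Finset.prod_const]; rfl
    have h2 : (∏ l ∈ Finset.univ.filter (fun l => ¬ x.1 l ≤ V + 1),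
        ENNReal.ofReal (μ (x.1 l))) =
        ∏ i : Fin (d - m - 1 + 1), ENNReal.ofReal (μ (x.1 ⟨m + i.1, by omega⟩)) := by
      refine Finset.prod_nbij' (fun l => (⟨l.1 - m, by omega⟩ : Fin (d - m - 1 + 1)))
        (fun i => (⟨m + i.1, by omega⟩ : Fin d)) ?_ ?_ ?_ ?_ ?_
      · intro l _; exact Finset.mem_univ _
      · intro i _
        simp only [Finset.mem_filter, Finset.mem_univ, true_and]
        intro hcon
        have h2 := (cnt_iff x.2.2 (V + 1) ⟨m + i.1, by omega⟩).mp hcon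
        have h3 : m + i.1 < cnt d x.1 (V + 1) := h2
        omega
      · intro l hl
        simp only [Finset.mem_filter, Finset.mem_univ, true_and] at hl
        have : m ≤ l.1 := by
          by_contra hcon
          push_neg at hcon
          exact hl ((cnt_iff x.2.2 (V + 1) l).mpr hcon)
        exact Fin.ext (by simp; omega)
      · intro i _
        exact Fin.ext (by simp)
      · intro l hl
        simp only [Finset.mem_filter, Finset.mem_univ, true_and] at hl
        have : m ≤ l.1 := by
          by_contra hcon
          push_neg at hcon
          exact hl ((cnt_iff x.2.2 (V + 1) l).mpr hcon)
        have harg : (⟨m + (l.1 - m), by omega⟩ : Fin d) = l := Fin.ext (by simp; omega)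
        show ENNReal.ofReal (μ (x.1 l)) =
          ENNReal.ofReal (μ (x.1 ⟨m + (l.1 - m), by omega⟩))
        rw [harg]
    rw [h2]
    exact mul_le_mul_left h1 _


-- helper: if the last value is ≤ v then cnt = d
lemma cnt_eq_d {d : ℕ} {k : Fin d → ℕ} (hk : Monotone k) (hd : 0 < d) {v : ℕ}
    (h : k ⟨d - 1, by omega⟩ ≤ v) : cnt d k v = d := by
  classical
  have hall : ∀ l : Fin d, k l ≤ v := fun l =>
    (hk (show l ≤ ⟨d - 1, by omega⟩ from Fin.le_def.mpr (by have := l.2; simp; omega))).trans h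
  simp only [cnt]
  rw [Finset.filter_true_of_mem fun l _ => hall l, Finset.card_univ, Fintype.card_fin]

set_option maxHeartbeats 2000000 in
lemma phi_inj (V d : ℕ) (hd : 0 < d) : Function.Injective (phi V d hd) := by
  classical
  intro x y h
  unfold phi at h
  by_cases hx : cnt d x.1 (V + 1) = d <;> by_cases hy : cnt d y.1 (V + 1) = d
  · rw [dif_pos hx, dif_pos hy, Sum.inl.injEq, Prod.mk.injEq] at h
    obtain ⟨hc, ht⟩ := h
    have htv : x.1 ⟨d - 1, by omega⟩ = y.1 ⟨d - 1, by omega⟩ := by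
      have h1 := congrArg Fin.val ht
      simp only at h1
      have hx1 := x.2.1 ⟨d - 1, by omega⟩
      have hy1 := y.2.1 ⟨d - 1, by omega⟩
      omega
    have hcnt : ∀ v, 1 ≤ v → v ≤ V + 1 → cnt d x.1 v = cnt d y.1 v := by
      intro v h1v h2v
      rcases eq_or_lt_of_le h2v with rfl | hvV
      · rw [hx, hy]
      · have hi := congrArg Fin.val (congrFun hc ⟨v - 1, by omega⟩)
        simp only at hi
        have hv1 : v - 1 + 1 = v := by omega
        rw [hv1] at hi
        by_cases hlast : x.1 ⟨d - 1, by omega⟩ ≤ v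
        · rw [cnt_eq_d x.2.2 hd hlast, cnt_eq_d y.2.2 hd (htv ▸ hlast)]
        · have hxlt : cnt d x.1 v < d := by
            rcases lt_or_eq_of_le (cnt_le d x.1 v) with h' | h'
            · exact h'
            · exact absurd ((cnt_iff x.2.2 v ⟨d - 1, by omega⟩).mpr (by simp; omega)) hlast
          have hylt : cnt d y.1 v < d := by
            rcases lt_or_eq_of_le (cnt_le d y.1 v) with h' | h'
            · exact h'
            · have hky : y.1 ⟨d - 1, by omega⟩ ≤ v :=
                (cnt_iff y.2.2 v ⟨d - 1, by omega⟩).mpr (by simp; omega)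
              rw [← htv] at hky
              exact absurd hky hlast
          rw [min_eq_left (by omega), min_eq_left (by omega)] at hi
          exact hi
    refine Subtype.ext (funext fun l => ?_)
    have hbx : x.1 l ≤ V + 1 := (cnt_iff x.2.2 _ l).mpr (by rw [hx]; exact l.2)
    have hby : y.1 l ≤ V + 1 := (cnt_iff y.2.2 _ l).mpr (by rw [hy]; exact l.2)
    have h1 : x.1 l ≤ y.1 l := by
      have h2 := (cnt_iff y.2.2 (y.1 l) l).mp le_rfl
      rw [← hcnt _ (y.2.1 l) hby] at h2
      exact (cnt_iff x.2.2 (y.1 l) l).mpr h2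
    have h2 : y.1 l ≤ x.1 l := by
      have h3 := (cnt_iff x.2.2 (x.1 l) l).mp le_rfl
      rw [hcnt _ (x.2.1 l) hbx] at h3
      exact (cnt_iff y.2.2 (x.1 l) l).mpr h3
    omega
  · rw [dif_pos hx, dif_neg hy] at h; exact (Sum.inl_ne_inr h).elim
  · rw [dif_neg hx, dif_pos hy] at h; exact (Sum.inr_ne_inl h).elim
  · rw [dif_neg hx, dif_neg hy, Sum.inr.injEq] at h
    set mx := cnt d x.1 (V + 1) with hmx
    set my := cnt d y.1 (V + 1) with hmy
    have hmxd : mx < d := lt_of_le_of_ne (cnt_le d x.1 (V + 1)) hx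
    have hmyd : my < d := lt_of_le_of_ne (cnt_le d y.1 (V + 1)) hy
    have hL : d - mx - 1 = d - my - 1 := by
      have := congrArg (fun s : (Σ L : Fin d, (Fin V → Fin d) × Big V (L.1 + 1)) => s.1.1) h
      simpa using this
    have hm : mx = my := by omega
    have hc := congrArg (fun s : (Σ L : Fin d, (Fin V → Fin d) × Big V (L.1 + 1)) => s.2.1) h
    simp only at hc
    have hj := congrArg (fun s : (Σ L : Fin d, (Fin V → Fin d) × Big V (L.1 + 1)) =>
        fun n : ℕ => if hn : n < s.1.1 + 1 then (s.2.2.1 ⟨n, hn⟩ : ℕ) else 0) h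
    simp only at hj
    have hcnt : ∀ v, 1 ≤ v → v ≤ V + 1 → cnt d x.1 v = cnt d y.1 v := by
      intro v h1v h2v
      rcases eq_or_lt_of_le h2v with rfl | hvV
      · exact hm
      · have hi := congrArg Fin.val (congrFun hc ⟨v - 1, by omega⟩)
        simp only at hi
        have hv1 : v - 1 + 1 = v := by omega
        rwa [hv1] at hi
    refine Subtype.ext (funext fun l => ?_)
    by_cases hl : (l : ℕ) < mx
    · have hbx : x.1 l ≤ V + 1 := (cnt_iff x.2.2 _ l).mpr hl
      have hby : y.1 l ≤ V + 1 := (cnt_iff y.2.2 _ l).mpr (by omega)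
      have h1 : x.1 l ≤ y.1 l := by
        have h2 := (cnt_iff y.2.2 (y.1 l) l).mp le_rfl
        rw [← hcnt _ (y.2.1 l) hby] at h2
        exact (cnt_iff x.2.2 (y.1 l) l).mpr h2
      have h2 : y.1 l ≤ x.1 l := by
        have h3 := (cnt_iff x.2.2 (x.1 l) l).mp le_rfl
        rw [hcnt _ (x.2.1 l) hbx] at h3
        exact (cnt_iff y.2.2 (x.1 l) l).mpr h3
      omega
    · have h2 := congrFun hj (l.1 - mx)
      rw [dif_pos (show l.1 - mx < d - mx - 1 + 1 by have := l.2; omega),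
          dif_pos (show l.1 - mx < d - my - 1 + 1 by have := l.2; omega)] at h2
      have ex : (⟨mx + (l.1 - mx), by have := l.2; omega⟩ : Fin d) = l :=
        Fin.ext (by simp; omega)
      have ey : (⟨my + (l.1 - mx), by have := l.2; omega⟩ : Fin d) = l :=
        Fin.ext (by simp; omega)
      calc x.1 l = x.1 ⟨mx + (l.1 - mx), by have := l.2; omega⟩ := by rw [ex]
        _ = y.1 ⟨my + (l.1 - mx), by have := l.2; omega⟩ := h2
        _ = y.1 l := by rw [ey]


lemma tsum_sumtype {α β : Type} (f : α ⊕ β → ℝ≥0∞) :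
    ∑' x, f x = (∑' a, f (Sum.inl a)) + ∑' b, f (Sum.inr b) := by
  calc ∑' x : α ⊕ β, f x
      = ∑' s : Σ b : Bool, cond b β α, f ((Equiv.sumEquivSigmaBool α β).symm s) :=
        ((Equiv.sumEquivSigmaBool α β).symm.tsum_eq f).symm
    _ = ∑' b : Bool, ∑' x : cond b β α, f ((Equiv.sumEquivSigmaBool α β).symm ⟨b, x⟩) :=
        ENNReal.tsum_sigma' _
    _ = (∑' a, f (Sum.inl a)) + ∑' b, f (Sum.inr b) := by
        rw [tsum_fintype, Fintype.sum_bool]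
        rw [add_comm]
        rfl


end Stmt16Aux

open Stmt16Aux

/-- **Paper Lemma 5.4**: for a non-increasing sequence `μ` of nonnegative reals with
`μ₁ > 0` and products `μ_{s,k} = ∏_l μ_{k_l}`, one has for every `V ∈ ℕ₀` and `d ≥ 1`
(all sums in `[0,∞]`):
`∑_{1 ≤ k₁ ≤ … ≤ k_d} μ_{d,k}
  ≤ μ₁^d d^V (1 + V + ∑_{L=1}^d μ₁^{-L} ∑_{V+2 ≤ j₁ ≤ … ≤ j_L} μ_{L,j})`. -/
theorem stmt16 (μ : ℕ → ℝ)
    (hnn : ∀ m, 0 ≤ μ m)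
    (hord : ∀ m m' : ℕ, 1 ≤ m → m ≤ m' → μ m' ≤ μ m)
    (hpos : 0 < μ 1)
    (V d : ℕ) (hd : 1 ≤ d) :
    (∑' k : {k : Fin d → ℕ // (∀ l, 1 ≤ k l) ∧ Monotone k},
        ∏ l, ENNReal.ofReal (μ (k.1 l))) ≤
      ENNReal.ofReal (μ 1 ^ d * (d : ℝ) ^ V) *
        ((1 + (V : ℝ≥0∞)) +
          ∑ L ∈ Finset.Icc 1 d, (ENNReal.ofReal (μ 1))⁻¹ ^ L *
            ∑' j : {j : Fin L → ℕ // (∀ i, V + 2 ≤ j i) ∧ Monotone j},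
              ∏ i, ENNReal.ofReal (μ (j.1 i))) := by
  classical
  have hd0 : 0 < d := hd
  set x0 : ℝ≥0∞ := ENNReal.ofReal (μ 1) with hx0def
  set D : ℝ≥0∞ := (d : ℝ≥0∞) ^ V with hDdef
  set S : ℕ → ℝ≥0∞ := fun L => ∑' j : Big V L, ∏ i, ENNReal.ofReal (μ (j.1 i)) with hSdef
  have hx0 : x0 ≠ 0 := (ENNReal.ofReal_pos.mpr hpos).ne'
  have hx0top : x0 ≠ ⊤ := ENNReal.ofReal_ne_top
  have key : ∀ L, L ≤ d → x0 ^ d * x0⁻¹ ^ L = x0 ^ (d - L) := by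
    intro L hL
    have hsplit : x0 ^ d = x0 ^ (d - L) * x0 ^ L := by
      rw [← pow_add, Nat.sub_add_cancel hL]
    rw [hsplit, mul_assoc, ← mul_pow, ENNReal.mul_inv_cancel hx0 hx0top, one_pow, mul_one]
  -- step 1
  have step1 : (∑' k : Dom d, ∏ l, ENNReal.ofReal (μ (k.1 l))) ≤ ∑' y : Tgt V d, g μ V d y :=
    (ENNReal.tsum_le_tsum fun x => weight_le μ hord V d hd0 x).trans
      (ENNReal.tsum_comp_le_tsum_of_injective (phi_inj V d hd0) _)
  refine step1.trans (le_of_eq ?_)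
  -- left part
  have hleft : (∑' _a : (Fin V → Fin d) × Fin (V + 1), (x0 ^ d : ℝ≥0∞))
      = D * (1 + (V : ℝ≥0∞)) * x0 ^ d := by
    rw [tsum_fintype, Finset.sum_const, Finset.card_univ, Fintype.card_prod,
      Fintype.card_fun, Fintype.card_fin, Fintype.card_fin, nsmul_eq_mul]
    simp only [Fintype.card_fin]
    push_cast
    ring
  -- right part
  have hinner : ∀ L : Fin d,
      (∑' p : (Fin V → Fin d) × Big V (L.1 + 1),
        x0 ^ (d - (L.1 + 1)) * ∏ i, ENNReal.ofReal (μ (p.2.1 i)))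
      = D * (x0 ^ (d - (L.1 + 1)) * S (L.1 + 1)) := by
    intro L
    rw [ENNReal.tsum_prod']
    have : ∀ c : Fin V → Fin d,
        (∑' j : Big V (L.1 + 1), x0 ^ (d - (L.1 + 1)) * ∏ i, ENNReal.ofReal (μ (j.1 i)))
        = x0 ^ (d - (L.1 + 1)) * S (L.1 + 1) := fun c => ENNReal.tsum_mul_left
    rw [tsum_congr this, tsum_fintype, Finset.sum_const, Finset.card_univ,
      Fintype.card_fun, Fintype.card_fin, Fintype.card_fin, nsmul_eq_mul]
    push_cast
    ring
  have hright : (∑' s : Σ L : Fin d, (Fin V → Fin d) × Big V (L.1 + 1), g μ V d (Sum.inr s))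
      = ∑ L ∈ Finset.Icc 1 d, D * (x0 ^ (d - L) * S L) := by
    rw [ENNReal.tsum_sigma']
    have h1 : ∀ L : Fin d,
        (∑' p : (Fin V → Fin d) × Big V (L.1 + 1), g μ V d (Sum.inr ⟨L, p⟩))
        = D * (x0 ^ (d - (L.1 + 1)) * S (L.1 + 1)) := fun L => hinner L
    rw [tsum_congr h1, tsum_fintype]
    refine Finset.sum_nbij' (fun L : Fin d => L.1 + 1)
      (fun a => (⟨min (a - 1) (d - 1), by omega⟩ : Fin d)) ?_ ?_ ?_ ?_ ?_
    · intro L _; simp [Finset.mem_Icc]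
    · intro a _; exact Finset.mem_univ _
    · intro L _; exact Fin.ext (by simp; omega)
    · intro a ha; simp only [Finset.mem_Icc] at ha; simp; omega
    · intro L _; rfl
  calc ∑' y : Tgt V d, g μ V d y
      = (∑' a : (Fin V → Fin d) × Fin (V + 1), g μ V d (Sum.inl a)) +
        ∑' s : Σ L : Fin d, (Fin V → Fin d) × Big V (L.1 + 1), g μ V d (Sum.inr s) :=
        tsum_sumtype _
    _ = D * (1 + (V : ℝ≥0∞)) * x0 ^ d + ∑ L ∈ Finset.Icc 1 d, D * (x0 ^ (d - L) * S L) := by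
        rw [← hright, ← hleft]; rfl
    _ = ENNReal.ofReal (μ 1 ^ d * (d : ℝ) ^ V) *
        ((1 + (V : ℝ≥0∞)) + ∑ L ∈ Finset.Icc 1 d, x0⁻¹ ^ L * S L) := by
        have hC : ENNReal.ofReal (μ 1 ^ d * (d : ℝ) ^ V) = x0 ^ d * D := by
          rw [ENNReal.ofReal_mul (by positivity), ENNReal.ofReal_pow (hnn 1),
            ← hx0def, ENNReal.ofReal_pow (by positivity), ENNReal.ofReal_natCast, ← hDdef]
        rw [hC]
        conv_rhs => rw [mul_add, Finset.mul_sum]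
        congr 1
        · ring
        · refine Finset.sum_congr rfl fun L hL => ?_
          simp only [Finset.mem_Icc] at hL
          refine (calc x0 ^ d * D * (x0⁻¹ ^ L * S L)
              = D * ((x0 ^ d * x0⁻¹ ^ L) * S L) := by ring
            _ = D * (x0 ^ (d - L) * S L) := by rw [key L hL.2]).symm
end

section
/- Let λ = (λ_m)_{m≥1} be a non-increasing sequence of nonnegative reals with λ₂ > 0. For each d ≥ 2 fix a nonempty subset I_d = {i₁ < i₂ < … < i_{#I_d}} ⊆ {1,…,d}, and let ∇_d be either the set of k ∈ (ℕ_{≥1})^d with k_{i₁} ≤ k_{i₂} ≤ … ≤ k_{i_{#I_d}} (symmetric case) or the set of k ∈ (ℕ_{≥1})^d with k_{i₁} < k_{i₂} < … < k_{i_{#I_d}} (antisymmetric case); set ∇₁ = ℕ_{≥1}. Assume λ_{d,1} := sup_{k∈∇_d} Π_{l=1}^d λ_{k_l} > 0 for all d and define n(ε,d) = #{ k ∈ ∇_d : Π_{l=1}^d λ_{k_l} > ε² }. If there exist constants C, p > 0 and q ≥ 0 such that n(ε,d) ≤ C·ε^{−p}·d^q for all d ≥ 1 and ε ∈ (0,1],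 then Σ_{m=1}^∞ λ_m^τ < ∞ for every τ > p/2, and for every such τ and every d ≥ 1, λ_{d,1}^{−τ} · Σ_{k∈∇_d} ( Π_{l=1}^d λ_{k_l} )^τ ≤ (1+C)·d^q + C^{2τ/p} · ζ(2τ/p) · ( d^{2q/p} / λ_{d,1} )^τ. -/
open scoped ENNReal
open MeasureTheory Set

section Helpers

variable {α : Type*} [MeasurableSpace α] [MeasurableSingletonClass α]

lemma count_eq_encard' (S : Set α) : Measure.count S = S.encard := by
  rcases S.finite_or_infinite with h | h
  · rw [Measure.count_apply_finite S h, h.encard_eq_coe_toFinset_card]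
    simp
  · rw [Measure.count_apply_infinite h, Set.encard_eq_top h]
    simp

lemma count_le_floor' {S : Set α} {x : ℝ} (hx : 0 ≤ x)
    (h : Measure.count S ≤ ENNReal.ofReal x) :
    Measure.count S ≤ (⌊x⌋₊ : ℝ≥0∞) := by
  have hfin : S.Finite := by
    by_contra hinf
    rw [Measure.count_apply_infinite hinf] at h
    exact (h.trans_lt ENNReal.ofReal_lt_top).ne rfl
  rw [Measure.count_apply_finite S hfin] at h ⊢
  have h2 : ((hfin.toFinset.card : ℝ)) ≤ x := by
    rw [← ENNReal.ofReal_natCast] at h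
    exact (ENNReal.ofReal_le_ofReal_iff hx).mp h
  exact_mod_cast Nat.le_floor h2

end Helpers

lemma zsummable' {s : ℝ} (hs : 1 < s) :
    Summable (fun n : ℕ => ((n : ℝ) + 1) ^ (-s)) := by
  have h : Summable (fun n : ℕ => (n : ℝ) ^ (-s)) :=
    Real.summable_nat_rpow.mpr (by linarith)
  have h2 := (summable_nat_add_iff 1).mpr h
  refine h2.congr fun n => ?_
  push_cast
  ring_nf

section Key

variable {α : Type*} [Countable α] [MeasurableSpace α] [MeasurableSingletonClass α]

lemma key_bound' (w : α → ℝ) (Λ A σ τ : ℝ)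
    (hw0 : ∀ a, 0 ≤ w a) (hwΛ : ∀ a, w a ≤ Λ) (hΛ : 0 < Λ) (hA : 0 < A)
    (hσ : 0 < σ) (hστ : σ < τ)
    (hN : ∀ u : ℝ, 0 < u → u ≤ 1 →
      Measure.count {a | u < w a} ≤ ENNReal.ofReal (A * u ^ (-σ))) :
    ∑' a, ENNReal.ofReal (w a ^ τ) ≤
      ENNReal.ofReal (A * Λ ^ τ) +
        ENNReal.ofReal (A ^ (τ / σ)) *
          ∑' n : ℕ, ENNReal.ofReal (((n : ℝ) + 1) ^ (-(τ / σ))) := by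
  have hτ : 0 < τ := hσ.trans hστ
  set b : ℕ → ℝ := fun j => if ((j : ℝ) + 1) ≤ A then Λ else (A / ((j : ℝ) + 1)) ^ σ⁻¹
    with hb
  have hb0 : ∀ j, 0 ≤ b j := by
    intro j
    simp only [hb]
    split
    · exact hΛ.le
    · exact Real.rpow_nonneg (by positivity) _
  -- layer cake on both sides
  have lcw : ∑' a, ENNReal.ofReal (w a ^ τ) =
      ENNReal.ofReal τ *
        ∫⁻ t in Ioi (0:ℝ), Measure.count {a | t < w a} * ENNReal.ofReal (t ^ (τ - 1)) := by
    rw [← lintegral_count]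
    exact lintegral_rpow_eq_lintegral_meas_lt_mul Measure.count
      (Filter.Eventually.of_forall hw0) (measurable_of_countable w).aemeasurable hτ
  have lcb : ∑' j : ℕ, ENNReal.ofReal (b j ^ τ) =
      ENNReal.ofReal τ *
        ∫⁻ t in Ioi (0:ℝ), Measure.count {j | t < b j} * ENNReal.ofReal (t ^ (τ - 1)) := by
    rw [← lintegral_count]
    exact lintegral_rpow_eq_lintegral_meas_lt_mul Measure.count
      (Filter.Eventually.of_forall hb0) (measurable_of_countable b).aemeasurable hτ
  -- exceptional set
  set E : Set ℝ := Set.range (fun n : ℕ => (A / (n : ℝ)) ^ σ⁻¹) with hE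
  have hEc : E.Countable := Set.countable_range _
  have hEae : ∀ᵐ t ∂(volume.restrict (Ioi (0:ℝ))), t ∉ E :=
    ae_mono Measure.restrict_le_self
      (measure_eq_zero_iff_ae_notMem.mp (hEc.measure_zero volume))
  -- pointwise comparison of counting functions
  have hcount : ∀ t : ℝ, 0 < t → t ∉ E →
      Measure.count {a | t < w a} ≤ Measure.count {j : ℕ | t < b j} := by
    intro t ht htE
    have hts' : t ^ (-σ) * t ^ σ = 1 := by
      rw [← Real.rpow_add ht]; simp
    rcases le_or_gt Λ t with hcase | hcase
    · have : {a | t < w a} = (∅ : Set α) := by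
        ext a; simp only [mem_setOf_eq, mem_empty_iff_false, iff_false, not_lt]
        exact (hwΛ a).trans hcase
      simp [this]
    rcases le_or_gt 1 t with h1 | h1
    · -- 1 ≤ t < Λ
      have step : Measure.count {a | t < w a} ≤ ENNReal.ofReal A := by
        have hsub : {a | t < w a} ⊆ {a | (1:ℝ) < w a} := fun a ha => lt_of_le_of_lt h1 ha
        calc Measure.count {a | t < w a} ≤ Measure.count {a | (1:ℝ) < w a} :=
              measure_mono hsub
          _ ≤ _ := by simpa using hN 1 one_pos le_rfl
      have step2 := count_le_floor' hA.le step
      refine step2.trans ?_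
      have sub : ((Finset.range ⌊A⌋₊ : Finset ℕ) : Set ℕ) ⊆ {j | t < b j} := by
        intro j hj
        simp only [Finset.coe_range, mem_Iio] at hj
        have hjA : ((j : ℝ) + 1) ≤ A := by
          have h2 : ((j + 1 : ℕ) : ℝ) ≤ (⌊A⌋₊ : ℝ) := Nat.cast_le.mpr hj
          have h3 : ((⌊A⌋₊ : ℝ)) ≤ A := Nat.floor_le hA.le
          push_cast at h2
          linarith
        simp only [mem_setOf_eq, hb, if_pos hjA]
        exact hcase
      calc (⌊A⌋₊ : ℝ≥0∞) = Measure.count ((Finset.range ⌊A⌋₊ : Finset ℕ) : Set ℕ) := by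
            rw [Measure.count_apply_finset, Finset.card_range]
        _ ≤ _ := measure_mono sub
    · -- 0 < t < 1
      set x := A * t ^ (-σ) with hx
      have hx0 : 0 < x := by positivity
      have step2 := count_le_floor' hx0.le (hN t ht h1.le)
      refine step2.trans ?_
      have sub : ((Finset.range ⌊x⌋₊ : Finset ℕ) : Set ℕ) ⊆ {j | t < b j} := by
        intro j hj
        simp only [Finset.coe_range, mem_Iio] at hj
        have hj1 : (0:ℝ) < (j:ℝ) + 1 := by positivity
        have hjx : ((j : ℝ) + 1) ≤ x := by
          have h2 : ((j + 1 : ℕ) : ℝ) ≤ (⌊x⌋₊ : ℝ) := Nat.cast_le.mpr hj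
          have h3 : ((⌊x⌋₊ : ℝ)) ≤ x := Nat.floor_le hx0.le
          push_cast at h2
          linarith
        have hjxne : ((j : ℝ) + 1) ≠ x := by
          intro hEq
          apply htE
          refine ⟨j + 1, ?_⟩
          have hmul : ((j:ℝ) + 1) * t ^ σ = A := by
            have h5 := congrArg (fun y => y * t ^ σ) hEq
            simp only [hx] at h5
            rw [mul_assoc, hts', mul_one] at h5
            exact h5
          have htσ : A / ((j:ℝ)+1) = t ^ σ := by
            field_simp [← hmul, mul_comm]
            exact hmul.symm
          push_cast
          rw [htσ, ← Real.rpow_mul ht.le, mul_inv_cancel₀ hσ.ne', Real.rpow_one]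
        have hjxlt : ((j : ℝ) + 1) < x := lt_of_le_of_ne hjx hjxne
        simp only [mem_setOf_eq, hb]
        split
        · exact hcase
        · have hAt : A * t ^ (-σ) * t ^ σ = A := by rw [mul_assoc, hts', mul_one]
          have hlt2 : ((j:ℝ)+1) * t ^ σ < A := by
            calc ((j:ℝ)+1) * t ^ σ < (A * t ^ (-σ)) * t ^ σ :=
                  mul_lt_mul_of_pos_right (by rw [← hx]; exact hjxlt)
                    (Real.rpow_pos_of_pos ht σ)
              _ = A := hAt
          have htσlt : t ^ σ < A / ((j:ℝ) + 1) := by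
            rw [lt_div_iff₀ hj1]
            linarith [hlt2, mul_comm (t ^ σ) ((j:ℝ)+1)]
          calc t = (t ^ σ) ^ σ⁻¹ := by
                rw [← Real.rpow_mul ht.le, mul_inv_cancel₀ hσ.ne', Real.rpow_one]
            _ < (A / ((j:ℝ)+1)) ^ σ⁻¹ :=
                Real.rpow_lt_rpow (Real.rpow_nonneg ht.le σ) htσlt (by positivity)
      calc (⌊x⌋₊ : ℝ≥0∞) = Measure.count ((Finset.range ⌊x⌋₊ : Finset ℕ) : Set ℕ) := by
            rw [Measure.count_apply_finset, Finset.card_range]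
        _ ≤ _ := measure_mono sub
  -- assemble
  have hsum2 : ∀ j : ℕ, ¬ ((j:ℝ)+1) ≤ A →
      ((A / ((j : ℝ) + 1)) ^ σ⁻¹) ^ τ = A ^ (τ/σ) * ((j:ℝ)+1) ^ (-(τ/σ)) := by
    intro j hj
    have hj1 : (0:ℝ) < (j:ℝ) + 1 := by positivity
    have hd : (0:ℝ) ≤ A / ((j:ℝ)+1) := by positivity
    rw [← Real.rpow_mul hd]
    have he : σ⁻¹ * τ = τ / σ := by rw [div_eq_mul_inv, mul_comm]
    rw [he, Real.div_rpow hA.le hj1.le, Real.rpow_neg hj1.le, div_eq_mul_inv]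
  calc ∑' a, ENNReal.ofReal (w a ^ τ)
      = ENNReal.ofReal τ * ∫⁻ t in Ioi (0:ℝ),
          Measure.count {a | t < w a} * ENNReal.ofReal (t ^ (τ - 1)) := lcw
    _ ≤ ENNReal.ofReal τ * ∫⁻ t in Ioi (0:ℝ),
          Measure.count {j : ℕ | t < b j} * ENNReal.ofReal (t ^ (τ - 1)) := by
        refine mul_le_mul_right (lintegral_mono_ae ?_) _
        filter_upwards [hEae, ae_restrict_mem measurableSet_Ioi] with t htE ht
        exact mul_le_mul_left (hcount t ht htE) _
    _ = ∑' j : ℕ, ENNReal.ofReal (b j ^ τ) := lcb.symm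
    _ ≤ ∑' j : ℕ, ((if ((j:ℝ)+1) ≤ A then ENNReal.ofReal (Λ ^ τ) else 0)
          + ENNReal.ofReal (A ^ (τ/σ) * ((j:ℝ)+1) ^ (-(τ/σ)))) := by
        refine ENNReal.tsum_le_tsum fun j => ?_
        by_cases hj : ((j:ℝ)+1) ≤ A
        · simp only [hb, if_pos hj]
          exact self_le_add_right _ _
        · simp only [hb, if_neg hj]
          rw [zero_add, hsum2 j hj]
    _ = (∑' j : ℕ, (if ((j:ℝ)+1) ≤ A then ENNReal.ofReal (Λ ^ τ) else 0))
          + ∑' j : ℕ, ENNReal.ofReal (A ^ (τ/σ) * ((j:ℝ)+1) ^ (-(τ/σ))) :=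
        ENNReal.tsum_add
    _ ≤ ENNReal.ofReal (A * Λ ^ τ) +
        ENNReal.ofReal (A ^ (τ / σ)) *
          ∑' n : ℕ, ENNReal.ofReal (((n : ℝ) + 1) ^ (-(τ / σ))) := by
        refine add_le_add ?_ ?_
        · have h1 : ∑' j : ℕ, (if ((j:ℝ)+1) ≤ A then ENNReal.ofReal (Λ ^ τ) else 0)
              = ∑ j ∈ Finset.range ⌊A⌋₊,
                  (if ((j:ℝ)+1) ≤ A then ENNReal.ofReal (Λ ^ τ) else 0) := by
            refine tsum_eq_sum fun j hj => if_neg ?_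
            rw [Finset.mem_range, not_lt] at hj
            push_neg
            have := Nat.lt_floor_add_one A
            have h2 : (⌊A⌋₊ : ℝ) ≤ (j:ℝ) := Nat.cast_le.mpr hj
            linarith
          rw [h1]
          calc ∑ j ∈ Finset.range ⌊A⌋₊,
              (if ((j:ℝ)+1) ≤ A then ENNReal.ofReal (Λ ^ τ) else 0)
              ≤ ∑ _j ∈ Finset.range ⌊A⌋₊, ENNReal.ofReal (Λ ^ τ) := by
                refine Finset.sum_le_sum fun j _ => ?_
                split <;> simp
            _ = (⌊A⌋₊ : ℝ≥0∞) * ENNReal.ofReal (Λ ^ τ) := by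
                rw [Finset.sum_const, Finset.card_range, nsmul_eq_mul]
            _ ≤ ENNReal.ofReal A * ENNReal.ofReal (Λ ^ τ) := by
                refine mul_le_mul_left ?_ _
                rw [← ENNReal.ofReal_natCast]
                exact ENNReal.ofReal_le_ofReal (Nat.floor_le hA.le)
            _ = ENNReal.ofReal (A * Λ ^ τ) :=
                (ENNReal.ofReal_mul hA.le).symm
        · rw [← ENNReal.tsum_mul_left]
          refine le_of_eq (tsum_congr fun n => ?_)
          rw [← ENNReal.ofReal_mul (Real.rpow_nonneg hA.le _)]

end Key

/-- The index set `∇_d` of the eigenvalues of the `I_d`-(anti)symmetric restriction of a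
tensor product problem: multi-indices `k ∈ (ℕ_{≥1})^d` whose entries are non-decreasing
(resp. strictly increasing, if `strict`) along the coordinates in `I d`. -/
def nabla (I : (d : ℕ) → Set (Fin d)) (strict : Bool) (d : ℕ) : Set (Fin d → ℕ) :=
  {k | (∀ l, 1 ≤ k l) ∧
    (if strict then ∀ a ∈ I d, ∀ b ∈ I d, a < b → k a < k b
     else ∀ a ∈ I d, ∀ b ∈ I d, a ≤ b → k a ≤ k b)}

/-- The largest eigenvalue `λ_{d,1} = sup_{k ∈ ∇_d} ∏_l λ_{k_l}` of the restricted
problem (the square of its initial error). -/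
noncomputable def lamTop (lam : ℕ → ℝ) (I : (d : ℕ) → Set (Fin d)) (strict : Bool)
    (d : ℕ) : ℝ :=
  sSup {x : ℝ | ∃ k ∈ nabla I strict d, x = ∏ l, lam (k l)}

/-- **Paper Lemma 5.7** (general necessary conditions for (anti)symmetric problems,
absolute error criterion): if the `I`-(anti)symmetric problem with information
complexity `n(ε,d) = #{k ∈ ∇_d : ∏_l λ_{k_l} > ε²}` is polynomially tractable with
constants `C, p, q`, then `λ ∈ ℓ_τ` for every `τ > p/2`, and for each such `τ` and all
`d ≥ 1`:
`λ_{d,1}^{-τ} ∑_{k∈∇_d} (∏_l λ_{k_l})^τ ≤ (1+C) d^q + C^{2τ/p} ζ(2τ/p) (d^{2q/p}/λ_{d,1})^τ`. -/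
theorem stmt17 (lam : ℕ → ℝ)
    (hnn : ∀ m, 0 ≤ lam m)
    (hord : ∀ m m' : ℕ, 1 ≤ m → m ≤ m' → lam m' ≤ lam m)
    (hlam2 : 0 < lam 2)
    (I : (d : ℕ) → Set (Fin d)) (hI : ∀ d, 2 ≤ d → (I d).Nonempty)
    (strict : Bool)
    (hpos : ∀ d : ℕ, 1 ≤ d → 0 < lamTop lam I strict d)
    (C p q : ℝ) (hC : 0 < C) (hp : 0 < p) (hq : 0 ≤ q)
    (hPT : ∀ d : ℕ, 1 ≤ d → ∀ ε : ℝ, 0 < ε → ε ≤ 1 →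
      (({k | k ∈ nabla I strict d ∧ ε ^ 2 < ∏ l, lam (k l)} : Set (Fin d → ℕ)).encard :
          ℝ≥0∞) ≤
        ENNReal.ofReal (C * ε ^ (-p) * (d : ℝ) ^ q)) :
    ∀ τ : ℝ, p / 2 < τ →
      Summable (fun m : ℕ => lam (m + 1) ^ τ) ∧
      ∀ d : ℕ, 1 ≤ d →
        (∑' k : {k : Fin d → ℕ // k ∈ nabla I strict d},
            ENNReal.ofReal ((∏ l, lam (k.1 l)) ^ τ)) ≤
          ENNReal.ofReal (lamTop lam I strict d ^ τ *
            ((1 + C) * (d : ℝ) ^ q +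
              C ^ (2 * τ / p) * zeta' (2 * τ / p) *
                ((d : ℝ) ^ (2 * q / p) / lamTop lam I strict d) ^ τ)) := by
  intro τ hτ
  have hσ : 0 < p / 2 := by positivity
  have hτ0 : 0 < τ := hσ.trans hτ
  have hs1 : 1 < 2 * τ / p := by rw [lt_div_iff₀ hp]; linarith
  have hrpow : ∀ u : ℝ, 0 < u → (Real.sqrt u) ^ (-p) = u ^ (-(p/2)) := by
    intro u hu
    rw [Real.sqrt_eq_rpow, ← Real.rpow_mul hu.le]
    congr 1
    ring
  constructor
  · -- summability
    have key1 : ∀ j : ℕ, C < (j : ℝ) → lam j ≤ (C / (j : ℝ)) ^ (2 / p) := by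
      intro j hCj
      by_contra hcon
      push_neg at hcon
      set v := (C / (j : ℝ)) ^ (2 / p) with hv
      have hj0 : (0:ℝ) < j := hC.trans hCj
      have hv0 : 0 < v := Real.rpow_pos_of_pos (by positivity) _
      have hv1 : v < 1 :=
        Real.rpow_lt_one (by positivity) ((div_lt_one hj0).mpr hCj) (by positivity)
      set u := min ((v + lam j) / 2) 1 with hu
      have hu0 : 0 < u := lt_min (by linarith) one_pos
      have hu1 : u ≤ 1 := min_le_right _ _
      have huv : v < u := lt_min (by linarith) hv1
      have hulam : u < lam j := lt_of_le_of_lt (min_le_left _ _) (by linarith)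
      set ε := Real.sqrt u with hε
      have hε0 : 0 < ε := Real.sqrt_pos.mpr hu0
      have hε1 : ε ≤ 1 := by
        rw [hε, show (1:ℝ) = Real.sqrt 1 by simp]
        exact Real.sqrt_le_sqrt hu1
      have hε2 : ε ^ 2 = u := Real.sq_sqrt hu0.le
      have hPT1 := hPT 1 le_rfl ε hε0 hε1
      set S := {k : Fin 1 → ℕ | k ∈ nabla I strict 1 ∧ ε ^ 2 < ∏ l, lam (k l)} with hS
      have hj_le : (j : ℕ∞) ≤ S.encard := by
        set f : Fin j → (Fin 1 → ℕ) := fun i _ => (i : ℕ) + 1 with hf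
        have hinj : Function.Injective f := by
          intro a b hab
          have h9 := congrFun hab 0
          simp only [hf, add_left_inj] at h9
          exact Fin.val_injective h9
        have hmem : Set.range f ⊆ S := by
          rintro _ ⟨i, rfl⟩
          constructor
          · refine ⟨fun l => le_add_self, ?_⟩
            split
            · intro a _ b _ hab
              have h8 : a = b := Subsingleton.elim a b
              exact absurd hab (by rw [h8]; exact lt_irrefl _)
            · intro a _ b _ _
              simp [hf]
          · rw [hε2]
            have h7 : ∏ l, lam (f i l) = lam ((i : ℕ) + 1) := by
              simp [hf]
            rw [h7]
            have hle : lam j ≤ lam ((i : ℕ) + 1) :=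
              hord ((i : ℕ) + 1) j (Nat.le_add_left 1 _) (Nat.succ_le_of_lt i.isLt)
            linarith
        calc (j : ℕ∞) = (Set.range f).encard := by
              rw [← Set.image_univ, hinj.injOn.encard_image]
              simp [Set.encard_univ]
          _ ≤ S.encard := Set.encard_le_encard hmem
      have h1 : ((j : ℕ) : ℝ≥0∞) ≤ ENNReal.ofReal (C * ε ^ (-p)) := by
        refine le_trans (by exact_mod_cast hj_le) (le_trans hPT1 (le_of_eq ?_))
        norm_num
      have h2 : (j : ℝ) ≤ C * ε ^ (-p) := by
        rw [← ENNReal.ofReal_natCast] at h1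
        exact (ENNReal.ofReal_le_ofReal_iff (by positivity)).mp h1
      rw [hε, hrpow u hu0] at h2
      have h3 : u ^ (-(p/2)) < v ^ (-(p/2)) :=
        Real.rpow_lt_rpow_of_neg hv0 huv (neg_lt_zero.mpr hσ)
      have h4 : v ^ (-(p/2)) = (j:ℝ) / C := by
        rw [hv, ← Real.rpow_mul (by positivity : (0:ℝ) ≤ C / (j:ℝ))]
        have h6 : (2/p) * (-(p/2)) = -1 := by field_simp
        rw [h6, Real.rpow_neg_one, inv_div]
      have h5 : C * ((j:ℝ) / C) = (j:ℝ) := by field_simp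
      nlinarith [mul_lt_mul_of_pos_left h3 hC]
    have hsum0 : Summable (fun n : ℕ => ((n : ℝ) + 1) ^ (-(2 * τ / p))) := zsummable' hs1
    set K := ⌊C⌋₊ + 1 with hK
    refine (summable_nat_add_iff K).mp ?_
    refine Summable.of_nonneg_of_le (fun m => Real.rpow_nonneg (hnn _) _) (fun m => ?_)
      (hsum0.mul_left (C ^ (2 * τ / p)))
    have hCj : C < ((m + K + 1 : ℕ) : ℝ) := by
      have h9 := Nat.lt_floor_add_one C
      have h8 : (0:ℝ) ≤ (m:ℝ) := Nat.cast_nonneg m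
      rw [hK]
      push_cast
      push_cast at h9
      linarith
    have h1 := key1 (m + K + 1) hCj
    have hj0 : (0:ℝ) < ((m + K + 1 : ℕ) : ℝ) := hC.trans hCj
    calc lam (m + K + 1) ^ τ
        ≤ ((C / ((m + K + 1 : ℕ) : ℝ)) ^ (2/p)) ^ τ :=
          Real.rpow_le_rpow (hnn _) h1 hτ0.le
      _ = (C / ((m + K + 1 : ℕ) : ℝ)) ^ (2*τ/p) := by
          rw [← Real.rpow_mul (by positivity)]
          congr 1
          ring
      _ = C ^ (2*τ/p) * ((m + K + 1 : ℕ) : ℝ) ^ (-(2*τ/p)) := by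
          rw [Real.div_rpow hC.le hj0.le, Real.rpow_neg hj0.le, div_eq_mul_inv]
      _ ≤ C ^ (2*τ/p) * ((m:ℝ) + 1) ^ (-(2*τ/p)) := by
          refine mul_le_mul_of_nonneg_left ?_ (Real.rpow_nonneg hC.le _)
          refine Real.rpow_le_rpow_of_nonpos (by positivity) ?_ (by linarith)
          push_cast
          have h8 : (0:ℝ) ≤ (K:ℝ) := Nat.cast_nonneg K
          linarith
  · -- the bound for each d
    intro d hd
    have hd0 : (0:ℝ) < d := by exact_mod_cast hd
    set Λ := lamTop lam I strict d with hΛdef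
    have hΛ : 0 < Λ := hpos d hd
    have hdq : (0:ℝ) < (d:ℝ) ^ q := Real.rpow_pos_of_pos hd0 _
    set A := C * (d : ℝ) ^ q with hAdef
    have hA : 0 < A := by positivity
    set w : {k : Fin d → ℕ // k ∈ nabla I strict d} → ℝ := fun k => ∏ l, lam (k.1 l) with hw
    have hw0 : ∀ k, 0 ≤ w k := fun k => Finset.prod_nonneg fun l _ => hnn _
    have hwΛ : ∀ k, w k ≤ Λ := by
      intro k
      refine le_csSup ⟨(max (lam 1) 1) ^ d, ?_⟩ ⟨k.1, k.2, rfl⟩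
      rintro x ⟨k', hk', rfl⟩
      calc ∏ l, lam (k' l) ≤ ∏ _l : Fin d, max (lam 1) 1 :=
            Finset.prod_le_prod (fun l _ => hnn _)
              (fun l _ => le_trans (hord 1 (k' l) le_rfl (hk'.1 l)) (le_max_left _ _))
        _ = (max (lam 1) 1) ^ d := by simp
    have hN : ∀ u : ℝ, 0 < u → u ≤ 1 →
        Measure.count {a | u < w a} ≤ ENNReal.ofReal (A * u ^ (-(p/2))) := by
      intro u hu hu1
      set ε := Real.sqrt u with hε
      have hε0 : 0 < ε := Real.sqrt_pos.mpr hu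
      have hε1 : ε ≤ 1 := by
        rw [hε, show (1:ℝ) = Real.sqrt 1 by simp]
        exact Real.sqrt_le_sqrt hu1
      have hε2 : ε ^ 2 = u := Real.sq_sqrt hu.le
      have him : Subtype.val '' {a | u < w a}
          = {k | k ∈ nabla I strict d ∧ ε ^ 2 < ∏ l, lam (k l)} := by
        ext k
        simp only [Set.mem_image, Set.mem_setOf_eq, hε2]
        constructor
        · rintro ⟨a, ha, rfl⟩; exact ⟨a.2, ha⟩
        · rintro ⟨hk, hlt⟩; exact ⟨⟨k, hk⟩, hlt, rfl⟩
      rw [count_eq_encard', ← Subtype.val_injective.encard_image, him]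
      refine le_trans (hPT d hd ε hε0 hε1) (le_of_eq ?_)
      congr 1
      rw [hε, hrpow u hu, hAdef]
      ring
    have hkey := key_bound' w Λ A (p/2) τ hw0 hwΛ hΛ hA hσ hτ hN
    have hts : τ / (p/2) = 2 * τ / p := by
      field_simp
    rw [hts] at hkey
    have hζ0 : 0 ≤ zeta' (2 * τ / p) :=
      tsum_nonneg fun n => Real.rpow_nonneg (by positivity) _
    have hζ : ∑' n : ℕ, ENNReal.ofReal (((n : ℝ) + 1) ^ (-(2 * τ / p))) =
        ENNReal.ofReal (zeta' (2 * τ / p)) := by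
      rw [zeta', ENNReal.ofReal_tsum_of_nonneg (fun n => Real.rpow_nonneg (by positivity) _)
        (zsummable' hs1)]
    rw [hζ, ← ENNReal.ofReal_mul (Real.rpow_nonneg hA.le _),
      ← ENNReal.ofReal_add (by positivity) (mul_nonneg (Real.rpow_nonneg hA.le _) hζ0)] at hkey
    refine le_trans (le_of_eq ?_) (hkey.trans (ENNReal.ofReal_le_ofReal ?_))
    · rfl
    · -- real arithmetic
      have hΛτ : 0 < Λ ^ τ := Real.rpow_pos_of_pos hΛ τ
      have e1 : Λ ^ τ * (C ^ (2*τ/p) * zeta' (2*τ/p) * ((d:ℝ) ^ (2*q/p) / Λ) ^ τ)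
          = A ^ (2*τ/p) * zeta' (2*τ/p) := by
        rw [Real.div_rpow (Real.rpow_nonneg hd0.le _) hΛ.le,
          hAdef, Real.mul_rpow hC.le hdq.le,
          ← Real.rpow_mul hd0.le, ← Real.rpow_mul hd0.le]
        have h6 : q * (2*τ/p) = 2*q/p * τ := by ring
        rw [h6]
        field_simp
      rw [mul_add, e1]
      have h7 : A * Λ ^ τ ≤ Λ ^ τ * ((1 + C) * (d:ℝ) ^ q) := by
        rw [hAdef]
        nlinarith [mul_pos hdq hΛτ]
      linarith
end
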